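/- arXiv:2604.15238 — 19 statements merged into one kernel-verified Lean document; each statement's English description precedes it below -/
import Mathlib

section
/- Separation principle for contracting controllers and observers (quadratic-norm version). Let F : ℝⁿ×ℝᵐ → ℝⁿ, h : ℝⁿ → ℝᵖ, K : ℝⁿ → ℝᵐ, L : ℝⁿ×ℝᵐ×ℝᵖ → ℝⁿ, let P_X, P_O ∈ ℝ^{n×n} and P_U ∈ ℝ^{m×m} be symmetric positive definite, and let c_K, c_O > 0 and ℓ_K, ℓ_u ≥ 0. Assume: (A1) (F(a,K(a))−F(b,K(b)))ᵀ P_X (a−b) ≤ −c_K ‖a−b‖²_{P_X} for all a,b ∈ ℝⁿ, and x* ∈ ℝⁿ satisfies F(x*,K(x*)) = 0; (A2) ‖K(a)−K(b)‖_{P_U} ≤ ℓ_K ‖a−b‖_{P_O} for all a,b, and ‖F(a,u)−F(a,u′)‖_{P_X} ≤ ℓ_u ‖u−u′‖_{P_U} for all a,u,u′; (A3) L(a,u,h(a)) = F(a,u) for all a,u; (A4) (L(a,u,y)−L(b,u,y))ᵀ P_O (a−b) ≤ −c_O ‖a−b‖²_{P_O} for all a,b,u,y. Suppose x, ξ : [0,∞)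 → ℝⁿ are differentiable and satisfy x′(t) = F(x(t), K(ξ(t))) and ξ′(t) = L(ξ(t), K(ξ(t)), h(x(t))) for all t ≥ 0. Then for all t ≥ 0: ‖ξ(t)−x(t)‖_{P_O} ≤ e^{−c_O t} ‖ξ(0)−x(0)‖_{P_O}, and ‖x(t)−x*‖_{P_X} ≤ e^{−c_K t} ‖x(0)−x*‖_{P_X} + ℓ_u ℓ_K ‖ξ(0)−x(0)‖_{P_O} β(t), where β(t) = (e^{−c_O t} − e^{−c_K t})/(c_K − c_O) if c_K ≠ c_O, and β(t) = t e^{−c_K t} if c_K = c_O. -/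
open Matrix

/-- The `P`-weighted quadratic norm `‖v‖_P = √(vᵀ P v)`. -/
noncomputable def pnorm {n : ℕ} (P : Matrix (Fin n) (Fin n) ℝ) (v : Fin n → ℝ) : ℝ :=
  Real.sqrt (v ⬝ᵥ P *ᵥ v)

lemma quad_nonneg {n : ℕ} {P : Matrix (Fin n) (Fin n) ℝ} (hP : P.PosSemidef)
    (v : Fin n → ℝ) : 0 ≤ v ⬝ᵥ P *ᵥ v := by
  have := hP.re_dotProduct_nonneg v
  simpa using this

lemma pnorm_nonneg {n : ℕ} (P : Matrix (Fin n) (Fin n) ℝ) (v : Fin n → ℝ) :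
    0 ≤ pnorm P v := Real.sqrt_nonneg _

lemma pnorm_sq {n : ℕ} {P : Matrix (Fin n) (Fin n) ℝ} (hP : P.PosSemidef)
    (v : Fin n → ℝ) : (pnorm P v)^2 = v ⬝ᵥ P *ᵥ v := by
  rw [pnorm, Real.sq_sqrt (quad_nonneg hP v)]

lemma dot_symm {n : ℕ} {P : Matrix (Fin n) (Fin n) ℝ} (hPs : P.IsSymm)
    (a b : Fin n → ℝ) : a ⬝ᵥ P *ᵥ b = b ⬝ᵥ P *ᵥ a := by
  rw [dotProduct_mulVec, dotProduct_comm, ← mulVec_transpose, hPs.eq]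

open scoped MatrixOrder in
lemma dot_cauchy {n : ℕ} {P : Matrix (Fin n) (Fin n) ℝ} (hP : P.PosSemidef)
    (a b : Fin n → ℝ) : a ⬝ᵥ P *ᵥ b ≤ pnorm P a * pnorm P b := by
  set S := CFC.sqrt P with hS
  have hsymm : Sᵀ = S := (CFC.sqrt_nonneg P).posSemidef.isHermitian.eq
  have key : ∀ u w : Fin n → ℝ, u ⬝ᵥ P *ᵥ w = (S *ᵥ u) ⬝ᵥ (S *ᵥ w) := by
    intro u w
    rw [← CFC.sqrt_mul_sqrt_self P hP.nonneg, ← mulVec_mulVec, dotProduct_mulVec, ← mulVec_transpose, hsymm]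
  have h1 := key a b
  have h2 : (pnorm P a)^2 = (S *ᵥ a) ⬝ᵥ (S *ᵥ a) := by rw [pnorm_sq hP, key]
  have h3 : (pnorm P b)^2 = (S *ᵥ b) ⬝ᵥ (S *ᵥ b) := by rw [pnorm_sq hP, key]
  have cs : ((S *ᵥ a) ⬝ᵥ (S *ᵥ b))^2 ≤ ((S *ᵥ a) ⬝ᵥ (S *ᵥ a)) * ((S *ᵥ b) ⬝ᵥ (S *ᵥ b)) := by
    simpa [dotProduct, pow_two] using
      Finset.sum_mul_sq_le_sq_mul_sq Finset.univ (fun i => (S *ᵥ a) i) (fun i => (S *ᵥ b) i)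
  rw [h1]
  have hab : 0 ≤ pnorm P a * pnorm P b := mul_nonneg (pnorm_nonneg _ _) (pnorm_nonneg _ _)
  have : (S *ᵥ a ⬝ᵥ S *ᵥ b)^2 ≤ (pnorm P a * pnorm P b)^2 := by
    rw [mul_pow, h2, h3]; exact cs
  calc S *ᵥ a ⬝ᵥ S *ᵥ b ≤ |S *ᵥ a ⬝ᵥ S *ᵥ b| := le_abs_self _
    _ = Real.sqrt ((S *ᵥ a ⬝ᵥ S *ᵥ b)^2) := (Real.sqrt_sq_eq_abs _).symm
    _ ≤ Real.sqrt ((pnorm P a * pnorm P b)^2) := Real.sqrt_le_sqrt this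
    _ = pnorm P a * pnorm P b := Real.sqrt_sq hab

lemma hasDerivAt_quad {n : ℕ} (P : Matrix (Fin n) (Fin n) ℝ) {v w : ℝ → Fin n → ℝ}
    {v' w' : Fin n → ℝ} {t : ℝ} (hv : HasDerivAt v v' t) (hw : HasDerivAt w w' t) :
    HasDerivAt (fun s => v s ⬝ᵥ P *ᵥ w s) (v' ⬝ᵥ P *ᵥ w t + v t ⬝ᵥ P *ᵥ w') t := by
  simp only [dotProduct, mulVec, dotProduct, ← Finset.sum_add_distrib]
  apply HasDerivAt.fun_sum
  intro i _
  have hvi : HasDerivAt (fun s => v s i) (v' i) t := hasDerivAt_pi.mp hv i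
  have hwi : HasDerivAt (fun s => ∑ j, P i j * w s j) (∑ j, P i j * w' j) t := by
    apply HasDerivAt.fun_sum
    intro j _
    exact (hasDerivAt_pi.mp hw j).const_mul _
  exact hvi.mul hwi

lemma antitone_aux (f f' : ℝ → ℝ) (hf : ∀ t, 0 ≤ t → HasDerivAt f (f' t) t)
    (h' : ∀ t, 0 ≤ t → f' t ≤ 0) : ∀ t, 0 ≤ t → f t ≤ f 0 := by
  intro t ht
  have : AntitoneOn f (Set.Ici (0:ℝ)) := by
    apply antitoneOn_of_deriv_nonpos (convex_Ici 0)
    · intro s hs; exact (hf s hs).continuousAt.continuousWithinAt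
    · intro s hs
      rw [interior_Ici] at hs
      exact (hf s hs.le).differentiableAt.differentiableWithinAt
    · intro s hs
      rw [interior_Ici] at hs
      rw [(hf s hs.le).deriv]; exact h' s hs.le
  exact this (Set.self_mem_Ici) ht ht

lemma ode_comp (c : ℝ) (φ φ' g A A' : ℝ → ℝ)
    (hφ : ∀ s, 0 ≤ s → HasDerivAt φ (φ' s) s)
    (hA : ∀ s, HasDerivAt A (A' s) s)
    (hbd : ∀ s, 0 ≤ s → φ' s ≤ -c * φ s + g s)
    (hA' : ∀ s, 0 ≤ s → A' s = Real.exp (c*s) * g s) :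
    ∀ t, 0 ≤ t → φ t ≤ Real.exp (-c*t) * (φ 0 - A 0 + A t) := by
  intro t ht
  have key : ∀ s, 0 ≤ s → Real.exp (c*s) * φ s - A s ≤ Real.exp (c*0) * φ 0 - A 0 := by
    have := antitone_aux (fun s => Real.exp (c*s) * φ s - A s)
      (fun s => Real.exp (c*s) * c * φ s + Real.exp (c*s) * φ' s - A' s) ?_ ?_
    · intro s hs; exact this s hs
    · intro s hs
      have he : HasDerivAt (fun s => Real.exp (c*s)) (Real.exp (c*s) * c) s := by
        simpa using ((hasDerivAt_id s).const_mul c).exp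
      exact (he.mul (hφ s hs)).sub (hA s)
    · intro s hs
      rw [hA' s hs]
      have hexp : 0 < Real.exp (c*s) := Real.exp_pos _
      have := hbd s hs
      nlinarith
  have h1 := key t ht
  simp only [mul_zero, Real.exp_zero, one_mul] at h1
  have hexp : 0 < Real.exp (c*t) := Real.exp_pos _
  have h2 : Real.exp (-c*t) = (Real.exp (c*t))⁻¹ := by
    rw [← Real.exp_neg]; ring_nf
  rw [h2, inv_mul_eq_div, le_div_iff₀ hexp]
  nlinarith

/-- Separation principle for contracting controllers and observers. -/
theorem separation_principle
    {n m p : ℕ}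
    (F : (Fin n → ℝ) → (Fin m → ℝ) → (Fin n → ℝ))
    (h : (Fin n → ℝ) → (Fin p → ℝ))
    (K : (Fin n → ℝ) → (Fin m → ℝ))
    (L : (Fin n → ℝ) → (Fin m → ℝ) → (Fin p → ℝ) → (Fin n → ℝ))
    (PX PO : Matrix (Fin n) (Fin n) ℝ) (PU : Matrix (Fin m) (Fin m) ℝ)
    (hPXs : PX.IsSymm) (hPX : PX.PosDef)
    (hPOs : PO.IsSymm) (hPO : PO.PosDef)
    (hPUs : PU.IsSymm) (hPU : PU.PosDef)
    (cK cO ℓK ℓu : ℝ) (hcK : 0 < cK) (hcO : 0 < cO) (hℓK : 0 ≤ ℓK) (hℓu : 0 ≤ ℓu)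
    (xs : Fin n → ℝ)
    -- (A1) plant contraction under state feedback, with equilibrium xs
    (hA1 : ∀ a b : Fin n → ℝ,
      (F a (K a) - F b (K b)) ⬝ᵥ PX *ᵥ (a - b) ≤ -cK * (pnorm PX (a - b))^2)
    (hxs : F xs (K xs) = 0)
    -- (A2) Lipschitz controller and plant input
    (hA2K : ∀ a b : Fin n → ℝ, pnorm PU (K a - K b) ≤ ℓK * pnorm PO (a - b))
    (hA2u : ∀ (a : Fin n → ℝ) (u u' : Fin m → ℝ),
      pnorm PX (F a u - F a u') ≤ ℓu * pnorm PU (u - u'))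
    -- (A3) plant-observer matching
    (hA3 : ∀ (a : Fin n → ℝ) (u : Fin m → ℝ), L a u (h a) = F a u)
    -- (A4) observer contraction, uniformly in inputs
    (hA4 : ∀ (a b : Fin n → ℝ) (u : Fin m → ℝ) (y : Fin p → ℝ),
      (L a u y - L b u y) ⬝ᵥ PO *ᵥ (a - b) ≤ -cO * (pnorm PO (a - b))^2)
    -- closed loop trajectories
    (x ξ : ℝ → (Fin n → ℝ))
    (hx : ∀ t : ℝ, 0 ≤ t → HasDerivAt x (F (x t) (K (ξ t))) t)
    (hξ : ∀ t : ℝ, 0 ≤ t → HasDerivAt ξ (L (ξ t) (K (ξ t)) (h (x t))) t) :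
    ∀ t : ℝ, 0 ≤ t →
      pnorm PO (ξ t - x t) ≤ Real.exp (-cO * t) * pnorm PO (ξ 0 - x 0) ∧
      pnorm PX (x t - xs) ≤ Real.exp (-cK * t) * pnorm PX (x 0 - xs) +
        ℓu * ℓK * pnorm PO (ξ 0 - x 0) *
          (if cK = cO then t * Real.exp (-cK * t)
           else (Real.exp (-cO * t) - Real.exp (-cK * t)) / (cK - cO)) := by
  have hPOsd := hPO.posSemidef
  have hPXsd := hPX.posSemidef
  -- the observer error
  set r0 := pnorm PO (ξ 0 - x 0) with hr0
  have hr0n : 0 ≤ r0 := pnorm_nonneg _ _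
  have he : ∀ s, 0 ≤ s → HasDerivAt (fun s => ξ s - x s)
      (L (ξ s) (K (ξ s)) (h (x s)) - L (x s) (K (ξ s)) (h (x s))) s := by
    intro s hs
    have hx' : HasDerivAt x (L (x s) (K (ξ s)) (h (x s))) s := by
      rw [hA3]; exact hx s hs
    exact (hξ s hs).sub hx'
  have hV : ∀ s, 0 ≤ s → HasDerivAt (fun s => (ξ s - x s) ⬝ᵥ PO *ᵥ (ξ s - x s))
      (2 * ((L (ξ s) (K (ξ s)) (h (x s)) - L (x s) (K (ξ s)) (h (x s))) ⬝ᵥ PO *ᵥ (ξ s - x s))) s := by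
    intro s hs
    have := hasDerivAt_quad PO (he s hs) (he s hs)
    convert this using 1
    rw [dot_symm hPOs (ξ s - x s)]
    ring
  -- Part 1 : observer error decay
  have claim1 : ∀ s, 0 ≤ s → pnorm PO (ξ s - x s) ≤ Real.exp (-cO * s) * r0 := by
    have keyV : ∀ s, 0 ≤ s →
        Real.exp (2*cO*s) * ((ξ s - x s) ⬝ᵥ PO *ᵥ (ξ s - x s)) ≤
        Real.exp (2*cO*0) * ((ξ 0 - x 0) ⬝ᵥ PO *ᵥ (ξ 0 - x 0)) := by
      apply antitone_aux _ (fun s => Real.exp (2*cO*s) * (2*cO) *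
          ((ξ s - x s) ⬝ᵥ PO *ᵥ (ξ s - x s)) +
          Real.exp (2*cO*s) * (2 * ((L (ξ s) (K (ξ s)) (h (x s)) - L (x s) (K (ξ s)) (h (x s))) ⬝ᵥ PO *ᵥ (ξ s - x s))))
      · intro s hs
        have hexp : HasDerivAt (fun s => Real.exp (2*cO*s)) (Real.exp (2*cO*s) * (2*cO)) s := by
          simpa using ((hasDerivAt_id s).const_mul (2*cO)).exp
        exact hexp.mul (hV s hs)
      · intro s hs
        have hd := hA4 (ξ s) (x s) (K (ξ s)) (h (x s))
        rw [pnorm_sq hPOsd] at hd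
        have hexp : (0:ℝ) < Real.exp (2*cO*s) := Real.exp_pos _
        nlinarith
    intro s hs
    have h1 := keyV s hs
    simp only [mul_zero, Real.exp_zero, one_mul] at h1
    have hexp : (0:ℝ) < Real.exp (2*cO*s) := Real.exp_pos _
    have h2 : (ξ s - x s) ⬝ᵥ PO *ᵥ (ξ s - x s) ≤
        Real.exp (-cO*s)^2 * ((ξ 0 - x 0) ⬝ᵥ PO *ᵥ (ξ 0 - x 0)) := by
      have hsq : Real.exp (-cO*s)^2 = (Real.exp (2*cO*s))⁻¹ := by
        rw [sq, ← Real.exp_add, ← Real.exp_neg]; ring_nf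
      rw [hsq, inv_mul_eq_div, le_div_iff₀ hexp]
      nlinarith
    have := Real.sqrt_le_sqrt h2
    rw [Real.sqrt_mul (sq_nonneg _), Real.sqrt_sq (Real.exp_nonneg _)] at this
    exact this
  intro t ht
  refine ⟨claim1 t ht, ?_⟩
  -- Part 2 : state convergence
  set C := ℓu * ℓK * r0 with hC
  have hCn : 0 ≤ C := mul_nonneg (mul_nonneg hℓu hℓK) hr0n
  have hz : ∀ s, 0 ≤ s → HasDerivAt (fun s => x s - xs) (F (x s) (K (ξ s))) s := by
    intro s hs
    simpa using (hx s hs).sub_const xs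
  have hU : ∀ s, 0 ≤ s → HasDerivAt (fun s => (x s - xs) ⬝ᵥ PX *ᵥ (x s - xs))
      (2 * (F (x s) (K (ξ s)) ⬝ᵥ PX *ᵥ (x s - xs))) s := by
    intro s hs
    have := hasDerivAt_quad PX (hz s hs) (hz s hs)
    convert this using 1
    rw [dot_symm hPXs (x s - xs)]
    ring
  have hU0 : ∀ s, 0 ≤ (x s - xs) ⬝ᵥ PX *ᵥ (x s - xs) := fun s => quad_nonneg hPXsd _
  -- the key differential inequality ingredient
  have keydot : ∀ s, 0 ≤ s →
      F (x s) (K (ξ s)) ⬝ᵥ PX *ᵥ (x s - xs) ≤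
        C * Real.exp (-cO*s) * Real.sqrt ((x s - xs) ⬝ᵥ PX *ᵥ (x s - xs))
        - cK * ((x s - xs) ⬝ᵥ PX *ᵥ (x s - xs)) := by
    intro s hs
    have hsplit : F (x s) (K (ξ s)) ⬝ᵥ PX *ᵥ (x s - xs) =
        (F (x s) (K (ξ s)) - F (x s) (K (x s))) ⬝ᵥ PX *ᵥ (x s - xs) +
        (F (x s) (K (x s)) - F xs (K xs)) ⬝ᵥ PX *ᵥ (x s - xs) := by
      rw [hxs]
      simp [sub_dotProduct]
    have h1 : (F (x s) (K (ξ s)) - F (x s) (K (x s))) ⬝ᵥ PX *ᵥ (x s - xs) ≤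
        C * Real.exp (-cO*s) * Real.sqrt ((x s - xs) ⬝ᵥ PX *ᵥ (x s - xs)) := by
      have hcs := dot_cauchy hPXsd (F (x s) (K (ξ s)) - F (x s) (K (x s))) (x s - xs)
      have hz1 : pnorm PX (x s - xs) = Real.sqrt ((x s - xs) ⬝ᵥ PX *ᵥ (x s - xs)) := rfl
      have hzn : 0 ≤ pnorm PX (x s - xs) := pnorm_nonneg _ _
      have hb1 : pnorm PX (F (x s) (K (ξ s)) - F (x s) (K (x s))) ≤
          C * Real.exp (-cO*s) := by
        calc pnorm PX (F (x s) (K (ξ s)) - F (x s) (K (x s)))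
            ≤ ℓu * pnorm PU (K (ξ s) - K (x s)) := hA2u _ _ _
          _ ≤ ℓu * (ℓK * pnorm PO (ξ s - x s)) := by
              exact mul_le_mul_of_nonneg_left (hA2K _ _) hℓu
          _ ≤ ℓu * (ℓK * (Real.exp (-cO*s) * r0)) := by
              have := claim1 s hs
              exact mul_le_mul_of_nonneg_left
                (mul_le_mul_of_nonneg_left this hℓK) hℓu
          _ = C * Real.exp (-cO*s) := by rw [hC]; ring
      calc (F (x s) (K (ξ s)) - F (x s) (K (x s))) ⬝ᵥ PX *ᵥ (x s - xs)
          ≤ pnorm PX (F (x s) (K (ξ s)) - F (x s) (K (x s))) * pnorm PX (x s - xs) := hcs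
        _ ≤ (C * Real.exp (-cO*s)) * pnorm PX (x s - xs) :=
            mul_le_mul_of_nonneg_right hb1 hzn
        _ = C * Real.exp (-cO*s) * Real.sqrt ((x s - xs) ⬝ᵥ PX *ᵥ (x s - xs)) := by
            rw [hz1]
    have h2 : (F (x s) (K (x s)) - F xs (K xs)) ⬝ᵥ PX *ᵥ (x s - xs) ≤
        -cK * ((x s - xs) ⬝ᵥ PX *ᵥ (x s - xs)) := by
      have := hA1 (x s) xs
      rwa [pnorm_sq hPXsd] at this
    rw [hsplit]
    linarith
  -- epsilon approximation
  have main : ∀ ε : ℝ, 0 < ε →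
      Real.sqrt ((x t - xs) ⬝ᵥ PX *ᵥ (x t - xs)) ≤
      (Real.exp (-cK * t) * pnorm PX (x 0 - xs) +
        ℓu * ℓK * r0 *
          (if cK = cO then t * Real.exp (-cK * t)
           else (Real.exp (-cO * t) - Real.exp (-cK * t)) / (cK - cO))) + ε := by
    intro ε hε
    set U : ℝ → ℝ := fun s => (x s - xs) ⬝ᵥ PX *ᵥ (x s - xs) with hUdef
    set φ : ℝ → ℝ := fun s => Real.sqrt (U s + ε^2) with hφdef
    have hφpos : ∀ s, 0 < φ s := fun s =>
      Real.sqrt_pos.mpr (by nlinarith [hU0 s, sq_nonneg ε])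
    have hφge : ∀ s, ε ≤ φ s := by
      intro s
      rw [hφdef]
      calc ε = Real.sqrt (ε^2) := (Real.sqrt_sq hε.le).symm
        _ ≤ _ := Real.sqrt_le_sqrt (by nlinarith [hU0 s])
    have hsqle : ∀ s, Real.sqrt (U s) ≤ φ s := fun s =>
      Real.sqrt_le_sqrt (by nlinarith [sq_nonneg ε])
    have hφsq : ∀ s, (φ s)^2 = U s + ε^2 := fun s =>
      Real.sq_sqrt (by nlinarith [hU0 s, sq_nonneg ε])
    have hφderiv : ∀ s, 0 ≤ s → HasDerivAt φ
        ((2 * (F (x s) (K (ξ s)) ⬝ᵥ PX *ᵥ (x s - xs))) / (2 * φ s)) s := by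
      intro s hs
      exact ((hU s hs).add_const (ε^2)).sqrt (ne_of_gt (by nlinarith [hU0 s, sq_nonneg ε]))
    have hφbd : ∀ s, 0 ≤ s →
        (2 * (F (x s) (K (ξ s)) ⬝ᵥ PX *ᵥ (x s - xs))) / (2 * φ s) ≤
        -cK * φ s + (C * Real.exp (-cO*s) + cK * ε) := by
      intro s hs
      have hp := hφpos s
      rw [div_le_iff₀ (by linarith)]
      have hk := keydot s hs
      have h1 : Real.sqrt (U s) ≤ φ s := hsqle s
      have h2 : ε ≤ φ s := hφge s
      have h3 : (φ s)^2 = U s + ε^2 := hφsq s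
      have h4 : 0 ≤ Real.sqrt (U s) := Real.sqrt_nonneg _
      have h5 : Real.sqrt (U s)^2 = U s := Real.sq_sqrt (hU0 s)
      have hge : 0 ≤ C * Real.exp (-cO*s) := mul_nonneg hCn (Real.exp_nonneg _)
      nlinarith [hk, mul_nonneg hge (sub_nonneg.mpr h1),
        mul_nonneg (mul_nonneg hcK.le hε.le) (sub_nonneg.mpr h2)]
    -- the explicit antiderivative
    set A : ℝ → ℝ := fun s =>
      (if cK = cO then C * s else C * Real.exp ((cK-cO)*s) / (cK-cO)) + ε * Real.exp (cK*s)
      with hAdef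
    have hAderiv : ∀ s, HasDerivAt A
        (C * Real.exp ((cK-cO)*s) + cK * ε * Real.exp (cK*s)) s := by
      intro s
      have hexp2 : HasDerivAt (fun s => ε * Real.exp (cK*s)) (cK * ε * Real.exp (cK*s)) s := by
        have : HasDerivAt (fun s => Real.exp (cK*s)) (Real.exp (cK*s) * cK) s := by
          simpa using ((hasDerivAt_id s).const_mul cK).exp
        have := this.const_mul ε
        exact this.congr_deriv (by ring)
      by_cases hcc : cK = cO
      · have h0 : (cK - cO) * s = 0 := by rw [hcc]; ring
        simp only [hAdef, if_pos hcc, h0, Real.exp_zero, mul_one]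
        exact (((hasDerivAt_id s).const_mul C).add hexp2).congr_deriv (by ring)
      · simp only [hAdef, if_neg hcc]
        have h1 : HasDerivAt (fun s => C * Real.exp ((cK-cO)*s) / (cK-cO))
            (C * Real.exp ((cK-cO)*s)) s := by
          have : HasDerivAt (fun s => Real.exp ((cK-cO)*s)) (Real.exp ((cK-cO)*s) * (cK-cO)) s := by
            simpa using ((hasDerivAt_id s).const_mul (cK-cO)).exp
          have h2 := (this.const_mul C).div_const (cK-cO)
          have hne : cK - cO ≠ 0 := sub_ne_zero.mpr hcc
          refine h2.congr_deriv ?_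
          rw [mul_div_assoc, mul_div_cancel_right₀ _ hne]
        exact h1.add hexp2
    have hA'eq : ∀ s, 0 ≤ s →
        C * Real.exp ((cK-cO)*s) + cK * ε * Real.exp (cK*s) =
        Real.exp (cK*s) * (C * Real.exp (-cO*s) + cK * ε) := by
      intro s hs
      rw [mul_add]
      congr 1
      · rw [show Real.exp (cK*s) * (C * Real.exp (-cO*s)) = C * (Real.exp (cK*s) * Real.exp (-cO*s)) by ring,
          ← Real.exp_add]
        ring_nf
      · ring
    have hcomp := ode_comp cK φ
      (fun s => (2 * (F (x s) (K (ξ s)) ⬝ᵥ PX *ᵥ (x s - xs))) / (2 * φ s))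
      (fun s => C * Real.exp (-cO*s) + cK * ε) A
      (fun s => C * Real.exp ((cK-cO)*s) + cK * ε * Real.exp (cK*s))
      hφderiv hAderiv hφbd hA'eq t ht
    -- now unpack
    have hφ0 : φ 0 ≤ pnorm PX (x 0 - xs) + ε := by
      have hb : U 0 + ε^2 ≤ (pnorm PX (x 0 - xs) + ε)^2 := by
        have : pnorm PX (x 0 - xs) = Real.sqrt (U 0) := rfl
        have h5 : Real.sqrt (U 0)^2 = U 0 := Real.sq_sqrt (hU0 0)
        nlinarith [Real.sqrt_nonneg (U 0)]
      calc φ 0 ≤ Real.sqrt ((pnorm PX (x 0 - xs) + ε)^2) := Real.sqrt_le_sqrt hb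
        _ = _ := Real.sqrt_sq (add_nonneg (pnorm_nonneg _ _) hε.le)
    have hfinal : Real.exp (-cK*t) * (φ 0 - A 0 + A t) ≤
        (Real.exp (-cK * t) * pnorm PX (x 0 - xs) +
          C * (if cK = cO then t * Real.exp (-cK * t)
           else (Real.exp (-cO * t) - Real.exp (-cK * t)) / (cK - cO))) + ε := by
      have hexppos : (0:ℝ) < Real.exp (-cK*t) := Real.exp_pos _
      have hexple : Real.exp (-cK*t) ≤ 1 := by
        rw [Real.exp_le_one_iff]
        nlinarith
      have hekk : Real.exp (-cK*t) * Real.exp (cK*t) = 1 := by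
        rw [← Real.exp_add]; ring_nf; exact Real.exp_zero
      by_cases hcc : cK = cO
      · simp only [hAdef, if_pos hcc] at *
        have : Real.exp (-cK*t) * (φ 0 - (C * 0 + ε * Real.exp (cK*0)) +
            (C * t + ε * Real.exp (cK*t))) =
            Real.exp (-cK*t) * φ 0 + C * (t * Real.exp (-cK*t)) +
            ε * (Real.exp (-cK*t) * Real.exp (cK*t)) - ε * Real.exp (-cK*t) := by
          simp only [mul_zero, Real.exp_zero, mul_one]
          ring
        rw [this, hekk]
        have := mul_le_mul_of_nonneg_left hφ0 hexppos.le
        nlinarith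
      · simp only [hAdef, if_neg hcc] at *
        have het : Real.exp (-cK*t) * Real.exp ((cK-cO)*t) = Real.exp (-cO*t) := by
          rw [← Real.exp_add]; ring_nf
        have : Real.exp (-cK*t) * (φ 0 - (C * Real.exp ((cK-cO)*0) / (cK-cO) + ε * Real.exp (cK*0)) +
            (C * Real.exp ((cK-cO)*t) / (cK-cO) + ε * Real.exp (cK*t))) =
            Real.exp (-cK*t) * φ 0 +
            C * ((Real.exp (-cK*t) * Real.exp ((cK-cO)*t) - Real.exp (-cK*t)) / (cK-cO)) +
            ε * (Real.exp (-cK*t) * Real.exp (cK*t)) - ε * Real.exp (-cK*t) := by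
          simp only [mul_zero, Real.exp_zero, mul_one]
          ring
        rw [this, hekk, het]
        have := mul_le_mul_of_nonneg_left hφ0 hexppos.le
        nlinarith
    calc Real.sqrt ((x t - xs) ⬝ᵥ PX *ᵥ (x t - xs)) = Real.sqrt (U t) := rfl
      _ ≤ φ t := hsqle t
      _ ≤ Real.exp (-cK*t) * (φ 0 - A 0 + A t) := hcomp
      _ ≤ _ := by rw [hC] at hfinal; exact hfinal
  -- pass to the limit ε → 0
  have : pnorm PX (x t - xs) = Real.sqrt ((x t - xs) ⬝ᵥ PX *ᵥ (x t - xs)) := rfl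
  rw [this]
  exact le_of_forall_pos_le_add main
end

section
/- Absolute contractivity of continuous-time Lur'e systems. Let A ∈ ℝ^{n×n}, B ∈ ℝ^{n×m}, H ∈ ℝ^{m×n}, let P ∈ ℝ^{n×n} be symmetric positive definite, let c > 0, let M ∈ ℝ^{2m×2m} be a symmetric incremental multiplier for Ψ : ℝᵐ → ℝᵐ, and define M_H = [[H, 0],[0, I_m]]ᵀ M [[H, 0],[0, I_m]] ∈ ℝ^{(n+m)×(n+m)}. If the block matrix [[PA + AᵀP + 2cP, PB],[BᵀP, 0]] + M_H is negative semidefinite, then the map F(x) = Ax + BΨ(Hx) satisfies (F(x) − F(x̃))ᵀ P (x − x̃) ≤ −c (x − x̃)ᵀ P (x − x̃) for all x, x̃ ∈ ℝⁿ (i.e., the system ẋ = Ax + BΨ(Hx) is strongly infinitesimally contracting with rate c with respect to ‖·‖_P). -/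
open Matrix

/-- Absolute contractivity of continuous-time Lur'e systems. -/
theorem lure_cts_contraction
    {n m : ℕ}
    (A : Matrix (Fin n) (Fin n) ℝ) (B : Matrix (Fin n) (Fin m) ℝ)
    (H : Matrix (Fin m) (Fin n) ℝ)
    (P : Matrix (Fin n) (Fin n) ℝ) (hPs : P.IsSymm) (hP : P.PosDef)
    (c : ℝ) (hc : 0 < c)
    (M : Matrix (Fin m ⊕ Fin m) (Fin m ⊕ Fin m) ℝ) (hMs : M.IsSymm)
    (Ψ : (Fin m → ℝ) → (Fin m → ℝ))
    -- M is an incremental multiplier for Ψ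
    (hmult : ∀ x xt : Fin m → ℝ,
      0 ≤ (Sum.elim (x - xt) (Ψ x - Ψ xt)) ⬝ᵥ M *ᵥ (Sum.elim (x - xt) (Ψ x - Ψ xt)))
    -- the LMI condition
    (hLMI : (-(fromBlocks (P * A + Aᵀ * P + (2 * c) • P) (P * B) (Bᵀ * P)
            (0 : Matrix (Fin m) (Fin m) ℝ) +
        (fromBlocks H (0 : Matrix (Fin m) (Fin m) ℝ)
            (0 : Matrix (Fin m) (Fin n) ℝ) (1 : Matrix (Fin m) (Fin m) ℝ))ᵀ * M *
          fromBlocks H (0 : Matrix (Fin m) (Fin m) ℝ)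
            (0 : Matrix (Fin m) (Fin n) ℝ) (1 : Matrix (Fin m) (Fin m) ℝ))).PosSemidef) :
    ∀ x xt : Fin n → ℝ,
      ((A *ᵥ x + B *ᵥ Ψ (H *ᵥ x)) - (A *ᵥ xt + B *ᵥ Ψ (H *ᵥ xt))) ⬝ᵥ P *ᵥ (x - xt) ≤
        -c * ((x - xt) ⬝ᵥ P *ᵥ (x - xt)) := by
  intro x xt
  set z : Fin n → ℝ := x - xt with hz
  set w : Fin m → ℝ := Ψ (H *ᵥ x) - Ψ (H *ᵥ xt) with hw
  set G := fromBlocks H (0 : Matrix (Fin m) (Fin m) ℝ)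
      (0 : Matrix (Fin m) (Fin n) ℝ) (1 : Matrix (Fin m) (Fin m) ℝ) with hG
  set X := fromBlocks (P * A + Aᵀ * P + (2 * c) • P) (P * B) (Bᵀ * P)
      (0 : Matrix (Fin m) (Fin m) ℝ) with hX
  set v : Fin n ⊕ Fin m → ℝ := Sum.elim z w with hv
  -- the multiplier inequality at H x, H xt
  have h1 : 0 ≤ (Sum.elim (H *ᵥ z) w) ⬝ᵥ M *ᵥ (Sum.elim (H *ᵥ z) w) := by
    have := hmult (H *ᵥ x) (H *ᵥ xt)
    rwa [← mulVec_sub] at this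
  -- G *ᵥ v
  have hGv : G *ᵥ v = Sum.elim (H *ᵥ z) w := by
    simp [hG, hv, fromBlocks_mulVec]
  -- the MH quadratic form
  have h2 : v ⬝ᵥ (Gᵀ * M * G) *ᵥ v
      = (Sum.elim (H *ᵥ z) w) ⬝ᵥ M *ᵥ (Sum.elim (H *ᵥ z) w) := by
    rw [← mulVec_mulVec, ← mulVec_mulVec, dotProduct_mulVec, vecMul_transpose, hGv]
  -- the LMI gives
  have h3 : v ⬝ᵥ X *ᵥ v + v ⬝ᵥ (Gᵀ * M * G) *ᵥ v ≤ 0 := by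
    have := hLMI.dotProduct_mulVec_nonneg v
    simp only [RCLike.re_to_real, star_trivial, neg_add, add_mulVec, neg_mulVec,
      dotProduct_add, dotProduct_neg] at this
    linarith
  have hXv : v ⬝ᵥ X *ᵥ v
      = 2 * ((A *ᵥ z) ⬝ᵥ (P *ᵥ z)) + 2 * ((B *ᵥ w) ⬝ᵥ (P *ᵥ z)) + 2 * c * (z ⬝ᵥ P *ᵥ z) := by
    have key : ∀ (u : Fin n → ℝ), z ⬝ᵥ P *ᵥ u = (P *ᵥ z) ⬝ᵥ u := by
      intro u
      rw [dotProduct_mulVec, ← vecMul_transpose, hPs.eq]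
    rw [hX, hv, fromBlocks_mulVec, sumElim_dotProduct_sumElim]
    simp only [add_mulVec, smul_mulVec, dotProduct_add, mulVec_zero, add_zero,
      dotProduct_smul, smul_eq_mul, Sum.elim_comp_inl, Sum.elim_comp_inr, ← mulVec_mulVec]
    have h4 : z ⬝ᵥ Aᵀ *ᵥ (P *ᵥ z) = (A *ᵥ z) ⬝ᵥ (P *ᵥ z) := by
      rw [dotProduct_mulVec, vecMul_transpose]
    have h5 : w ⬝ᵥ Bᵀ *ᵥ (P *ᵥ z) = (B *ᵥ w) ⬝ᵥ (P *ᵥ z) := by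
      rw [dotProduct_mulVec, vecMul_transpose]
    rw [key (A *ᵥ z), key (B *ᵥ w), h4, h5,
      dotProduct_comm (P *ᵥ z) (A *ᵥ z), dotProduct_comm (P *ᵥ z) (B *ᵥ w)]
    simp only [zero_mulVec, dotProduct_zero]
    ring
  have hgoal : ((A *ᵥ x + B *ᵥ Ψ (H *ᵥ x)) - (A *ᵥ xt + B *ᵥ Ψ (H *ᵥ xt)))
      = A *ᵥ z + B *ᵥ w := by
    rw [hz, hw, mulVec_sub, mulVec_sub]
    abel
  rw [hgoal, add_dotProduct]
  have h7 : (A *ᵥ z) ⬝ᵥ (P *ᵥ z) + (B *ᵥ w) ⬝ᵥ (P *ᵥ z) + c * (z ⬝ᵥ P *ᵥ z) ≤ 0 := by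
    nlinarith [h1, h2, h3, hXv]
  linarith
end

section
/- Absolute contractivity of discrete-time Lur'e systems. Let A ∈ ℝ^{n×n}, B ∈ ℝ^{n×m}, H ∈ ℝ^{m×n}, let P ∈ ℝ^{n×n} be symmetric positive definite, let ρ ∈ [0,1), let M ∈ ℝ^{2m×2m} be a symmetric incremental multiplier for Ψ : ℝᵐ → ℝᵐ, and define M_H = [[H, 0],[0, I_m]]ᵀ M [[H, 0],[0, I_m]]. If the block matrix [[AᵀPA − ρ²P, AᵀPB],[BᵀPA, BᵀPB]] + M_H is negative semidefinite, then the map F(x) = Ax + BΨ(Hx) satisfies (F(x) − F(x̃))ᵀ P (F(x) − F(x̃)) ≤ ρ² (x − x̃)ᵀ P (x − x̃) for all x, x̃ ∈ ℝⁿ; equivalently, ‖F(x) − F(x̃)‖_P ≤ ρ ‖x − x̃‖_P, i.e., the discrete-time system x⁺ = Ax + BΨ(Hx) is strongly contracting with factor ρ in ‖·‖_P. -/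
open Matrix

/-- Absolute contractivity of discrete-time Lur'e systems. -/
theorem lure_disc_contraction
    {n m : ℕ}
    (A : Matrix (Fin n) (Fin n) ℝ) (B : Matrix (Fin n) (Fin m) ℝ)
    (H : Matrix (Fin m) (Fin n) ℝ)
    (P : Matrix (Fin n) (Fin n) ℝ) (hPs : P.IsSymm) (hP : P.PosDef)
    (ρ : ℝ) (hρ0 : 0 ≤ ρ) (hρ1 : ρ < 1)
    (M : Matrix (Fin m ⊕ Fin m) (Fin m ⊕ Fin m) ℝ) (hMs : M.IsSymm)
    (Ψ : (Fin m → ℝ) → (Fin m → ℝ))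
    -- M is an incremental multiplier for Ψ
    (hmult : ∀ x xt : Fin m → ℝ,
      0 ≤ (Sum.elim (x - xt) (Ψ x - Ψ xt)) ⬝ᵥ M *ᵥ (Sum.elim (x - xt) (Ψ x - Ψ xt)))
    -- the LMI condition
    (hLMI : (-(fromBlocks (Aᵀ * P * A - (ρ^2) • P) (Aᵀ * P * B) (Bᵀ * P * A) (Bᵀ * P * B) +
        (fromBlocks H (0 : Matrix (Fin m) (Fin m) ℝ)
            (0 : Matrix (Fin m) (Fin n) ℝ) (1 : Matrix (Fin m) (Fin m) ℝ))ᵀ * M *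
          fromBlocks H (0 : Matrix (Fin m) (Fin m) ℝ)
            (0 : Matrix (Fin m) (Fin n) ℝ) (1 : Matrix (Fin m) (Fin m) ℝ))).PosSemidef) :
    ∀ x xt : Fin n → ℝ,
      ((A *ᵥ x + B *ᵥ Ψ (H *ᵥ x)) - (A *ᵥ xt + B *ᵥ Ψ (H *ᵥ xt))) ⬝ᵥ
          P *ᵥ ((A *ᵥ x + B *ᵥ Ψ (H *ᵥ x)) - (A *ᵥ xt + B *ᵥ Ψ (H *ᵥ xt))) ≤
        ρ^2 * ((x - xt) ⬝ᵥ P *ᵥ (x - xt)) ∧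
      pnorm P ((A *ᵥ x + B *ᵥ Ψ (H *ᵥ x)) - (A *ᵥ xt + B *ᵥ Ψ (H *ᵥ xt))) ≤
        ρ * pnorm P (x - xt) := by
  intro x xt
  set e : Fin n → ℝ := x - xt with he
  set w : Fin m → ℝ := Ψ (H *ᵥ x) - Ψ (H *ᵥ xt) with hw
  set v : (Fin n ⊕ Fin m) → ℝ := Sum.elim e w with hv
  have hdiff : (A *ᵥ x + B *ᵥ Ψ (H *ᵥ x)) - (A *ᵥ xt + B *ᵥ Ψ (H *ᵥ xt))
      = A *ᵥ e + B *ᵥ w := by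
    simp [he, hw, mulVec_sub]; abel
  have h1 := hLMI.dotProduct_mulVec_nonneg v
  rw [star_trivial] at h1
  have hG : (fromBlocks H (0 : Matrix (Fin m) (Fin m) ℝ)
      (0 : Matrix (Fin m) (Fin n) ℝ) (1 : Matrix (Fin m) (Fin m) ℝ)) *ᵥ v
      = Sum.elim (H *ᵥ e) w := by
    rw [fromBlocks_mulVec]
    simp [hv]
  have hmul : v ⬝ᵥ ((fromBlocks H (0 : Matrix (Fin m) (Fin m) ℝ)
            (0 : Matrix (Fin m) (Fin n) ℝ) (1 : Matrix (Fin m) (Fin m) ℝ))ᵀ * M *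
          fromBlocks H (0 : Matrix (Fin m) (Fin m) ℝ)
            (0 : Matrix (Fin m) (Fin n) ℝ) (1 : Matrix (Fin m) (Fin m) ℝ)) *ᵥ v
      = (Sum.elim (H *ᵥ e) w) ⬝ᵥ M *ᵥ (Sum.elim (H *ᵥ e) w) := by
    rw [Matrix.mul_assoc, ← mulVec_mulVec, ← mulVec_mulVec, dotProduct_mulVec,
      vecMul_transpose, hG]
  have hmult' : 0 ≤ (Sum.elim (H *ᵥ e) w) ⬝ᵥ M *ᵥ (Sum.elim (H *ᵥ e) w) := by
    have := hmult (H *ᵥ x) (H *ᵥ xt)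
    simpa [he, hw, mulVec_sub] using this
  have hQ : v ⬝ᵥ (fromBlocks (Aᵀ * P * A - (ρ^2) • P) (Aᵀ * P * B) (Bᵀ * P * A) (Bᵀ * P * B)) *ᵥ v
      = (A *ᵥ e + B *ᵥ w) ⬝ᵥ P *ᵥ (A *ᵥ e + B *ᵥ w) - ρ^2 * (e ⬝ᵥ P *ᵥ e) := by
    rw [fromBlocks_mulVec]
    simp only [hv, Sum.elim_comp_inl, Sum.elim_comp_inr, sumElim_dotProduct_sumElim,
      sub_mulVec, smul_mulVec, dotProduct_add, dotProduct_sub, dotProduct_smul,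
      add_mulVec, mulVec_add, ← mulVec_mulVec, dotProduct_mulVec, vecMul_transpose]
    simp only [add_vecMul, add_dotProduct, smul_eq_mul]
    ring
  rw [neg_mulVec, dotProduct_neg, add_mulVec, dotProduct_add, hmul, hQ] at h1
  have hmain : ((A *ᵥ x + B *ᵥ Ψ (H *ᵥ x)) - (A *ᵥ xt + B *ᵥ Ψ (H *ᵥ xt))) ⬝ᵥ
      P *ᵥ ((A *ᵥ x + B *ᵥ Ψ (H *ᵥ x)) - (A *ᵥ xt + B *ᵥ Ψ (H *ᵥ xt))) ≤
      ρ^2 * (e ⬝ᵥ P *ᵥ e) := by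
    rw [hdiff]
    nlinarith [hmult']
  refine ⟨hmain, ?_⟩
  have : pnorm P ((A *ᵥ x + B *ᵥ Ψ (H *ᵥ x)) - (A *ᵥ xt + B *ᵥ Ψ (H *ᵥ xt)))
      ≤ Real.sqrt (ρ^2 * (e ⬝ᵥ P *ᵥ e)) := Real.sqrt_le_sqrt hmain
  calc pnorm P ((A *ᵥ x + B *ᵥ Ψ (H *ᵥ x)) - (A *ᵥ xt + B *ᵥ Ψ (H *ᵥ xt)))
      ≤ Real.sqrt (ρ^2 * (e ⬝ᵥ P *ᵥ e)) := this
    _ = ρ * pnorm P e := by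
        rw [Real.sqrt_mul (sq_nonneg ρ), Real.sqrt_sq hρ0]; rfl
end

section
/- Contractivity of the continuous-time firing-rate neural network with MONE activation. Let W ∈ ℝ^{n×n}, B ∈ ℝ^{n×m}, u ∈ ℝᵐ, let Ψ : ℝⁿ → ℝⁿ be a diagonal MONE map, let P ∈ ℝ^{n×n} be symmetric positive definite, Q ∈ ℝ^{n×n} diagonal positive definite, and c > 0. If the 2n×2n block matrix [[−2(1−c)P, P + WᵀQ],[P + QW, −2Q]] is negative semidefinite, then the vector field F(x) = −x + Ψ(Wx + Bu) satisfies (F(x) − F(x̃))ᵀ P (x − x̃) ≤ −c (x − x̃)ᵀ P (x − x̃) for all x, x̃ ∈ ℝⁿ, i.e., the firing-rate dynamics ẋ = −x + Ψ(Wx + Bu) are strongly infinitesimally contracting with rate c with respect to ‖·‖_P. -/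
open Matrix

private lemma dot_elim {n : ℕ} (p q r s : Fin n → ℝ) :
    Sum.elim p q ⬝ᵥ Sum.elim r s = p ⬝ᵥ r + q ⬝ᵥ s := by
  simp [dotProduct, Fintype.sum_sum_type]

private lemma dot_transfer {n : ℕ} (A : Matrix (Fin n) (Fin n) ℝ)
    (x y : Fin n → ℝ) : x ⬝ᵥ A *ᵥ y = y ⬝ᵥ Aᵀ *ᵥ x := by
  rw [dotProduct_mulVec, ← mulVec_transpose, dotProduct_comm]

/-- Contractivity of the continuous-time firing-rate neural network with MONE activation. -/
theorem frnn_cts_mone_contraction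
    {n m : ℕ}
    (W : Matrix (Fin n) (Fin n) ℝ) (B : Matrix (Fin n) (Fin m) ℝ) (u : Fin m → ℝ)
    (Ψ : (Fin n → ℝ) → (Fin n → ℝ)) (ψ : Fin n → ℝ → ℝ)
    -- Ψ is diagonal with components ψ i
    (hdiag : ∀ (x : Fin n → ℝ) (i : Fin n), Ψ x i = ψ i (x i))
    -- MONE: each component is slope-restricted in [0,1]
    (hslope : ∀ (i : Fin n) (s t : ℝ),
      0 * (s - t)^2 ≤ (ψ i s - ψ i t) * (s - t) ∧ (ψ i s - ψ i t) * (s - t) ≤ 1 * (s - t)^2)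
    (P Q : Matrix (Fin n) (Fin n) ℝ)
    (hPs : P.IsSymm) (hP : P.PosDef) (hQd : Q.IsDiag) (hQ : Q.PosDef)
    (c : ℝ) (hc : 0 < c)
    (hLMI : (-(fromBlocks ((-(2 * (1 - c))) • P) (P + Wᵀ * Q) (P + Q * W)
        ((-2 : ℝ) • Q))).PosSemidef) :
    ∀ x xt : Fin n → ℝ,
      ((-x + Ψ (W *ᵥ x + B *ᵥ u)) - (-xt + Ψ (W *ᵥ xt + B *ᵥ u))) ⬝ᵥ P *ᵥ (x - xt) ≤
        -c * ((x - xt) ⬝ᵥ P *ᵥ (x - xt)) := by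
  intro x xt
  set e : Fin n → ℝ := x - xt with he
  set a : Fin n → ℝ := W *ᵥ x + B *ᵥ u with ha
  set b : Fin n → ℝ := W *ᵥ xt + B *ᵥ u with hb
  set Δ : Fin n → ℝ := fun i => ψ i (a i) - ψ i (b i) with hΔ
  have hab : ∀ i, a i - b i = (W *ᵥ e) i := by
    intro i
    simp [ha, hb, he, Matrix.mulVec_sub]
  -- componentwise sector bound : Δ i * ((W *ᵥ e) i - Δ i) ≥ 0
  have hsec : ∀ i, 0 ≤ Δ i * ((W *ᵥ e) i - Δ i) := by
    intro i
    rcases hslope i (a i) (b i) with ⟨h1, h2⟩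
    by_cases hst : a i = b i
    · simp [hΔ, hst]
    · have hv : a i - b i ≠ 0 := sub_ne_zero.mpr hst
      have hv2 : 0 < (a i - b i) * (a i - b i) := by
        rcases hv.lt_or_gt with h | h
        · exact mul_pos_of_neg_of_neg h h
        · exact mul_pos h h
      rw [← hab i]
      simp only [hΔ]
      set v := a i - b i
      set d := ψ i (a i) - ψ i (b i)
      have h2' : d * v ≤ v * v := by nlinarith [h2]
      have h1' : 0 ≤ d * v := by nlinarith [h1]
      nlinarith [mul_nonneg h1' (sub_nonneg.mpr h2')]
  -- Q acts diagonally
  have hQmul : ∀ (v : Fin n → ℝ) (i : Fin n), (Q *ᵥ v) i = Q i i * v i := by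
    intro v i
    simp only [mulVec, dotProduct]
    rw [Finset.sum_eq_single i]
    · intro j _ hji; rw [hQd (Ne.symm hji), zero_mul]
    · intro h; exact absurd (Finset.mem_univ i) h
  -- Q has positive diagonal entries
  have hQpos : ∀ i, 0 < Q i i := by
    intro i
    have h := hQ.dotProduct_mulVec_pos (x := Pi.single i 1) (by
      intro hz
      have := congrFun hz i
      simp at this)
    have hval : star (Pi.single i 1 : Fin n → ℝ) ⬝ᵥ Q *ᵥ Pi.single i 1 = Q i i := by
      simp only [star_trivial, dotProduct]
      rw [Finset.sum_eq_single i]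
      · rw [hQmul]; simp
      · intro j _ hji; simp [Pi.single_apply, hji]
      · intro h; exact absurd (Finset.mem_univ i) h
    rw [hval] at h
    exact h
  -- the Q-weighted sector bound
  have hQsec : 0 ≤ Δ ⬝ᵥ Q *ᵥ (W *ᵥ e) - Δ ⬝ᵥ Q *ᵥ Δ := by
    have heq : Δ ⬝ᵥ Q *ᵥ (W *ᵥ e) - Δ ⬝ᵥ Q *ᵥ Δ
        = ∑ i, Q i i * (Δ i * ((W *ᵥ e) i - Δ i)) := by
      simp only [dotProduct, hQmul]
      rw [← Finset.sum_sub_distrib]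
      exact Finset.sum_congr rfl fun i _ => by ring
    rw [heq]
    exact Finset.sum_nonneg fun i _ => mul_nonneg (hQpos i).le (hsec i)
  -- apply the LMI to z = (e, Δ)
  have hz := hLMI.dotProduct_mulVec_nonneg (Sum.elim e Δ)
  rw [Matrix.neg_mulVec, dotProduct_neg, fromBlocks_mulVec] at hz
  simp only [Sum.elim_comp_inl, Sum.elim_comp_inr, star_trivial] at hz
  rw [dot_elim, dotProduct_add, dotProduct_add, Matrix.add_mulVec, Matrix.add_mulVec,
    dotProduct_add, dotProduct_add, smul_mulVec, smul_mulVec,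
    dotProduct_smul, dotProduct_smul] at hz
  have hWQ : e ⬝ᵥ (Wᵀ * Q) *ᵥ Δ = Δ ⬝ᵥ Q *ᵥ (W *ᵥ e) := by
    rw [dot_transfer, Matrix.transpose_mul, Matrix.transpose_transpose, hQd.isSymm.eq,
      ← Matrix.mulVec_mulVec]
  have hQW : Δ ⬝ᵥ (Q * W) *ᵥ e = Δ ⬝ᵥ Q *ᵥ (W *ᵥ e) := by
    rw [← Matrix.mulVec_mulVec]
  have hPsym : e ⬝ᵥ P *ᵥ Δ = Δ ⬝ᵥ P *ᵥ e := by
    rw [dot_transfer, hPs.eq]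
  rw [hWQ, hQW, hPsym] at hz
  -- rewrite the goal
  have hgoal : ((-x + Ψ a) - (-xt + Ψ b)) = -e + Δ := by
    funext i
    simp [hdiag, hΔ, he, Pi.sub_apply]
    ring
  rw [hgoal, add_dotProduct, neg_dotProduct]
  set X := e ⬝ᵥ P *ᵥ e
  set Y := Δ ⬝ᵥ P *ᵥ e
  set Z := Δ ⬝ᵥ Q *ᵥ (W *ᵥ e)
  set T := Δ ⬝ᵥ Q *ᵥ Δ
  simp only [smul_eq_mul] at hz
  nlinarith [hz, hQsec]
end

section
/- Contractivity of the discrete-time firing-rate neural network with MONE activation. Let W ∈ ℝ^{n×n}, B ∈ ℝ^{n×m}, u ∈ ℝᵐ, let Ψ : ℝⁿ → ℝⁿ be a diagonal MONE map, let P ∈ ℝ^{n×n} be symmetric positive definite, Q ∈ ℝ^{n×n} diagonal positive definite, and ρ ∈ [0,1). If the 2n×2n block matrix [[−ρ²P, WᵀQ],[QW, P − 2Q]] is negative semidefinite, then the map T(x) = Ψ(Wx + Bu) satisfies (T(x) − T(x̃))ᵀ P (T(x) − T(x̃)) ≤ ρ² (x − x̃)ᵀ P (x − x̃) for all x, x̃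 ∈ ℝⁿ; i.e., the discrete-time firing-rate dynamics x⁺ = Ψ(Wx + Bu) are strongly contracting with factor ρ in ‖·‖_P. -/
open Matrix

private lemma diag_symm {n : ℕ} (Q : Matrix (Fin n) (Fin n) ℝ) (hQd : Q.IsDiag) : Qᵀ = Q := by
  ext i j
  by_cases h : i = j
  · simp [h]
  · rw [transpose_apply, hQd h, hQd (Ne.symm h)]

/-- Contractivity of the discrete-time firing-rate neural network with MONE activation. -/
theorem frnn_disc_mone_contraction
    {n m : ℕ}
    (W : Matrix (Fin n) (Fin n) ℝ) (B : Matrix (Fin n) (Fin m) ℝ) (u : Fin m → ℝ)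
    (Ψ : (Fin n → ℝ) → (Fin n → ℝ)) (ψ : Fin n → ℝ → ℝ)
    (hdiag : ∀ (x : Fin n → ℝ) (i : Fin n), Ψ x i = ψ i (x i))
    (hslope : ∀ (i : Fin n) (s t : ℝ),
      0 * (s - t)^2 ≤ (ψ i s - ψ i t) * (s - t) ∧ (ψ i s - ψ i t) * (s - t) ≤ 1 * (s - t)^2)
    (P Q : Matrix (Fin n) (Fin n) ℝ)
    (hPs : P.IsSymm) (hP : P.PosDef) (hQd : Q.IsDiag) (hQ : Q.PosDef)
    (ρ : ℝ) (hρ0 : 0 ≤ ρ) (hρ1 : ρ < 1)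
    (hLMI : (-(fromBlocks ((-(ρ^2)) • P) (Wᵀ * Q) (Q * W)
        (P - (2 : ℝ) • Q))).PosSemidef) :
    ∀ x xt : Fin n → ℝ,
      (Ψ (W *ᵥ x + B *ᵥ u) - Ψ (W *ᵥ xt + B *ᵥ u)) ⬝ᵥ
          P *ᵥ (Ψ (W *ᵥ x + B *ᵥ u) - Ψ (W *ᵥ xt + B *ᵥ u)) ≤
        ρ^2 * ((x - xt) ⬝ᵥ P *ᵥ (x - xt)) := by
  intro x xt
  set a := W *ᵥ x + B *ᵥ u with ha
  set b := W *ᵥ xt + B *ᵥ u with hb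
  set dx := x - xt with hdx
  set dy := Ψ a - Ψ b with hdy
  have hab : a - b = W *ᵥ dx := by
    rw [ha, hb, hdx, mulVec_sub]
    abel
  -- pointwise: dy i ^ 2 ≤ dy i * (W *ᵥ dx) i
  have hpt : ∀ i, dy i ^ 2 ≤ dy i * ((W *ᵥ dx) i) := by
    intro i
    have hval : dy i = ψ i (a i) - ψ i (b i) := by
      simp [hdy, hdiag]
    have hWdx : (W *ᵥ dx) i = a i - b i := by
      rw [← hab]; simp
    obtain ⟨h1, h2⟩ := hslope i (a i) (b i)
    rw [zero_mul] at h1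
    rw [one_mul] at h2
    rw [hval, hWdx]
    set d := (ψ i (a i) - ψ i (b i)) with hd
    set e := a i - b i with he
    by_cases he0 : e = 0
    · have hab0 : a i = b i := by rw [he] at he0; linarith
      have : d = 0 := by rw [hd, hab0]; ring
      simp [this]
    · have he2 : 0 < e ^ 2 := by positivity
      have hkey : 0 ≤ d * e * (e ^ 2 - d * e) := mul_nonneg h1 (by linarith)
      nlinarith [he2, hkey]
  -- Q has positive diagonal
  have hQpos : ∀ i, 0 < Q i i := by
    intro i
    have hv : (Pi.single i 1 : Fin n → ℝ) ≠ 0 := by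
      intro h
      have := congrFun h i
      simp at this
    have := hQ.dotProduct_mulVec_pos hv
    simpa [dotProduct, mulVec, Pi.single_apply, Finset.mul_sum] using this
  -- monotonicity sum: 0 ≤ dy ⬝ᵥ Q *ᵥ (W *ᵥ dx - dy)
  have hmon : 0 ≤ dy ⬝ᵥ Q *ᵥ (W *ᵥ dx - dy) := by
    have hQv : ∀ (v : Fin n → ℝ) i, (Q *ᵥ v) i = Q i i * v i := by
      intro v i
      simp only [mulVec, dotProduct]
      rw [Finset.sum_eq_single i]
      · intro j _ hj; rw [hQd (Ne.symm hj), zero_mul]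
      · intro h; exact absurd (Finset.mem_univ i) h
    have : dy ⬝ᵥ Q *ᵥ (W *ᵥ dx - dy)
        = ∑ i, Q i i * (dy i * ((W *ᵥ dx) i - dy i)) := by
      simp only [dotProduct]
      refine Finset.sum_congr rfl fun i _ => ?_
      rw [hQv]
      simp only [Pi.sub_apply]
      ring
    rw [this]
    refine Finset.sum_nonneg fun i _ => ?_
    have h := hpt i
    have := (hQpos i).le
    nlinarith [hpt i, (hQpos i).le]
  -- LMI evaluation at z = Sum.elim dx dy
  have hz := hLMI.dotProduct_mulVec_nonneg (Sum.elim dx dy)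
  have hQs : Qᵀ = Q := diag_symm Q hQd
  have hWQ : dx ⬝ᵥ (Wᵀ * Q) *ᵥ dy = dy ⬝ᵥ Q *ᵥ (W *ᵥ dx) := by
    rw [← mulVec_mulVec, dotProduct_mulVec dx, vecMul_transpose]
    rw [dotProduct_comm, dotProduct_mulVec dy, ← hQs, vecMul_transpose, hQs]
  have hQW : dy ⬝ᵥ (Q * W) *ᵥ dx = dy ⬝ᵥ Q *ᵥ (W *ᵥ dx) := by
    rw [← mulVec_mulVec]
  have hzval : Sum.elim dx dy ⬝ᵥ
      (fromBlocks ((-(ρ^2)) • P) (Wᵀ * Q) (Q * W) (P - (2:ℝ) • Q)) *ᵥ Sum.elim dx dy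
      = -(ρ^2) * (dx ⬝ᵥ P *ᵥ dx) + dy ⬝ᵥ P *ᵥ dy
        + 2 * (dy ⬝ᵥ Q *ᵥ (W *ᵥ dx)) - 2 * (dy ⬝ᵥ Q *ᵥ dy) := by
    rw [fromBlocks_mulVec, sumElim_dotProduct_sumElim]
    simp only [Sum.elim_comp_inl, Sum.elim_comp_inr, dotProduct_add]
    rw [smul_mulVec, dotProduct_smul, sub_mulVec, dotProduct_sub,
      smul_mulVec, dotProduct_smul, hWQ, hQW]
    simp only [smul_eq_mul]
    ring
  -- hz : 0 ≤ star z ⬝ᵥ (-M) *ᵥ z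
  have hz' : Sum.elim dx dy ⬝ᵥ
      (fromBlocks ((-(ρ^2)) • P) (Wᵀ * Q) (Q * W) (P - (2:ℝ) • Q)) *ᵥ Sum.elim dx dy ≤ 0 := by
    have := hz
    simp only [star_trivial, neg_mulVec, dotProduct_neg] at this
    linarith
  rw [hzval] at hz'
  have hmon' : dy ⬝ᵥ Q *ᵥ (W *ᵥ dx) - dy ⬝ᵥ Q *ᵥ dy ≥ 0 := by
    have : dy ⬝ᵥ Q *ᵥ (W *ᵥ dx - dy) = dy ⬝ᵥ Q *ᵥ (W *ᵥ dx) - dy ⬝ᵥ Q *ᵥ dy := by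
      rw [mulVec_sub, dotProduct_sub]
    linarith [hmon, this ▸ hmon]
  linarith
end

section
/- Contractivity of the continuous-time Hopfield neural network with MONE activation. Let W ∈ ℝ^{n×n}, B ∈ ℝ^{n×m}, u ∈ ℝᵐ, let Ψ : ℝⁿ → ℝⁿ be a diagonal MONE map, let P ∈ ℝ^{n×n} be symmetric positive definite, Q ∈ ℝ^{n×n} diagonal positive definite, and c > 0. If the 2n×2n block matrix [[−2(1−c)P, PW + Q],[WᵀP + Q, −2Q]] is negative semidefinite, then the vector field F(x) = −x + WΨ(x) + Bu satisfies (F(x) − F(x̃))ᵀ P (x − x̃) ≤ −c (x − x̃)ᵀ P (x − x̃) for all x, x̃ ∈ ℝⁿ, i.e., the Hopfield dynamics ẋ = −x + WΨ(x) + Bu are strongly infinitesimally contracting with rate c with respect to ‖·‖_P. -/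
open Matrix

/-- Contractivity of the continuous-time Hopfield neural network with MONE activation. -/
theorem hopfield_cts_mone_contraction
    {n m : ℕ}
    (W : Matrix (Fin n) (Fin n) ℝ) (B : Matrix (Fin n) (Fin m) ℝ) (u : Fin m → ℝ)
    (Ψ : (Fin n → ℝ) → (Fin n → ℝ)) (ψ : Fin n → ℝ → ℝ)
    (hdiag : ∀ (x : Fin n → ℝ) (i : Fin n), Ψ x i = ψ i (x i))
    (hslope : ∀ (i : Fin n) (s t : ℝ),
      0 * (s - t)^2 ≤ (ψ i s - ψ i t) * (s - t) ∧ (ψ i s - ψ i t) * (s - t) ≤ 1 * (s - t)^2)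
    (P Q : Matrix (Fin n) (Fin n) ℝ)
    (hPs : P.IsSymm) (hP : P.PosDef) (hQd : Q.IsDiag) (hQ : Q.PosDef)
    (c : ℝ) (hc : 0 < c)
    (hLMI : (-(fromBlocks ((-(2 * (1 - c))) • P) (P * W + Q) (Wᵀ * P + Q)
        ((-2 : ℝ) • Q))).PosSemidef) :
    ∀ x xt : Fin n → ℝ,
      ((-x + W *ᵥ Ψ x + B *ᵥ u) - (-xt + W *ᵥ Ψ xt + B *ᵥ u)) ⬝ᵥ P *ᵥ (x - xt) ≤
        -c * ((x - xt) ⬝ᵥ P *ᵥ (x - xt)) := by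
  intro x xt
  set e : Fin n → ℝ := x - xt with he
  set d : Fin n → ℝ := fun i => ψ i (x i) - ψ i (xt i) with hd
  have hΨ : Ψ x - Ψ xt = d := by
    funext i; simp [hdiag, hd]
  -- symmetric dot product helper
  have hsymdot : ∀ (M : Matrix (Fin n) (Fin n) ℝ), Mᵀ = M →
      ∀ v w : Fin n → ℝ, v ⬝ᵥ (M *ᵥ w) = w ⬝ᵥ (M *ᵥ v) := by
    intro M hM v w
    rw [dotProduct_mulVec, ← mulVec_transpose, hM, dotProduct_comm]
  -- Q diagonal entries positive
  have hQpos : ∀ i, 0 < Q i i := by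
    intro i
    have h := hQ.dotProduct_mulVec_pos (x := Pi.single i 1) (by
      intro h
      have := congrFun h i
      simp at this)
    simpa [mulVec_single, single_dotProduct] using h
  have hQmv : ∀ v : Fin n → ℝ, Q *ᵥ v = fun i => Q i i * v i := by
    intro v; funext i
    simp only [mulVec, dotProduct]
    rw [Finset.sum_eq_single i]
    · intro j _ hj
      rw [hQd (Ne.symm hj), zero_mul]
    · intro h; exact absurd (Finset.mem_univ i) h
  -- per-coordinate slope fact
  have key : ∀ i, d i ^ 2 ≤ e i * d i := by
    intro i
    have h1 := (hslope i (x i) (xt i)).1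
    have h2 := (hslope i (x i) (xt i)).2
    have hei : e i = x i - xt i := rfl
    have hdi : d i = ψ i (x i) - ψ i (xt i) := rfl
    rw [← hei, ← hdi] at h1 h2
    rcases lt_trichotomy (e i) 0 with hb | hb | hb
    · nlinarith [h1, h2, mul_pos_of_neg_of_neg hb hb]
    · have hx : x i = xt i := by
        have h0 : x i - xt i = 0 := by rw [← hei, ← hb]
        linarith
      simp [hdi, hx, hb]
    · nlinarith [h1, h2, mul_pos hb hb]
  have hQsum : d ⬝ᵥ Q *ᵥ d ≤ e ⬝ᵥ Q *ᵥ d := by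
    rw [hQmv]
    simp only [dotProduct]
    apply Finset.sum_le_sum
    intro i _
    have := key i
    nlinarith [hQpos i]
  have hQcomm : d ⬝ᵥ Q *ᵥ e = e ⬝ᵥ Q *ᵥ d := hsymdot Q hQd.isSymm d e
  -- evaluate the LMI at (e, d)
  have hM := hLMI.dotProduct_mulVec_nonneg (Sum.elim e d)
  simp only [star_trivial, neg_mulVec, dotProduct_neg, fromBlocks_mulVec,
    Sum.elim_comp_inl, Sum.elim_comp_inr, sumElim_dotProduct_sumElim,
    add_mulVec, smul_mulVec, dotProduct_add, dotProduct_smul,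
    smul_eq_mul, ← mulVec_mulVec] at hM
  have hcross1 : e ⬝ᵥ P *ᵥ (W *ᵥ d) = (W *ᵥ d) ⬝ᵥ P *ᵥ e := hsymdot P hPs e (W *ᵥ d)
  have hcross2 : d ⬝ᵥ Wᵀ *ᵥ (P *ᵥ e) = (W *ᵥ d) ⬝ᵥ P *ᵥ e := by
    rw [dotProduct_mulVec, vecMul_transpose]
  rw [hcross1, hcross2, hQcomm] at hM
  -- rewrite the goal
  have hF : (-x + W *ᵥ Ψ x + B *ᵥ u) - (-xt + W *ᵥ Ψ xt + B *ᵥ u) = -e + W *ᵥ d := by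
    have : W *ᵥ d = W *ᵥ Ψ x - W *ᵥ Ψ xt := by rw [← hΨ, mulVec_sub]
    rw [this, he]; abel
  rw [hF, add_dotProduct, neg_dotProduct]
  linarith [hM, hQsum]
end

section
/- Equivalence of the discrete-time CONE certificates with Schur diagonal stability. For W ∈ ℝ^{n×n}, the following are equivalent: (i) there exist a symmetric positive definite P ∈ ℝ^{n×n}, a diagonal positive definite Q ∈ ℝ^{n×n}, and ρ ∈ [0,1) such that the block matrix [[−ρ²P + WᵀQW, 0],[0, P − Q]] is negative semidefinite; (ii) there exist a symmetric positive definite P, a diagonal positive definite Q, and ρ ∈ [0,1) such that [[−ρ²P + Q, 0],[0, WᵀPW − Q]] is negative semidefinite; (iii) W is Schur diagonally stable, i.e., there exists a diagonal positive definite Q such that WᵀQW − Q is negative definite. -/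
open Matrix

section Aux

variable {n : ℕ}

private lemma psd_smul' {A : Matrix (Fin n) (Fin n) ℝ} (hA : A.PosSemidef) {c : ℝ}
    (hc : 0 ≤ c) : (c • A).PosSemidef := by
  refine Matrix.PosSemidef.of_dotProduct_mulVec_nonneg ?_ (fun x => ?_)
  · unfold Matrix.IsHermitian
    rw [conjTranspose_smul, hA.1]; simp
  · rw [smul_mulVec, dotProduct_smul, smul_eq_mul]
    exact mul_nonneg hc (hA.dotProduct_mulVec_nonneg x)

private lemma pd_smul' {A : Matrix (Fin n) (Fin n) ℝ} (hA : A.PosDef) {c : ℝ}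
    (hc : 0 < c) : (c • A).PosDef := by
  refine Matrix.PosDef.of_dotProduct_mulVec_pos ?_ (fun x hx => ?_)
  · unfold Matrix.IsHermitian
    rw [conjTranspose_smul, hA.1]; simp
  · rw [smul_mulVec, dotProduct_smul, smul_eq_mul]
    exact mul_pos hc (hA.dotProduct_mulVec_pos hx)

private lemma quad_smul' (M : Matrix (Fin n) (Fin n) ℝ) (c : ℝ) (y : Fin n → ℝ) :
    (c • y) ⬝ᵥ M *ᵥ (c • y) = c^2 * (y ⬝ᵥ M *ᵥ y) := by
  rw [mulVec_smul, dotProduct_smul, smul_dotProduct]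
  simp [smul_eq_mul]; ring

/-- Key quantitative fact: if `Q ≻ 0` and `B ≻ 0` then `B ⪰ ε Q` for some small `ε ∈ (0, 1/2]`. -/
private lemma eps_lemma {Q B : Matrix (Fin n) (Fin n) ℝ} (hQ : Q.PosDef) (hB : B.PosDef) :
    ∃ ε : ℝ, 0 < ε ∧ ε ≤ 1/2 ∧ (B - ε • Q).PosSemidef := by
  have quad_cont : ∀ M : Matrix (Fin n) (Fin n) ℝ,
      Continuous fun x : Fin n → ℝ => x ⬝ᵥ M *ᵥ x := by
    intro M
    have : (fun x : Fin n → ℝ => x ⬝ᵥ M *ᵥ x)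
        = fun x => ∑ i, x i * ∑ j, M i j * x j := rfl
    rw [this]
    exact continuous_finset_sum _ fun i _ =>
      (continuous_apply i).mul (continuous_finset_sum _ fun j _ =>
        continuous_const.mul (continuous_apply j))
  rcases Nat.eq_zero_or_pos n with hn | hn
  · refine ⟨1/2, by norm_num, le_refl _, ?_⟩
    subst hn
    have : B - (1/2 : ℝ) • Q = 0 := Subsingleton.elim _ _
    rw [this]; exact Matrix.PosSemidef.zero
  · haveI : Nonempty (Fin n) := ⟨⟨0, hn⟩⟩
    set S : Set (Fin n → ℝ) := Metric.sphere 0 1 with hS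
    have hScomp : IsCompact S := isCompact_sphere 0 1
    have hSne : S.Nonempty := by
      refine ⟨fun _ => 1, ?_⟩
      simp [hS, mem_sphere_iff_norm, pi_norm_const]
    have hf := quad_cont B
    have hg := quad_cont Q
    obtain ⟨x₀, hx₀S, hx₀min⟩ := hScomp.exists_isMinOn hSne (hf.continuousOn)
    obtain ⟨x₁, hx₁S, hx₁max⟩ := hScomp.exists_isMaxOn hSne (hg.continuousOn)
    have hnorm : ∀ x ∈ S, ‖x‖ = 1 := fun x hx => by
      simpa [hS, mem_sphere_iff_norm] using hx
    have hne : ∀ x ∈ S, x ≠ 0 := fun x hx h0 => by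
      have := hnorm x hx; rw [h0] at this; simp at this
    have hm : 0 < x₀ ⬝ᵥ B *ᵥ x₀ := by
      have := hB.dotProduct_mulVec_pos (hne x₀ hx₀S)
      simpa using this
    have hM : 0 < x₁ ⬝ᵥ Q *ᵥ x₁ := by
      have h1 : 0 < x₀ ⬝ᵥ Q *ᵥ x₀ := by simpa using hQ.dotProduct_mulVec_pos (hne x₀ hx₀S)
      exact lt_of_lt_of_le h1 (hx₁max hx₀S)
    set m := x₀ ⬝ᵥ B *ᵥ x₀
    set M := x₁ ⬝ᵥ Q *ᵥ x₁
    refine ⟨min (m / M) (1/2), lt_min (div_pos hm hM) (by norm_num), min_le_right _ _,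
      Matrix.PosSemidef.of_dotProduct_mulVec_nonneg ?_ ?_⟩
    · unfold Matrix.IsHermitian
      rw [conjTranspose_sub, conjTranspose_smul, hB.1.eq, hQ.1.eq]; simp
    · intro x
      have key : ∀ y ∈ S, min (m / M) (1/2) * (y ⬝ᵥ Q *ᵥ y) ≤ y ⬝ᵥ B *ᵥ y := by
        intro y hy
        have hq : 0 < y ⬝ᵥ Q *ᵥ y := by simpa using hQ.dotProduct_mulVec_pos (hne y hy)
        have h1 : min (m / M) (1/2) * (y ⬝ᵥ Q *ᵥ y) ≤ (m / M) * (y ⬝ᵥ Q *ᵥ y) :=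
          mul_le_mul_of_nonneg_right (min_le_left _ _) hq.le
        have h2 : (m / M) * (y ⬝ᵥ Q *ᵥ y) ≤ (m / M) * M :=
          mul_le_mul_of_nonneg_left (hx₁max hy) (div_pos hm hM).le
        have h3 : (m / M) * M = m := div_mul_cancel₀ m hM.ne'
        have h4 : m ≤ y ⬝ᵥ B *ᵥ y := hx₀min hy
        linarith
      have expand : star x ⬝ᵥ (B - min (m / M) (1/2) • Q) *ᵥ x
          = x ⬝ᵥ B *ᵥ x - min (m / M) (1/2) * (x ⬝ᵥ Q *ᵥ x) := by
        rw [star_trivial, sub_mulVec, dotProduct_sub, smul_mulVec, dotProduct_smul,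
          smul_eq_mul]
      rw [expand]
      rcases eq_or_ne x 0 with rfl | hx0
      · simp
      · have hc : (0 : ℝ) < ‖x‖ := norm_pos_iff.mpr hx0
        set y : Fin n → ℝ := ‖x‖⁻¹ • x with hy
        have hyS : y ∈ S := by
          rw [hS, mem_sphere_iff_norm, sub_zero, hy, norm_smul]
          simp [abs_of_pos (inv_pos.mpr hc), inv_mul_cancel₀ hc.ne']
        have hxy : x = ‖x‖ • y := by
          rw [hy, smul_smul, mul_inv_cancel₀ hc.ne', one_smul]
        have quadB := quad_smul' B ‖x‖ y
        have quadQ := quad_smul' Q ‖x‖ y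
        rw [← hxy] at quadB quadQ
        have := key y hyS
        have hc2 : (0:ℝ) ≤ ‖x‖^2 := sq_nonneg _
        rw [quadB, quadQ]
        nlinarith [mul_le_mul_of_nonneg_left this hc2]

private lemma blockdiag_psd {A D : Matrix (Fin n) (Fin n) ℝ}
    (hA : A.PosSemidef) (hD : D.PosSemidef) :
    (fromBlocks A 0 0 D).PosSemidef := by
  refine Matrix.PosSemidef.of_dotProduct_mulVec_nonneg ?_ (fun x => ?_)
  · rw [isHermitian_fromBlocks_iff]
    exact ⟨hA.1, by simp, by simp, hD.1⟩
  · have hx : x = Sum.elim (x ∘ Sum.inl) (x ∘ Sum.inr) := by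
      ext (i | i) <;> rfl
    rw [star_trivial, hx, fromBlocks_mulVec]
    simp only [zero_mulVec, add_zero, zero_add]
    rw [sumElim_dotProduct_sumElim]
    have h1 := hA.dotProduct_mulVec_nonneg (x ∘ Sum.inl)
    have h2 := hD.dotProduct_mulVec_nonneg (x ∘ Sum.inr)
    rw [star_trivial] at h1 h2
    exact add_nonneg h1 h2

private lemma psd_block_extract {A D : Matrix (Fin n) (Fin n) ℝ}
    (h : (-(fromBlocks A 0 0 D)).PosSemidef) : (-A).PosSemidef ∧ (-D).PosSemidef := by
  rw [fromBlocks_neg, neg_zero] at h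
  constructor
  · have := h.submatrix Sum.inl
    have e : (fromBlocks (-A) 0 0 (-D)).submatrix Sum.inl Sum.inl = -A := by
      ext i j; simp [submatrix_apply]
    rwa [e] at this
  · have := h.submatrix Sum.inr
    have e : (fromBlocks (-A) 0 0 (-D)).submatrix Sum.inr Sum.inr = -D := by
      ext i j; simp [submatrix_apply]
    rwa [e] at this

private lemma transpose_psd {W : Matrix (Fin n) (Fin n) ℝ} {M : Matrix (Fin n) (Fin n) ℝ}
    (h : M.PosSemidef) : (Wᵀ * M * W).PosSemidef := by
  have := h.conjTranspose_mul_mul_same W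
  rwa [conjTranspose_eq_transpose_of_trivial] at this

end Aux

/-- Equivalence of the discrete-time CONE certificates (firing-rate and Hopfield)
with Schur diagonal stability. -/
theorem disc_cone_iff_schur_diag_stable
    {n : ℕ} (W : Matrix (Fin n) (Fin n) ℝ) :
    -- (i) ↔ (iii)
    ((∃ (P Q : Matrix (Fin n) (Fin n) ℝ) (ρ : ℝ),
        P.IsSymm ∧ P.PosDef ∧ Q.IsDiag ∧ Q.PosDef ∧ 0 ≤ ρ ∧ ρ < 1 ∧
        (-(fromBlocks ((-(ρ^2)) • P + Wᵀ * Q * W) (0 : Matrix (Fin n) (Fin n) ℝ)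
            (0 : Matrix (Fin n) (Fin n) ℝ) (P - Q))).PosSemidef) ↔
      (∃ Q : Matrix (Fin n) (Fin n) ℝ, Q.IsDiag ∧ Q.PosDef ∧
        (-(Wᵀ * Q * W - Q)).PosDef)) ∧
    -- (ii) ↔ (iii)
    ((∃ (P Q : Matrix (Fin n) (Fin n) ℝ) (ρ : ℝ),
        P.IsSymm ∧ P.PosDef ∧ Q.IsDiag ∧ Q.PosDef ∧ 0 ≤ ρ ∧ ρ < 1 ∧
        (-(fromBlocks ((-(ρ^2)) • P + Q) (0 : Matrix (Fin n) (Fin n) ℝ)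
            (0 : Matrix (Fin n) (Fin n) ℝ) (Wᵀ * P * W - Q))).PosSemidef) ↔
      (∃ Q : Matrix (Fin n) (Fin n) ℝ, Q.IsDiag ∧ Q.PosDef ∧
        (-(Wᵀ * Q * W - Q)).PosDef)) := by
  constructor
  · -- (i) ↔ (iii)
    constructor
    · rintro ⟨P, Q, ρ, hPs, hP, hQd, hQ, hρ0, hρ1, hblk⟩
      obtain ⟨h1, h2⟩ := psd_block_extract hblk
      have h1' : (ρ^2 • P - Wᵀ * Q * W).PosSemidef := by
        have e : -((-(ρ^2)) • P + Wᵀ * Q * W) = ρ^2 • P - Wᵀ * Q * W := by module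
        rwa [e] at h1
      have h2' : (Q - P).PosSemidef := by rwa [neg_sub] at h2
      refine ⟨Q, hQd, hQ, ?_⟩
      rw [neg_sub]
      have key : Q - Wᵀ * Q * W
          = ((Q - P) + (1 - ρ^2) • P) + (ρ^2 • P - Wᵀ * Q * W) := by module
      rw [key]
      exact (Matrix.PosDef.posSemidef_add h2' (pd_smul' hP (by nlinarith))).add_posSemidef h1'
    · rintro ⟨Q, hQd, hQ, hW⟩
      have hB : (Q - Wᵀ * Q * W).PosDef := by rwa [neg_sub] at hW
      obtain ⟨ε, hε0, hε2, hpsd⟩ := eps_lemma hQ hB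
      have hε1 : (0:ℝ) ≤ 1 - ε := by linarith
      refine ⟨Q, Q, Real.sqrt (1-ε), hQd.isSymm, hQ, hQd, hQ, Real.sqrt_nonneg _, ?_, ?_⟩
      · have h := Real.sqrt_lt_sqrt hε1 (show (1:ℝ) - ε < 1 by linarith)
        simpa using h
      · have hsq : Real.sqrt (1-ε)^2 = 1 - ε := Real.sq_sqrt hε1
        rw [fromBlocks_neg, neg_zero]
        have e1 : -((-(Real.sqrt (1-ε)^2)) • Q + Wᵀ * Q * W)
            = (Q - Wᵀ * Q * W) - ε • Q := by
          rw [hsq]; module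
        have e2 : -(Q - Q) = (0 : Matrix (Fin n) (Fin n) ℝ) := by simp
        rw [e1, e2]
        exact blockdiag_psd hpsd Matrix.PosSemidef.zero
  · -- (ii) ↔ (iii)
    constructor
    · rintro ⟨P, Q, ρ, hPs, hP, hQd, hQ, hρ0, hρ1, hblk⟩
      obtain ⟨h1, h2⟩ := psd_block_extract hblk
      have h1' : (ρ^2 • P - Q).PosSemidef := by
        have e : -((-(ρ^2)) • P + Q) = ρ^2 • P - Q := by module
        rwa [e] at h1
      have h2' : (Q - Wᵀ * P * W).PosSemidef := by rwa [neg_sub] at h2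
      refine ⟨Q, hQd, hQ, ?_⟩
      rw [neg_sub]
      have key : Q - Wᵀ * Q * W
          = ((1-ρ^2) • Q + Wᵀ * (ρ^2 • P - Q) * W) + ρ^2 • (Q - Wᵀ * P * W) := by
        rw [Matrix.mul_sub, Matrix.sub_mul, Matrix.mul_smul, Matrix.smul_mul]
        module
      rw [key]
      exact ((pd_smul' hQ (by nlinarith)).add_posSemidef
        (transpose_psd h1')).add_posSemidef (psd_smul' h2' (sq_nonneg ρ))
    · rintro ⟨Q, hQd, hQ, hW⟩
      have hB : (Q - Wᵀ * Q * W).PosDef := by rwa [neg_sub] at hW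
      obtain ⟨ε, hε0, hε2, hpsd⟩ := eps_lemma hQ hB
      have hεlt : (0:ℝ) < 1 - ε := by linarith
      refine ⟨(1-ε)⁻¹ • Q, Q, Real.sqrt (1-ε), (hQd.isSymm).smul _,
        pd_smul' hQ (inv_pos.mpr hεlt), hQd, hQ, Real.sqrt_nonneg _, ?_, ?_⟩
      · have h := Real.sqrt_lt_sqrt hεlt.le (show (1:ℝ) - ε < 1 by linarith)
        simpa using h
      · have hsq : Real.sqrt (1-ε)^2 = 1 - ε := Real.sq_sqrt hεlt.le
        have hne : (1:ℝ) - ε ≠ 0 := hεlt.ne'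
        rw [fromBlocks_neg, neg_zero]
        have e1 : -((-(Real.sqrt (1-ε)^2)) • ((1-ε)⁻¹ • Q) + Q)
            = (0 : Matrix (Fin n) (Fin n) ℝ) := by
          rw [hsq]
          match_scalars
          field_simp
          ring
        have e2 : -(Wᵀ * ((1-ε)⁻¹ • Q) * W - Q)
            = (1-ε)⁻¹ • ((Q - Wᵀ * Q * W) - ε • Q) := by
          rw [Matrix.mul_smul, Matrix.smul_mul]
          match_scalars <;> field_simp
        rw [e1, e2]
        exact blockdiag_psd Matrix.PosSemidef.zero
          (psd_smul' hpsd (inv_nonneg.mpr hεlt.le))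
end

section
/- CONE certificates imply MONE certificates with the same data. Let W ∈ ℝ^{n×n}, let P ∈ ℝ^{n×n} be symmetric positive definite, Q ∈ ℝ^{n×n} diagonal positive definite, c ∈ ℝ, and ρ ∈ ℝ. Then: (a) if [[−2(1−c)P + WᵀQW, P],[P, −Q]] ⪯ 0 then [[−2(1−c)P, P + WᵀQ],[P + QW, −2Q]] ⪯ 0; (b) if [[−2(1−c)P + Q, PW],[WᵀP, −Q]] ⪯ 0 then [[−2(1−c)P, PW + Q],[WᵀP + Q, −2Q]] ⪯ 0; (c) if [[−ρ²P + WᵀQW, 0],[0, P − Q]] ⪯ 0 then [[−ρ²P, WᵀQ],[QW, P − 2Q]] ⪯ 0; (d) if [[−ρ²P + Q, 0],[0, WᵀPW − Q]] ⪯ 0 then [[−ρ²P, Q],[Q, WᵀPW − 2Q]] ⪯ 0. -/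
open Matrix

private lemma psd_block_helper {n : ℕ} {Q : Matrix (Fin n) (Fin n) ℝ}
    (hQ : Q.PosSemidef) (A B : Matrix (Fin n) (Fin n) ℝ) :
    (fromBlocks (Aᵀ * Q * A) (Aᵀ * Q * B) (Bᵀ * Q * A) (Bᵀ * Q * B)).PosSemidef := by
  have h := hQ.conjTranspose_mul_mul_same (fromCols A B)
  rwa [conjTranspose_fromCols_eq_fromRows_conjTranspose, fromRows_mul,
    fromRows_mul_fromCols, conjTranspose_eq_transpose_of_trivial,
    conjTranspose_eq_transpose_of_trivial] at h

/-- CONE certificates imply MONE certificates with the same data, for the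
continuous-time firing-rate (a), continuous-time Hopfield (b),
discrete-time firing-rate (c) and discrete-time Hopfield (d) models. -/
theorem cone_implies_mone
    {n : ℕ} (W : Matrix (Fin n) (Fin n) ℝ)
    (P Q : Matrix (Fin n) (Fin n) ℝ)
    (hPs : P.IsSymm) (hP : P.PosDef) (hQd : Q.IsDiag) (hQ : Q.PosDef)
    (c ρ : ℝ) :
    -- (a) continuous-time firing-rate
    ((-(fromBlocks ((-(2 * (1 - c))) • P + Wᵀ * Q * W) P P (-Q))).PosSemidef →
      (-(fromBlocks ((-(2 * (1 - c))) • P) (P + Wᵀ * Q) (P + Q * W)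
        ((-2 : ℝ) • Q))).PosSemidef) ∧
    -- (b) continuous-time Hopfield
    ((-(fromBlocks ((-(2 * (1 - c))) • P + Q) (P * W) (Wᵀ * P) (-Q))).PosSemidef →
      (-(fromBlocks ((-(2 * (1 - c))) • P) (P * W + Q) (Wᵀ * P + Q)
        ((-2 : ℝ) • Q))).PosSemidef) ∧
    -- (c) discrete-time firing-rate
    ((-(fromBlocks ((-(ρ^2)) • P + Wᵀ * Q * W) (0 : Matrix (Fin n) (Fin n) ℝ)
        (0 : Matrix (Fin n) (Fin n) ℝ) (P - Q))).PosSemidef →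
      (-(fromBlocks ((-(ρ^2)) • P) (Wᵀ * Q) (Q * W) (P - (2 : ℝ) • Q))).PosSemidef) ∧
    -- (d) discrete-time Hopfield
    ((-(fromBlocks ((-(ρ^2)) • P + Q) (0 : Matrix (Fin n) (Fin n) ℝ)
        (0 : Matrix (Fin n) (Fin n) ℝ) (Wᵀ * P * W - Q))).PosSemidef →
      (-(fromBlocks ((-(ρ^2)) • P) Q Q (Wᵀ * P * W - (2 : ℝ) • Q))).PosSemidef) := by
  -- the two "slack" positive semidefinite matrices
  have hS1 : (fromBlocks (Wᵀ * Q * W) (-(Wᵀ * Q)) (-(Q * W)) Q).PosSemidef := by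
    have h := psd_block_helper hQ.posSemidef W (-1)
    simpa using h
  have hS2 : (fromBlocks Q (-Q) (-Q) Q).PosSemidef := by
    have h := psd_block_helper hQ.posSemidef 1 (-1)
    simpa using h
  refine ⟨fun h => ?_, fun h => ?_, fun h => ?_, fun h => ?_⟩
  · have key : -(fromBlocks ((-(2 * (1 - c))) • P) (P + Wᵀ * Q) (P + Q * W)
        ((-2 : ℝ) • Q)) =
        -(fromBlocks ((-(2 * (1 - c))) • P + Wᵀ * Q * W) P P (-Q)) +
        fromBlocks (Wᵀ * Q * W) (-(Wᵀ * Q)) (-(Q * W)) Q := by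
      rw [Matrix.fromBlocks_neg, Matrix.fromBlocks_neg, Matrix.fromBlocks_add]
      rw [Matrix.fromBlocks_inj]; refine ⟨by module, by module, by module, by module⟩
    rw [key]; exact h.add hS1
  · have key : -(fromBlocks ((-(2 * (1 - c))) • P) (P * W + Q) (Wᵀ * P + Q)
        ((-2 : ℝ) • Q)) =
        -(fromBlocks ((-(2 * (1 - c))) • P + Q) (P * W) (Wᵀ * P) (-Q)) +
        fromBlocks Q (-Q) (-Q) Q := by
      rw [Matrix.fromBlocks_neg, Matrix.fromBlocks_neg, Matrix.fromBlocks_add]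
      rw [Matrix.fromBlocks_inj]; refine ⟨by module, by module, by module, by module⟩
    rw [key]; exact h.add hS2
  · have key : -(fromBlocks ((-(ρ^2)) • P) (Wᵀ * Q) (Q * W) (P - (2 : ℝ) • Q)) =
        -(fromBlocks ((-(ρ^2)) • P + Wᵀ * Q * W) (0 : Matrix (Fin n) (Fin n) ℝ)
          (0 : Matrix (Fin n) (Fin n) ℝ) (P - Q)) +
        fromBlocks (Wᵀ * Q * W) (-(Wᵀ * Q)) (-(Q * W)) Q := by
      rw [Matrix.fromBlocks_neg, Matrix.fromBlocks_neg, Matrix.fromBlocks_add]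
      rw [Matrix.fromBlocks_inj]; refine ⟨by module, by module, by module, by module⟩
    rw [key]; exact h.add hS1
  · have key : -(fromBlocks ((-(ρ^2)) • P) Q Q (Wᵀ * P * W - (2 : ℝ) • Q)) =
        -(fromBlocks ((-(ρ^2)) • P + Q) (0 : Matrix (Fin n) (Fin n) ℝ)
          (0 : Matrix (Fin n) (Fin n) ℝ) (Wᵀ * P * W - Q)) +
        fromBlocks Q (-Q) (-Q) Q := by
      rw [Matrix.fromBlocks_neg, Matrix.fromBlocks_neg, Matrix.fromBlocks_add]
      rw [Matrix.fromBlocks_inj]; refine ⟨by module, by module, by module, by module⟩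
    rw [key]; exact h.add hS2
end

section
/- Discrete-time certificates imply continuous-time certificates with rate c = (1 − ρ²)/2. Let W ∈ ℝ^{n×n}, let P ∈ ℝ^{n×n} be symmetric positive definite, Q ∈ ℝ^{n×n} diagonal positive definite, and ρ ∈ [0,1), and set c = (1 − ρ²)/2. Then: (a) if the discrete-time firing-rate MONE certificate [[−ρ²P, WᵀQ],[QW, P − 2Q]] ⪯ 0 holds, then the continuous-time firing-rate MONE certificate [[−2(1−c)P, P + WᵀQ],[P + QW, −2Q]] ⪯ 0 holds with the same P and Q; (b) if the discrete-time firing-rate CONE certificate [[−ρ²P + WᵀQW, 0],[0, P − Q]] ⪯ 0 holds, then the continuous-time firing-rate CONE certificate [[−2(1−c)P + WᵀQW, P],[P, −Q]] ⪯ 0 holds with the same P and Q. -/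
open Matrix

lemma psd_fromBlocks_neg {n : ℕ} {P : Matrix (Fin n) (Fin n) ℝ} (hP : P.PosSemidef) :
    (fromBlocks P (-P) (-P) P).PosSemidef := by
  have h := hP.conjTranspose_mul_mul_same
    (fromCols (1 : Matrix (Fin n) (Fin n) ℝ) (-1 : Matrix (Fin n) (Fin n) ℝ))
  have e : (fromCols (1 : Matrix (Fin n) (Fin n) ℝ) (-1 : Matrix (Fin n) (Fin n) ℝ))ᴴ * P *
      fromCols (1 : Matrix (Fin n) (Fin n) ℝ) (-1 : Matrix (Fin n) (Fin n) ℝ) = fromBlocks P (-P) (-P) P := by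
    rw [conjTranspose_fromCols_eq_fromRows_conjTranspose, fromRows_mul,
      fromRows_mul_fromCols]
    simp
  rwa [e] at h

/-- Discrete-time firing-rate certificates imply the corresponding continuous-time
certificates with rate `c = (1 - ρ²)/2`, with the same `P`, `Q`. -/
theorem disc_implies_cts
    {n : ℕ} (W : Matrix (Fin n) (Fin n) ℝ)
    (P Q : Matrix (Fin n) (Fin n) ℝ)
    (hPs : P.IsSymm) (hP : P.PosDef) (hQd : Q.IsDiag) (hQ : Q.PosDef)
    (ρ c : ℝ) (hρ0 : 0 ≤ ρ) (hρ1 : ρ < 1) (hc : c = (1 - ρ^2) / 2) :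
    -- (a) MONE certificates
    ((-(fromBlocks ((-(ρ^2)) • P) (Wᵀ * Q) (Q * W) (P - (2 : ℝ) • Q))).PosSemidef →
      (-(fromBlocks ((-(2 * (1 - c))) • P) (P + Wᵀ * Q) (P + Q * W)
        ((-2 : ℝ) • Q))).PosSemidef) ∧
    -- (b) CONE certificates
    ((-(fromBlocks ((-(ρ^2)) • P + Wᵀ * Q * W) (0 : Matrix (Fin n) (Fin n) ℝ)
        (0 : Matrix (Fin n) (Fin n) ℝ) (P - Q))).PosSemidef →
      (-(fromBlocks ((-(2 * (1 - c))) • P + Wᵀ * Q * W) P P (-Q))).PosSemidef) := by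
  have hK := psd_fromBlocks_neg hP.posSemidef
  constructor
  · intro h
    have e : -(fromBlocks ((-(2 * (1 - c))) • P) (P + Wᵀ * Q) (P + Q * W)
        ((-2 : ℝ) • Q)) =
        -(fromBlocks ((-(ρ^2)) • P) (Wᵀ * Q) (Q * W) (P - (2 : ℝ) • Q))
          + fromBlocks P (-P) (-P) P := by
      subst hc
      ext (i | i) (j | j) <;>
        simp [fromBlocks, Matrix.neg_apply, Matrix.add_apply, Matrix.smul_apply,
          Matrix.sub_apply] <;> ring
    rw [e]
    exact h.add hK
  · intro h
    have e : -(fromBlocks ((-(2 * (1 - c))) • P + Wᵀ * Q * W) P P (-Q)) =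
        -(fromBlocks ((-(ρ^2)) • P + Wᵀ * Q * W) (0 : Matrix (Fin n) (Fin n) ℝ)
          (0 : Matrix (Fin n) (Fin n) ℝ) (P - Q))
          + fromBlocks P (-P) (-P) P := by
      subst hc
      ext (i | i) (j | j) <;>
        simp [fromBlocks, Matrix.neg_apply, Matrix.add_apply, Matrix.smul_apply,
          Matrix.sub_apply] <;> ring
    rw [e]
    exact h.add hK
end

section
/- Duality between firing-rate and Hopfield continuous-time certificates. Let W ∈ ℝ^{n×n}, P ∈ ℝ^{n×n} symmetric positive definite, Q ∈ ℝ^{n×n} diagonal positive definite, and c ∈ ℝ. Then: (a) the continuous-time firing-rate MONE certificate [[−2(1−c)P, P + WᵀQ],[P + QW, −2Q]] ⪯ 0 holds if and only if the continuous-time Hopfield MONE certificate for Wᵀ with parameters (P⁻¹, Q⁻¹), namely [[−2(1−c)P⁻¹, P⁻¹Wᵀ + Q⁻¹],[WP⁻¹ + Q⁻¹, −2Q⁻¹]] ⪯ 0, holds; (b) assuming additionally c < 1, the continuous-time firing-rate CONE certificate [[−2(1−c)P + WᵀQW, P],[P, −Q]] ⪯ 0 holds if and only if the continuous-time Hopfield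 CONE certificate for Wᵀ with parameters (P⁻¹, Q⁻¹), namely [[−2(1−c)P⁻¹ + Q⁻¹, P⁻¹Wᵀ],[WP⁻¹, −Q⁻¹]] ⪯ 0, holds. -/
open Matrix

private lemma conj_eq_trans {m : Type*} (A : Matrix m m ℝ) : Aᴴ = Aᵀ := by
  ext i j; simp [Matrix.conjTranspose_apply]

private lemma psd_congr_iff {m : Type*} [Fintype m] [DecidableEq m]
    {M U : Matrix m m ℝ} (hU : IsUnit U.det) :
    (Uᵀ * M * U).PosSemidef ↔ M.PosSemidef := by
  have hUt : IsUnit (Uᵀ).det := by rwa [Matrix.det_transpose]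
  constructor
  · intro h
    have h2 := h.conjTranspose_mul_mul_same (U⁻¹)
    have e : (U⁻¹)ᴴ * (Uᵀ * M * U) * U⁻¹ = M := by
      have h1 : (U⁻¹)ᴴ = (Uᵀ)⁻¹ := by
        rw [conj_eq_trans, Matrix.transpose_nonsing_inv]
      rw [h1]
      calc (Uᵀ)⁻¹ * (Uᵀ * M * U) * U⁻¹
          = ((Uᵀ)⁻¹ * Uᵀ) * M * (U * U⁻¹) := by noncomm_ring
        _ = M := by rw [Matrix.nonsing_inv_mul _ hUt, Matrix.mul_nonsing_inv _ hU,
            Matrix.one_mul, Matrix.mul_one]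
    rwa [e] at h2
  · intro h
    have h2 := h.conjTranspose_mul_mul_same U
    rwa [conj_eq_trans] at h2

set_option maxHeartbeats 1000000 in
/-- Duality between the continuous-time firing-rate and Hopfield certificates:
`W` satisfies a firing-rate certificate with data `(P, Q)` iff `Wᵀ` satisfies the
corresponding Hopfield certificate with data `(P⁻¹, Q⁻¹)`. -/
theorem frnn_hopfield_duality
    {n : ℕ} (W : Matrix (Fin n) (Fin n) ℝ)
    (P Q : Matrix (Fin n) (Fin n) ℝ)
    (hPs : P.IsSymm) (hP : P.PosDef) (hQd : Q.IsDiag) (hQ : Q.PosDef)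
    (c : ℝ) :
    -- (a) MONE case
    ((-(fromBlocks ((-(2 * (1 - c))) • P) (P + Wᵀ * Q) (P + Q * W)
        ((-2 : ℝ) • Q))).PosSemidef ↔
      (-(fromBlocks ((-(2 * (1 - c))) • P⁻¹) (P⁻¹ * Wᵀ + Q⁻¹) (W * P⁻¹ + Q⁻¹)
        ((-2 : ℝ) • Q⁻¹))).PosSemidef) ∧
    -- (b) CONE case, assuming c < 1
    (c < 1 →
      ((-(fromBlocks ((-(2 * (1 - c))) • P + Wᵀ * Q * W) P P (-Q))).PosSemidef ↔
        (-(fromBlocks ((-(2 * (1 - c))) • P⁻¹ + Q⁻¹) (P⁻¹ * Wᵀ) (W * P⁻¹)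
          (-Q⁻¹))).PosSemidef)) := by
  have hPdet : IsUnit P.det := hP.det_pos.ne'.isUnit
  have hQdet : IsUnit Q.det := hQ.det_pos.ne'.isUnit
  have hPinvdet : IsUnit P⁻¹.det := hP.inv.det_pos.ne'.isUnit
  have hQinvdet : IsUnit Q⁻¹.det := hQ.inv.det_pos.ne'.isUnit
  have hPPinv : P * P⁻¹ = 1 := Matrix.mul_nonsing_inv _ hPdet
  have hPinvP : P⁻¹ * P = 1 := Matrix.nonsing_inv_mul _ hPdet
  have hQQinv : Q * Q⁻¹ = 1 := Matrix.mul_nonsing_inv _ hQdet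
  have hQinvQ : Q⁻¹ * Q = 1 := Matrix.nonsing_inv_mul _ hQdet
  have hPh : Pᴴ = P := hP.isHermitian
  have hQh : Qᴴ = Q := hQ.isHermitian
  have hPt : Pᵀ = P := by rw [← conj_eq_trans]; exact hPh
  have hQt : Qᵀ = Q := by rw [← conj_eq_trans]; exact hQh
  have hPinvt : P⁻¹ᵀ = P⁻¹ := by rw [Matrix.transpose_nonsing_inv, hPt]
  have hQinvt : Q⁻¹ᵀ = Q⁻¹ := by rw [Matrix.transpose_nonsing_inv, hQt]
  have hPinvh : P⁻¹ᴴ = P⁻¹ := by rw [conj_eq_trans]; exact hPinvt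
  have hQinvh : Q⁻¹ᴴ = Q⁻¹ := by rw [conj_eq_trans]; exact hQinvt
  -- cancellation lemmas
  have cPl : ∀ X : Matrix (Fin n) (Fin n) ℝ, P⁻¹ * (P * X) = X := fun X => by
    rw [← Matrix.mul_assoc, hPinvP, Matrix.one_mul]
  have cPl' : ∀ X : Matrix (Fin n) (Fin n) ℝ, P * (P⁻¹ * X) = X := fun X => by
    rw [← Matrix.mul_assoc, hPPinv, Matrix.one_mul]
  have cQl : ∀ X : Matrix (Fin n) (Fin n) ℝ, Q⁻¹ * (Q * X) = X := fun X => by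
    rw [← Matrix.mul_assoc, hQinvQ, Matrix.one_mul]
  have cQl' : ∀ X : Matrix (Fin n) (Fin n) ℝ, Q * (Q⁻¹ * X) = X := fun X => by
    rw [← Matrix.mul_assoc, hQQinv, Matrix.one_mul]
  constructor
  · -- MONE
    set U : Matrix (Fin n ⊕ Fin n) (Fin n ⊕ Fin n) ℝ := fromBlocks P⁻¹ 0 0 Q⁻¹ with hU
    have hUdet : IsUnit U.det := by
      rw [hU, Matrix.det_fromBlocks_zero₂₁]
      exact hPinvdet.mul hQinvdet
    have hUt : Uᵀ = U := by
      rw [hU, Matrix.fromBlocks_transpose, hPinvt, hQinvt, Matrix.transpose_zero]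
    have key : Uᵀ * (-(fromBlocks ((-(2 * (1 - c))) • P) (P + Wᵀ * Q) (P + Q * W)
        ((-2 : ℝ) • Q))) * U
        = -(fromBlocks ((-(2 * (1 - c))) • P⁻¹) (P⁻¹ * Wᵀ + Q⁻¹) (W * P⁻¹ + Q⁻¹)
        ((-2 : ℝ) • Q⁻¹)) := by
      rw [hUt, hU, Matrix.mul_neg, Matrix.neg_mul, neg_inj,
        Matrix.fromBlocks_multiply, Matrix.fromBlocks_multiply]
      simp only [Matrix.zero_mul, Matrix.mul_zero, smul_zero, add_zero, zero_add,
        Matrix.mul_add, Matrix.add_mul, Matrix.mul_smul, Matrix.smul_mul,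
        Matrix.mul_assoc, cPl, cQl, hPPinv, hQQinv, Matrix.mul_one]
      rw [Matrix.fromBlocks_inj]
      exact ⟨rfl, add_comm _ _, add_comm _ _, rfl⟩
    rw [← key, psd_congr_iff hUdet]
  · -- CONE
    intro _
    haveI : Invertible Q := hQ.isUnit.invertible
    haveI : Invertible Q⁻¹ := hQ.inv.isUnit.invertible
    have hWh : Wᵀᴴ = W := by rw [conj_eq_trans, Matrix.transpose_transpose]
    have hFR : (-(fromBlocks ((-(2 * (1 - c))) • P + Wᵀ * Q * W) P P (-Q)))
        = fromBlocks (-((-(2 * (1 - c))) • P + Wᵀ * Q * W)) (-P) (-P)ᴴ Q := by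
      rw [Matrix.fromBlocks_neg, neg_neg, Matrix.conjTranspose_neg, hPh]
    have hHop : (-(fromBlocks ((-(2 * (1 - c))) • P⁻¹ + Q⁻¹) (P⁻¹ * Wᵀ) (W * P⁻¹)
        (-Q⁻¹)))
        = fromBlocks (-((-(2 * (1 - c))) • P⁻¹ + Q⁻¹)) (-(P⁻¹ * Wᵀ)) (-(P⁻¹ * Wᵀ))ᴴ Q⁻¹ := by
      rw [Matrix.fromBlocks_neg, neg_neg, Matrix.conjTranspose_neg,
        Matrix.conjTranspose_mul, hPinvh, hWh]
    rw [hFR, hHop, Matrix.PosDef.fromBlocks₂₂ _ _ hQ,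
      Matrix.PosDef.fromBlocks₂₂ _ _ hQ.inv,
      Matrix.nonsing_inv_nonsing_inv _ hQdet]
    -- relate the two Schur complements by congruence with P⁻¹
    have hkey : P⁻¹ᵀ * (-((-(2 * (1 - c))) • P + Wᵀ * Q * W) - -P * Q⁻¹ * (-P)ᴴ) * P⁻¹
        = -((-(2 * (1 - c))) • P⁻¹ + Q⁻¹) - -(P⁻¹ * Wᵀ) * Q * (-(P⁻¹ * Wᵀ))ᴴ := by
      simp only [hPinvt, Matrix.conjTranspose_neg, Matrix.conjTranspose_mul,
        hPh, hPinvh, hWh]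
      simp only [Matrix.neg_mul, Matrix.mul_neg, neg_neg, neg_add, sub_eq_add_neg,
        Matrix.mul_add, Matrix.add_mul, Matrix.mul_smul, Matrix.smul_mul,
        Matrix.mul_assoc, cPl, cPl', hPPinv, Matrix.mul_one]
      abel
    rw [← hkey, psd_congr_iff hPinvdet]
end

section
/- The continuous-time firing-rate MONE certificate implies Lyapunov diagonal stability of W − I. Let W ∈ ℝ^{n×n}, let P ∈ ℝ^{n×n} be symmetric positive definite, Q ∈ ℝ^{n×n} diagonal positive definite, and c > 0. If the block matrix [[−2(1−c)P, P + WᵀQ],[P + QW, −2Q]] is negative semidefinite, then WᵀQ + QW ⪯ 2Q − 2cP; in particular 2Q − WᵀQ − QW is positive definite, i.e., Q(W − Iₙ) + (W − Iₙ)ᵀQ ≺ 0, so W − Iₙ is Lyapunov diagonally stable with diagonal Lyapunov matrix Q. -/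
open Matrix

/-- The continuous-time firing-rate MONE certificate implies Lyapunov diagonal
stability of `W - I` with diagonal Lyapunov matrix `Q`. -/
theorem mone_certificate_implies_lds
    {n : ℕ} (W : Matrix (Fin n) (Fin n) ℝ)
    (P Q : Matrix (Fin n) (Fin n) ℝ)
    (hPs : P.IsSymm) (hP : P.PosDef) (hQd : Q.IsDiag) (hQ : Q.PosDef)
    (c : ℝ) (hc : 0 < c)
    (hLMI : (-(fromBlocks ((-(2 * (1 - c))) • P) (P + Wᵀ * Q) (P + Q * W)
        ((-2 : ℝ) • Q))).PosSemidef) :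
    -- WᵀQ + QW ⪯ 2Q − 2cP
    ((2 : ℝ) • Q - (2 * c) • P - (Wᵀ * Q + Q * W)).PosSemidef ∧
    -- 2Q − WᵀQ − QW ≻ 0
    ((2 : ℝ) • Q - Wᵀ * Q - Q * W).PosDef ∧
    -- Q(W − I) + (W − I)ᵀQ ≺ 0
    (-(Q * (W - 1) + (W - 1)ᵀ * Q)).PosDef := by
  have hQs : Q.IsSymm := hQd.isSymm
  have hherm : ((2 : ℝ) • Q - (2 * c) • P - (Wᵀ * Q + Q * W)).IsHermitian := by
    unfold Matrix.IsHermitian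
    rw [conjTranspose_eq_transpose_of_trivial]
    simp [Matrix.transpose_add, Matrix.transpose_sub, Matrix.transpose_smul,
      Matrix.transpose_mul, hPs.eq, hQs.eq]
    abel
  have h1 : ((2 : ℝ) • Q - (2 * c) • P - (Wᵀ * Q + Q * W)).PosSemidef := by
    refine .of_dotProduct_mulVec_nonneg hherm fun x => ?_
    have h := hLMI.dotProduct_mulVec_nonneg (Sum.elim x x)
    simp only [star_trivial, neg_mulVec, fromBlocks_mulVec, Sum.elim_comp_inl,
      Sum.elim_comp_inr] at h ⊢
    rw [show (-(Sum.elim (((-(2 * (1 - c))) • P) *ᵥ x + (P + Wᵀ * Q) *ᵥ x)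
          (((P + Q * W)) *ᵥ x + (((-2 : ℝ)) • Q) *ᵥ x)))
        = Sum.elim (-((((-(2 * (1 - c))) • P) *ᵥ x + (P + Wᵀ * Q) *ᵥ x)))
          (-(((P + Q * W)) *ᵥ x + (((-2 : ℝ)) • Q) *ᵥ x)) by
      ext (i | i) <;> simp] at h
    rw [sumElim_dotProduct_sumElim] at h
    simp only [dotProduct_neg, dotProduct_add, add_mulVec, sub_mulVec,
      smul_mulVec, dotProduct_smul, dotProduct_sub, smul_eq_mul] at h ⊢
    linarith
  have h2cP : ((2 * c) • P).PosDef := by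
    refine .of_dotProduct_mulVec_pos ?_ fun x hx => ?_
    · unfold Matrix.IsHermitian
      rw [conjTranspose_eq_transpose_of_trivial, transpose_smul, hPs.eq]
    · simpa [smul_mulVec, dotProduct_smul, smul_eq_mul] using
        mul_pos (by linarith : (0:ℝ) < 2 * c) (hP.dotProduct_mulVec_pos hx)
  have h2 : ((2 : ℝ) • Q - Wᵀ * Q - Q * W).PosDef := by
    have := Matrix.PosDef.posSemidef_add h1 h2cP
    have heq : (2 : ℝ) • Q - (2 * c) • P - (Wᵀ * Q + Q * W) + (2 * c) • P
        = (2 : ℝ) • Q - Wᵀ * Q - Q * W := by abel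
    rwa [heq] at this
  refine ⟨h1, h2, ?_⟩
  have heq : -(Q * (W - 1) + (W - 1)ᵀ * Q) = (2 : ℝ) • Q - Wᵀ * Q - Q * W := by
    rw [Matrix.transpose_sub, Matrix.transpose_one]
    rw [Matrix.mul_sub, Matrix.sub_mul, Matrix.mul_one, Matrix.one_mul]
    rw [two_smul]
    abel
  rwa [heq]
end

section
/- Lyapunov diagonal stability of W − I does not imply contraction in any fixed quadratic norm: for the skew-symmetric matrix W = [[0, 4],[−4, 0]] ∈ ℝ^{2×2}, (a) W − I₂ is Lyapunov diagonally stable (indeed W + Wᵀ = 0 ≺ 2I₂, so Q = I₂ works); and (b) there exists no symmetric positive definite P ∈ ℝ^{2×2} such that 2P − PDW − WᵀDP is positive definite for every diagonal matrix D with 0 ⪯ D ⪯ I₂. In fact, for every symmetric positive definite P, at least one of the two matrices 2P − PD₁W − WᵀD₁P and 2P − PD₂W − WᵀD₂P fails to be positive definite, where D₁ = diag(1,0) and D₂ = diag(0,1). -/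
open Matrix

private lemma psd_diag2 (a b : ℝ) (ha : 0 ≤ a) (hb : 0 ≤ b) :
    (Matrix.diagonal ![a, b]).PosSemidef :=
  Matrix.PosSemidef.diagonal (by intro i; fin_cases i <;> simpa)


/-- Lyapunov diagonal stability of `W - I` does not imply contraction in any fixed
quadratic norm, witnessed by the skew-symmetric matrix `W = [[0,4],[-4,0]]`. -/
theorem lds_does_not_imply_contraction :
    -- (a) W − I₂ is Lyapunov diagonally stable (Q = I₂ works)
    (∃ Q : Matrix (Fin 2) (Fin 2) ℝ, Q.IsDiag ∧ Q.PosDef ∧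
      (-(Q * ((!![0, 4; -4, 0] : Matrix (Fin 2) (Fin 2) ℝ) - 1) +
         ((!![0, 4; -4, 0] : Matrix (Fin 2) (Fin 2) ℝ) - 1)ᵀ * Q)).PosDef) ∧
    -- (b) no symmetric positive definite P works for all diagonal 0 ⪯ D ⪯ I₂
    (¬ ∃ P : Matrix (Fin 2) (Fin 2) ℝ, P.IsSymm ∧ P.PosDef ∧
      ∀ D : Matrix (Fin 2) (Fin 2) ℝ, D.IsDiag → D.PosSemidef →
        ((1 : Matrix (Fin 2) (Fin 2) ℝ) - D).PosSemidef →
        ((2 : ℝ) • P - P * D * (!![0, 4; -4, 0] : Matrix (Fin 2) (Fin 2) ℝ) -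
          (!![0, 4; -4, 0] : Matrix (Fin 2) (Fin 2) ℝ)ᵀ * D * P).PosDef) ∧
    -- in fact, one of the two vertices D₁ = diag(1,0), D₂ = diag(0,1) always fails
    (∀ P : Matrix (Fin 2) (Fin 2) ℝ, P.IsSymm → P.PosDef →
      ¬ (((2 : ℝ) • P - P * (Matrix.diagonal ![1, 0]) * (!![0, 4; -4, 0] : Matrix (Fin 2) (Fin 2) ℝ) -
            (!![0, 4; -4, 0] : Matrix (Fin 2) (Fin 2) ℝ)ᵀ * (Matrix.diagonal ![1, 0]) * P).PosDef ∧
         ((2 : ℝ) • P - P * (Matrix.diagonal ![0, 1]) * (!![0, 4; -4, 0] : Matrix (Fin 2) (Fin 2) ℝ) -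
            (!![0, 4; -4, 0] : Matrix (Fin 2) (Fin 2) ℝ)ᵀ * (Matrix.diagonal ![0, 1]) * P).PosDef)) := by
  have key : ∀ P : Matrix (Fin 2) (Fin 2) ℝ, P.IsSymm → P.PosDef →
      ¬ (((2 : ℝ) • P - P * (Matrix.diagonal ![1, 0]) * (!![0, 4; -4, 0] : Matrix (Fin 2) (Fin 2) ℝ) -
            (!![0, 4; -4, 0] : Matrix (Fin 2) (Fin 2) ℝ)ᵀ * (Matrix.diagonal ![1, 0]) * P).PosDef ∧
         ((2 : ℝ) • P - P * (Matrix.diagonal ![0, 1]) * (!![0, 4; -4, 0] : Matrix (Fin 2) (Fin 2) ℝ) -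
            (!![0, 4; -4, 0] : Matrix (Fin 2) (Fin 2) ℝ)ᵀ * (Matrix.diagonal ![0, 1]) * P).PosDef) := by
    intro P hs hP ⟨h1, h2⟩
    have hq : P 1 0 = P 0 1 := by
      have := congrFun (congrFun hs 0) 1
      simpa [Matrix.transpose_apply] using this
    have hT : (!![0, 4; -4, 0] : Matrix (Fin 2) (Fin 2) ℝ)ᵀ = !![0, -4; 4, 0] := by
      ext i j; fin_cases i <;> fin_cases j <;> simp
    rw [hT] at h1 h2
    have hd1 := h1.det_pos
    have hd2 := h2.det_pos
    rw [Matrix.det_fin_two] at hd1 hd2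
    simp [Matrix.mul_apply, Matrix.vecMul, dotProduct, Fin.sum_univ_two, Matrix.diagonal_apply, hq] at hd1 hd2
    nlinarith [sq_nonneg (P 0 0 - P 1 1), sq_nonneg (P 0 0 + P 1 1), sq_nonneg (P 0 1)]
  refine ⟨⟨1, Matrix.isDiag_one, Matrix.PosDef.one, ?_⟩, ?_, key⟩
  · have hT : ((!![0, 4; -4, 0] : Matrix (Fin 2) (Fin 2) ℝ) - 1)ᵀ = !![-1, -4; 4, -1] := by
      ext i j; fin_cases i <;> fin_cases j <;> simp
    rw [hT]
    have : (-((1 : Matrix (Fin 2) (Fin 2) ℝ) * ((!![0, 4; -4, 0] : Matrix (Fin 2) (Fin 2) ℝ) - 1) +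
         (!![-1, -4; 4, -1] : Matrix (Fin 2) (Fin 2) ℝ) * 1)) = Matrix.diagonal ![2, 2] := by
      ext i j
      fin_cases i <;> fin_cases j <;>
        norm_num [Matrix.diagonal_apply, Matrix.mul_apply, Fin.sum_univ_two]
    rw [this]
    exact Matrix.PosDef.diagonal (by intro i; fin_cases i <;> norm_num)
  · rintro ⟨P, hs, hP, hall⟩
    refine key P hs hP ⟨?_, ?_⟩
    · refine hall _ (Matrix.isDiag_diagonal _) (psd_diag2 1 0 (by norm_num) (by norm_num)) ?_
      have : (1 : Matrix (Fin 2) (Fin 2) ℝ) - Matrix.diagonal ![1, 0] = Matrix.diagonal ![0, 1] := by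
        ext i j; fin_cases i <;> fin_cases j <;> simp [Matrix.diagonal_apply]
      rw [this]
      exact psd_diag2 0 1 (by norm_num) (by norm_num)
    · refine hall _ (Matrix.isDiag_diagonal _) (psd_diag2 0 1 (by norm_num) (by norm_num)) ?_
      have : (1 : Matrix (Fin 2) (Fin 2) ℝ) - Matrix.diagonal ![0, 1] = Matrix.diagonal ![1, 0] := by
        ext i j; fin_cases i <;> fin_cases j <;> simp [Matrix.diagonal_apply]
      rw [this]
      exact psd_diag2 1 0 (by norm_num) (by norm_num)
end

section
/- Log-optimal certificate for symmetric weights with spectral abscissa in (0,1). Let W ∈ ℝ^{n×n} be symmetric and let α ∈ (0,1) be its largest eigenvalue (so W ⪯ αIₙ and α is an eigenvalue of W). Then there exists a symmetric positive definite P ∈ ℝ^{n×n} such that W = P^{1/2} − (4α)⁻¹P, where P^{1/2} denotes the positive semidefinite square root of P; and for any such P, the continuous-time firing-rate MONE certificate holds with data (P, Q, c) where Q = 4αIₙ and c = 1 − α, i.e., the block matrix [[−2(1−c)P, P + WᵀQ],[P + QW, −2Q]] is negative semidefinite. -/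
open Matrix

noncomputable def Matrix.PosSemidef.sqrt {n : Type*} [Fintype n] [DecidableEq n] {𝕜 : Type*}
    [RCLike 𝕜] [PartialOrder 𝕜] [StarOrderedRing 𝕜] {A : Matrix n n 𝕜} (hA : A.PosSemidef) : Matrix n n 𝕜 :=
  hA.isHermitian.eigenvectorUnitary.1 *
    diagonal (((↑) : ℝ → 𝕜) ∘ Real.sqrt ∘ hA.isHermitian.eigenvalues) *
    (star hA.isHermitian.eigenvectorUnitary : Matrix n n 𝕜)

open scoped MatrixOrder in
lemma aux_sqrt_eq_cfc {n : ℕ} {A : Matrix (Fin n) (Fin n) ℝ} (hA : A.PosSemidef) :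
    hA.sqrt = CFC.sqrt A := by
  rw [CFC.sqrt_eq_real_sqrt A hA.nonneg, cfcₙ_eq_cfc, hA.1.cfc_eq]
  simp [IsHermitian.cfc, Matrix.PosSemidef.sqrt]

open scoped MatrixOrder in
lemma Matrix.PosSemidef.posSemidef_sqrt {n : ℕ} {A : Matrix (Fin n) (Fin n) ℝ}
    (hA : A.PosSemidef) : hA.sqrt.PosSemidef := by
  rw [aux_sqrt_eq_cfc hA]; exact (CFC.sqrt_nonneg A).posSemidef

open scoped MatrixOrder in
lemma Matrix.PosSemidef.sqrt_mul_self {n : ℕ} {A : Matrix (Fin n) (Fin n) ℝ}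
    (hA : A.PosSemidef) : hA.sqrt * hA.sqrt = A := by
  rw [aux_sqrt_eq_cfc hA]; exact CFC.sqrt_mul_sqrt_self A hA.nonneg

open scoped MatrixOrder in
lemma Matrix.PosSemidef.eq_sqrt_of_sq_eq {n : ℕ} {A B : Matrix (Fin n) (Fin n) ℝ}
    (hB : B.PosSemidef) (hA : A.PosSemidef) (h : B ^ 2 = A) : B = hA.sqrt := by
  rw [aux_sqrt_eq_cfc hA]; exact (CFC.sqrt_unique (by rw [← sq]; exact h) hB.nonneg).symm

lemma aux_smul_posSemidef {n : ℕ} {c : ℝ} (hc : 0 ≤ c) {A : Matrix (Fin n) (Fin n) ℝ}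
    (hA : A.PosSemidef) : (c • A).PosSemidef := by
  refine posSemidef_iff_dotProduct_mulVec.mpr ⟨?_, fun x => ?_⟩
  · have h := hA.1
    show (c • A)ᴴ = c • A
    rw [conjTranspose_smul, h]; simp
  · rw [smul_mulVec, dotProduct_smul, smul_eq_mul]
    exact mul_nonneg hc (hA.dotProduct_mulVec_nonneg x)

lemma aux_smul_posDef {n : ℕ} {c : ℝ} (hc : 0 < c) {A : Matrix (Fin n) (Fin n) ℝ}
    (hA : A.PosDef) : (c • A).PosDef := by
  refine posDef_iff_dotProduct_mulVec.mpr ⟨?_, fun x hx => ?_⟩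
  · have h := hA.1
    show (c • A)ᴴ = c • A
    rw [conjTranspose_smul, h]; simp
  · rw [smul_mulVec, dotProduct_smul, smul_eq_mul]
    exact mul_pos hc (hA.dotProduct_mulVec_pos hx)

lemma aux_mul_self_posDef {n : ℕ} {S : Matrix (Fin n) (Fin n) ℝ} (hS : S.PosDef) :
    (S * S).PosDef := by
  have hH : Sᴴ = S := hS.1
  have hT : Sᵀ = S := by simpa using hH
  refine posDef_iff_dotProduct_mulVec.mpr ⟨?_, fun x hx => ?_⟩
  · show (S * S)ᴴ = S * S
    rw [conjTranspose_mul, hH]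
  · have hSx : S *ᵥ x ≠ 0 := by
      intro h0
      have h1 := hS.dotProduct_mulVec_pos hx
      rw [h0] at h1; simp at h1
    have key : dotProduct (star x) ((S * S) *ᵥ x) = dotProduct (S *ᵥ x) (S *ᵥ x) := by
      rw [← mulVec_mulVec, dotProduct_mulVec]
      simp only [star_trivial]
      rw [← mulVec_transpose, hT]
    rw [key]
    have hnn := dotProduct_star_self_nonneg (S *ᵥ x)
    simp only [star_trivial] at hnn
    rcases hnn.lt_or_eq with h1 | h1
    · exact h1
    · exact absurd (dotProduct_star_self_eq_zero.mp (by simpa using h1.symm)) hSx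

/-- Log-optimal firing-rate MONE certificate for symmetric weights with spectral
abscissa `α ∈ (0,1)`: there exists `P ≻ 0` with `W = P^{1/2} − (4α)⁻¹P`, and any
such `P`, together with `Q = 4αIₙ` and `c = 1 − α`, satisfies the certificate. -/
theorem symm_spectral_abscissa_certificate
    {n : ℕ} (W : Matrix (Fin n) (Fin n) ℝ) (α : ℝ)
    (hsymm : W.IsSymm) (hα0 : 0 < α) (hα1 : α < 1)
    (hub : (α • (1 : Matrix (Fin n) (Fin n) ℝ) - W).PosSemidef)
    (heig : ∃ v : Fin n → ℝ, v ≠ 0 ∧ W *ᵥ v = α • v) :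
    (∃ (P : Matrix (Fin n) (Fin n) ℝ) (hP : P.PosDef),
        W = hP.posSemidef.sqrt - (4 * α)⁻¹ • P) ∧
    (∀ (P : Matrix (Fin n) (Fin n) ℝ) (hP : P.PosDef),
      W = hP.posSemidef.sqrt - (4 * α)⁻¹ • P →
      (-(fromBlocks ((-(2 * (1 - (1 - α)))) • P)
          (P + Wᵀ * ((4 * α) • (1 : Matrix (Fin n) (Fin n) ℝ)))
          (P + ((4 * α) • (1 : Matrix (Fin n) (Fin n) ℝ)) * W)
          ((-2 : ℝ) • ((4 * α) • (1 : Matrix (Fin n) (Fin n) ℝ))))).PosSemidef) := by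
  constructor
  · -- existence of `P`
    set R := hub.sqrt with hRdef
    have hR : R.PosSemidef := hub.posSemidef_sqrt
    have hRR : R * R = α • (1 : Matrix (Fin n) (Fin n) ℝ) - W := hub.sqrt_mul_self
    set S : Matrix (Fin n) (Fin n) ℝ :=
      (2 * α) • (1 : Matrix (Fin n) (Fin n) ℝ) + (2 * Real.sqrt α) • R with hSdef
    have hS : S.PosDef :=
      (aux_smul_posDef (by linarith) Matrix.PosDef.one).add_posSemidef
        (aux_smul_posSemidef (by positivity) hR)
    have hP : (S * S).PosDef := aux_mul_self_posDef hS
    refine ⟨S * S, hP, ?_⟩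
    have hne : (4 : ℝ) * α ≠ 0 := by positivity
    have hsqrt : S = hP.posSemidef.sqrt :=
      hS.posSemidef.eq_sqrt_of_sq_eq hP.posSemidef (sq S)
    rw [← hsqrt]
    have hexp : S * S = (4 * (α * α)) • (1 : Matrix (Fin n) (Fin n) ℝ)
        + (8 * (α * Real.sqrt α)) • R + (4 * α) • (R * R) := by
      rw [hSdef]
      simp only [add_mul, mul_add, smul_mul_assoc, Matrix.mul_smul, one_mul, mul_one, smul_smul]
      have hα : Real.sqrt α * Real.sqrt α = α := Real.mul_self_sqrt hα0.le
      rw [show (2 * Real.sqrt α) * (2 * Real.sqrt α) = 4 * α by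
        rw [mul_mul_mul_comm, hα]; norm_num]
      module
    rw [hexp, hRR]
    rw [smul_add, smul_add, smul_smul, smul_smul, smul_smul,
      show (4 * α)⁻¹ * (4 * (α * α)) = α by
        rw [show (4:ℝ) * (α * α) = (4 * α) * α by ring, ← mul_assoc, inv_mul_cancel₀ hne, one_mul],
      show (4 * α)⁻¹ * (8 * (α * Real.sqrt α)) = 2 * Real.sqrt α by
        rw [show (8:ℝ) * (α * Real.sqrt α) = (4 * α) * (2 * Real.sqrt α) by ring,
          ← mul_assoc, inv_mul_cancel₀ hne, one_mul],
      inv_mul_cancel₀ hne]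
    rw [hSdef]
    simp only [one_smul, smul_sub]
    module
  · -- the certificate holds for any such `P`
    intro P hP hWP
    have hne : (4 : ℝ) * α ≠ 0 := by positivity
    set S := hP.posSemidef.sqrt with hSdef
    have hSpsd : S.PosSemidef := hP.posSemidef.posSemidef_sqrt
    have hSH : Sᴴ = S := hSpsd.1
    have hSS : S * S = P := hP.posSemidef.sqrt_mul_self
    have hWT : Wᵀ = W := hsymm
    have hkey : P + (4 * α) • W = (4 * α) • S := by
      rw [hWP, smul_sub, smul_smul, mul_inv_cancel₀ hne, one_smul]
      abel
    set a : ℝ := Real.sqrt (2 * α) with hadef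
    set b : ℝ := Real.sqrt (8 * α) with hbdef
    have ha2 : a * a = 2 * α := Real.mul_self_sqrt (by positivity)
    have hb2 : b * b = 8 * α := Real.mul_self_sqrt (by positivity)
    have hab : a * b = 4 * α := by
      rw [hadef, hbdef, ← Real.sqrt_mul (by positivity),
        show (2 * α) * (8 * α) = (4 * α) ^ 2 by ring, Real.sqrt_sq (by positivity)]
    set N : Matrix (Fin n) (Fin n ⊕ Fin n) ℝ :=
      fromCols (a • S) ((-b) • (1 : Matrix (Fin n) (Fin n) ℝ)) with hNdef
    have hmain : -(fromBlocks ((-(2 * (1 - (1 - α)))) • P)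
            (P + Wᵀ * ((4 * α) • (1 : Matrix (Fin n) (Fin n) ℝ)))
            (P + ((4 * α) • (1 : Matrix (Fin n) (Fin n) ℝ)) * W)
            ((-2 : ℝ) • ((4 * α) • (1 : Matrix (Fin n) (Fin n) ℝ)))) = Nᴴ * N := by
      rw [hNdef, conjTranspose_fromCols_eq_fromRows_conjTranspose,
        fromRows_mul_fromCols]
      have hB : P + Wᵀ * ((4 * α) • (1 : Matrix (Fin n) (Fin n) ℝ)) = (4 * α) • S := by
        rw [hWT, Matrix.mul_smul, mul_one, ← hkey]
      have hC : P + ((4 * α) • (1 : Matrix (Fin n) (Fin n) ℝ)) * W = (4 * α) • S := by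
        rw [Matrix.smul_mul, one_mul, ← hkey]
      have e1 : a • S * (a • S) = (2 * α) • P := by
        rw [smul_mul_assoc, Matrix.mul_smul, smul_smul, ha2, hSS]
      have e2 : a • S * ((-b) • (1 : Matrix (Fin n) (Fin n) ℝ)) = -((4 * α) • S) := by
        rw [Matrix.mul_smul, smul_mul_assoc, mul_one, smul_smul, ← neg_smul]
        congr 1; rw [← hab]; ring
      have e3 : ((-b) • (1 : Matrix (Fin n) (Fin n) ℝ)) * (a • S) = -((4 * α) • S) := by
        rw [Matrix.mul_smul, smul_mul_assoc, one_mul, smul_smul, ← neg_smul]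
        congr 1; rw [← hab]; ring
      have e4 : ((-b) • (1 : Matrix (Fin n) (Fin n) ℝ)) * ((-b) • (1 : Matrix (Fin n) (Fin n) ℝ))
          = (8 * α) • (1 : Matrix (Fin n) (Fin n) ℝ) := by
        rw [Matrix.mul_smul, smul_mul_assoc, mul_one, smul_smul, neg_mul_neg, hb2]
      have l1 : -((-(2 * (1 - (1 - α)))) • P) = (2 * α) • P := by
        rw [← neg_smul]; congr 1; ring
      have l4 : -((-2 : ℝ) • ((4 * α) • (1 : Matrix (Fin n) (Fin n) ℝ)))
          = (8 * α) • (1 : Matrix (Fin n) (Fin n) ℝ) := by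
        rw [smul_smul, ← neg_smul]; congr 1; ring
      rw [hB, hC]
      rw [show (a • S)ᴴ = a • S by rw [conjTranspose_smul, hSH]; simp,
        show ((-b) • (1 : Matrix (Fin n) (Fin n) ℝ))ᴴ = (-b) • 1 by simp]
      rw [Matrix.fromBlocks_neg, e1, e2, e3, e4, l1, l4]
    rw [hmain]
    exact posSemidef_conjTranspose_mul_self N
end

section
/- Necessity of subsystem certificates in interconnections of firing-rate networks. Let ι be a finite index type, and for each i ∈ ι let W_i ∈ ℝ^{n_i×n_i}, B_i ∈ ℝ^{n_i×m_i}, C_i ∈ ℝ^{k_i×n_i}. Let W, B, C be the block-diagonal matrices with diagonal blocks W_i, B_i, C_i respectively (W of size n×n, B of size n×m, C of size k×n, where n = Σn_i, m = Σm_i, k = Σk_i), and let Δ ∈ ℝ^{m×k} be arbitrary, with Δ_{ii} ∈ ℝ^{m_i×k_i} denoting its (i,i) block. Suppose the matrix W_net = W + BΔC satisfies the continuous-time firing-rate MONE certificate with data (P, Q, c), where P ∈ ℝ^{n×n} is symmetric positive definite and Q ∈ ℝ^{n×n} is diagonal positive definite, i.e., [[−2(1−c)P, P + W_netᵀQ],[P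 + QW_net, −2Q]] ⪯ 0. Then for every i ∈ ι, the matrix W_i + B_iΔ_{ii}C_i satisfies the same certificate with data (P_{ii}, Q_i, c), where P_{ii} is the i-th diagonal block (principal submatrix) of P (which is symmetric positive definite) and Q_i is the i-th diagonal block of Q (which is diagonal positive definite); that is, [[−2(1−c)P_{ii}, P_{ii} + (W_i + B_iΔ_{ii}C_i)ᵀQ_i],[P_{ii} + Q_i(W_i + B_iΔ_{ii}C_i), −2Q_i]] ⪯ 0. -/
open Matrix

lemma posDef_submatrix_inj {n m : Type*} [Fintype n] [Fintype m] [DecidableEq n] [DecidableEq m]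
    {M : Matrix n n ℝ} (hM : M.PosDef) (e : m → n) (he : Function.Injective e) :
    (M.submatrix e e).PosDef := by
  refine posDef_iff_dotProduct_mulVec.mpr ⟨hM.1.submatrix e, ?_⟩
  intro x hx
  set y : n → ℝ := Function.extend e x (0 : n → ℝ) with hy
  have hye : ∀ a, y (e a) = x a := fun a => he.extend_apply x (0 : n → ℝ) a
  have hy0 : ∀ s, (¬ ∃ a, e a = s) → y s = 0 := fun s hs => by
    simp only [hy]; rw [Function.extend_apply' x (0 : n → ℝ) s hs]; rfl
  have hyne : y ≠ 0 := by
    intro h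
    apply hx
    funext a
    have := congrFun h (e a)
    simpa [hye a] using this
  have hinner : ∀ s : n, ∑ b : m, M s (e b) * y (e b) = ∑ t : n, M s t * y t := by
    intro s
    rw [← Finset.sum_image (f := fun t => M s t * y t) (g := e) (fun a _ b _ h => he h)]
    refine Finset.sum_subset (Finset.subset_univ _) fun t _ ht => ?_
    have : ¬ ∃ a, e a = t := by
      intro ⟨a, ha⟩; exact ht (Finset.mem_image.2 ⟨a, Finset.mem_univ a, ha⟩)
    simp [hy0 t this]
  have key : y ⬝ᵥ M *ᵥ y = x ⬝ᵥ (M.submatrix e e) *ᵥ x := by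
    simp only [dotProduct, mulVec, dotProduct, submatrix_apply, ← hye, hinner]
    rw [← Finset.sum_image (f := fun s => y s * ∑ t, M s t * y t)
      (g := e) (fun a _ b _ h => he h)]
    refine (Finset.sum_subset (Finset.subset_univ _) fun s _ hs => ?_).symm
    have : ¬ ∃ a, e a = s := by
      intro ⟨a, ha⟩; exact hs (Finset.mem_image.2 ⟨a, Finset.mem_univ a, ha⟩)
    simp [hy0 s this]
  have h2 := hM.dotProduct_mulVec_pos hyne
  simp only [star_trivial] at h2 ⊢
  rw [key] at h2
  exact h2

lemma bd_mul_mul {ι : Type*} [Fintype ι] [DecidableEq ι]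
    (nn mm kk : ι → ℕ)
    (B : ∀ i, Matrix (Fin (nn i)) (Fin (mm i)) ℝ)
    (C : ∀ i, Matrix (Fin (kk i)) (Fin (nn i)) ℝ)
    (Δ : Matrix (Σ i, Fin (mm i)) (Σ i, Fin (kk i)) ℝ) (i : ι) :
    (Matrix.blockDiagonal' B * Δ * Matrix.blockDiagonal' C).submatrix
      (Sigma.mk i) (Sigma.mk i) =
    B i * Δ.submatrix (Sigma.mk i) (Sigma.mk i) * C i := by
  ext a b
  simp only [mul_apply, blockDiagonal'_apply, submatrix_apply, Finset.sum_mul, Finset.mul_sum,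
    dite_mul, mul_dite, zero_mul, mul_zero, Finset.sum_dite_irrel, Finset.sum_const_zero]
  rw [← Finset.univ_sigma_univ, Finset.sum_sigma]
  rw [Fintype.sum_eq_single i]
  · simp only [dif_pos rfl]
    refine Finset.sum_congr rfl fun x _ => ?_
    rw [dif_pos trivial, ← Finset.univ_sigma_univ, Finset.sum_sigma]
    rw [Fintype.sum_eq_single i]
    · simp
    · intro j hj
      exact Finset.sum_eq_zero fun _ _ => dif_neg fun h => hj h.symm
  · intro j hj
    simp [hj]

lemma fromBlocks_submatrix_map {l m n o l' m' n' o' α : Type*}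
    (A : Matrix n l α) (B : Matrix n m α) (C : Matrix o l α) (D : Matrix o m α)
    (e : n' → n) (f : o' → o) (g : l' → l) (h : m' → m) :
    (fromBlocks A B C D).submatrix (Sum.map e f) (Sum.map g h) =
    fromBlocks (A.submatrix e g) (B.submatrix e h) (C.submatrix f g) (D.submatrix f h) := by
  ext (x | x) (y | y) <;> simp

lemma mul_diag_submatrix {n m : Type*} [Fintype n] [Fintype m] [DecidableEq n] [DecidableEq m]
    {Q : Matrix n n ℝ} (hQd : Q.IsDiag) {M : Matrix n n ℝ} (e : m → n)
    (he : Function.Injective e) :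
    (M * Q).submatrix e e = M.submatrix e e * Q.submatrix e e := by
  ext x y
  simp only [submatrix_apply, mul_apply]
  rw [Fintype.sum_eq_single (e y), Fintype.sum_eq_single y]
  · intro b hb
    rw [hQd (fun h => hb (he h)), mul_zero]
  · intro s hs
    rw [hQd hs, mul_zero]

lemma diag_mul_submatrix {n m : Type*} [Fintype n] [Fintype m] [DecidableEq n] [DecidableEq m]
    {Q : Matrix n n ℝ} (hQd : Q.IsDiag) {M : Matrix n n ℝ} (e : m → n)
    (he : Function.Injective e) :
    (Q * M).submatrix e e = Q.submatrix e e * M.submatrix e e := by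
  ext x y
  simp only [submatrix_apply, mul_apply]
  rw [Fintype.sum_eq_single (e x), Fintype.sum_eq_single x]
  · intro b hb
    rw [hQd (fun h => hb (he h.symm)), zero_mul]
  · intro s hs
    rw [hQd (fun h => hs h.symm), zero_mul]


/-- Necessity of subsystem certificates in interconnections of firing-rate networks:
if the interconnected synaptic matrix `W_net = W + BΔC` (with block-diagonal `W`,
`B`, `C`) satisfies the firing-rate MONE certificate with data `(P, Q, c)`, then each
`W_i + B_i Δ_{ii} C_i` satisfies it with the corresponding diagonal blocks of `P`, `Q`. -/
theorem interconnection_necessity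
    {ι : Type*} [Fintype ι] [DecidableEq ι]
    (nn mm kk : ι → ℕ)
    (W : ∀ i, Matrix (Fin (nn i)) (Fin (nn i)) ℝ)
    (B : ∀ i, Matrix (Fin (nn i)) (Fin (mm i)) ℝ)
    (C : ∀ i, Matrix (Fin (kk i)) (Fin (nn i)) ℝ)
    (Δ : Matrix (Σ i, Fin (mm i)) (Σ i, Fin (kk i)) ℝ)
    (P Q : Matrix (Σ i, Fin (nn i)) (Σ i, Fin (nn i)) ℝ)
    (hPs : P.IsSymm) (hP : P.PosDef) (hQd : Q.IsDiag) (hQ : Q.PosDef)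
    (c : ℝ)
    (hLMI : (-(fromBlocks
        ((-(2 * (1 - c))) • P)
        (P + (Matrix.blockDiagonal' W +
          Matrix.blockDiagonal' B * Δ * Matrix.blockDiagonal' C)ᵀ * Q)
        (P + Q * (Matrix.blockDiagonal' W +
          Matrix.blockDiagonal' B * Δ * Matrix.blockDiagonal' C))
        ((-2 : ℝ) • Q))).PosSemidef) :
    ∀ i : ι,
      (P.submatrix (Sigma.mk i) (Sigma.mk i)).PosDef ∧
      (Q.submatrix (Sigma.mk i) (Sigma.mk i)).IsDiag ∧
      (Q.submatrix (Sigma.mk i) (Sigma.mk i)).PosDef ∧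
      (-(fromBlocks
          ((-(2 * (1 - c))) • P.submatrix (Sigma.mk i) (Sigma.mk i))
          (P.submatrix (Sigma.mk i) (Sigma.mk i) +
            (W i + B i * Δ.submatrix (Sigma.mk i) (Sigma.mk i) * C i)ᵀ *
              Q.submatrix (Sigma.mk i) (Sigma.mk i))
          (P.submatrix (Sigma.mk i) (Sigma.mk i) +
            Q.submatrix (Sigma.mk i) (Sigma.mk i) *
              (W i + B i * Δ.submatrix (Sigma.mk i) (Sigma.mk i) * C i))
          ((-2 : ℝ) • Q.submatrix (Sigma.mk i) (Sigma.mk i)))).PosSemidef := by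
  intro i
  have hσ : Function.Injective (fun a : Fin (nn i) => (⟨i, a⟩ : Σ j, Fin (nn j))) :=
    fun a b h => by simpa using h
  refine ⟨posDef_submatrix_inj hP _ hσ, fun a b hab => hQd (fun h => hab (hσ h)),
    posDef_submatrix_inj hQ _ hσ, ?_⟩
  set Mnet := Matrix.blockDiagonal' W + Matrix.blockDiagonal' B * Δ * Matrix.blockDiagonal' C
    with hMnet
  have hMsub : Mnet.submatrix (Sigma.mk i) (Sigma.mk i) =
      W i + B i * Δ.submatrix (Sigma.mk i) (Sigma.mk i) * C i := by
    rw [hMnet]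
    have : (Matrix.blockDiagonal' W + Matrix.blockDiagonal' B * Δ *
        Matrix.blockDiagonal' C).submatrix (Sigma.mk i) (Sigma.mk i) =
        (Matrix.blockDiagonal' W).submatrix (Sigma.mk i) (Sigma.mk i) +
        (Matrix.blockDiagonal' B * Δ * Matrix.blockDiagonal' C).submatrix
          (Sigma.mk i) (Sigma.mk i) := rfl
    rw [this, bd_mul_mul nn mm kk B C Δ i]
    congr 1
    ext a b
    simp [blockDiagonal'_apply]
  have hEq : (fromBlocks
      ((-(2 * (1 - c))) • P.submatrix (Sigma.mk i) (Sigma.mk i))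
      (P.submatrix (Sigma.mk i) (Sigma.mk i) +
        (W i + B i * Δ.submatrix (Sigma.mk i) (Sigma.mk i) * C i)ᵀ *
          Q.submatrix (Sigma.mk i) (Sigma.mk i))
      (P.submatrix (Sigma.mk i) (Sigma.mk i) +
        Q.submatrix (Sigma.mk i) (Sigma.mk i) *
          (W i + B i * Δ.submatrix (Sigma.mk i) (Sigma.mk i) * C i))
      ((-2 : ℝ) • Q.submatrix (Sigma.mk i) (Sigma.mk i))) =
      (fromBlocks ((-(2 * (1 - c))) • P) (P + Mnetᵀ * Q) (P + Q * Mnet)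
        ((-2 : ℝ) • Q)).submatrix (Sum.map (Sigma.mk i) (Sigma.mk i))
          (Sum.map (Sigma.mk i) (Sigma.mk i)) := by
    rw [fromBlocks_submatrix_map]
    have h1 : (P + Mnetᵀ * Q).submatrix (Sigma.mk i) (Sigma.mk i) =
        P.submatrix (Sigma.mk i) (Sigma.mk i) +
        (Mnetᵀ * Q).submatrix (Sigma.mk i) (Sigma.mk i) := rfl
    have h2 : (P + Q * Mnet).submatrix (Sigma.mk i) (Sigma.mk i) =
        P.submatrix (Sigma.mk i) (Sigma.mk i) +
        (Q * Mnet).submatrix (Sigma.mk i) (Sigma.mk i) := rfl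
    rw [h1, h2, mul_diag_submatrix hQd (Sigma.mk i) hσ,
      diag_mul_submatrix hQd (Sigma.mk i) hσ, ← transpose_submatrix, hMsub]
    rfl
  rw [hEq]
  have hres := hLMI.submatrix (Sum.map (Sigma.mk i) (Sigma.mk i))
  have : (-(fromBlocks ((-(2 * (1 - c))) • P) (P + Mnetᵀ * Q) (P + Q * Mnet)
      ((-2 : ℝ) • Q))).submatrix (Sum.map (Sigma.mk i) (Sigma.mk i))
        (Sum.map (Sigma.mk i) (Sigma.mk i)) =
      -((fromBlocks ((-(2 * (1 - c))) • P) (P + Mnetᵀ * Q) (P + Q * Mnet)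
      ((-2 : ℝ) • Q)).submatrix (Sum.map (Sigma.mk i) (Sigma.mk i))
        (Sum.map (Sigma.mk i) (Sigma.mk i))) := rfl
  rw [this] at hres
  exact hres
end

section
/- Contraction certificate for Graph firing-rate neural networks via Kronecker products. Let A ∈ ℝ^{N×N} be symmetric with 0 ⪯ A ⪯ I_N (both A and I_N − A positive semidefinite). Let W ∈ ℝ^{n×n}, let P ∈ ℝ^{n×n} be symmetric positive definite and Q ∈ ℝ^{n×n} diagonal positive definite, let 0 < c < 1, and suppose: (i) [[−2(1−c)P, P + WᵀQ],[P + QW, −2Q]] ⪯ 0, and (ii) PQ⁻¹P ⪯ 4(1−c)P. Then the Kronecker product Aᵀ ⊗ W ∈ ℝ^{Nn×Nn} satisfies the continuous-time firing-rate MONE certificate with data (I_N ⊗ P, I_N ⊗ Q, c), i.e., the block matrix [[−2(1−c)(I_N ⊗ P), I_N ⊗ P + (Aᵀ ⊗ W)ᵀ(I_N ⊗ Q)],[I_N ⊗ P + (I_N ⊗ Q)(Aᵀ ⊗ W), −2(I_N ⊗ Q)]] is negative semidefinite. -/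
open Matrix Kronecker

private lemma psd_add' {a : Type*} [Fintype a] {M M' : Matrix a a ℝ}
    (h : M.PosSemidef) (h' : M'.PosSemidef) : (M + M').PosSemidef :=
  h.add h'

private lemma psd_smul'_s15 {a : Type*} [Fintype a] {M : Matrix a a ℝ} {r : ℝ}
    (h : M.PosSemidef) (hr : 0 ≤ r) : (r • M).PosSemidef :=
  h.smul hr

private lemma pd_smul {k : ℕ} {M : Matrix (Fin k) (Fin k) ℝ} {r : ℝ}
    (h : M.PosDef) (hr : 0 < r) : (r • M).PosDef :=
  h.smul hr

open scoped MatrixOrder in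
private lemma kron_psd {N : ℕ} {B : Matrix (Fin N) (Fin N) ℝ}
    {a : Type*} [Fintype a] {M : Matrix a a ℝ}
    (hB : B.PosSemidef) (hM : M.PosSemidef) : (B ⊗ₖ M).PosSemidef := by
  classical
  obtain ⟨L, rfl⟩ : ∃ L : Matrix (Fin N) (Fin N) ℝ, B = Lᴴ * L :=
    CStarAlgebra.nonneg_iff_eq_star_mul_self.mp hB.nonneg
  obtain ⟨K, rfl⟩ : ∃ K : Matrix a a ℝ, M = Kᴴ * K :=
    CStarAlgebra.nonneg_iff_eq_star_mul_self.mp hM.nonneg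
  rw [Matrix.mul_kronecker_mul]
  have h : (Lᴴ ⊗ₖ Kᴴ) = (L ⊗ₖ K)ᴴ := by
    ext ⟨i, j⟩ ⟨k, l⟩
    simp [Matrix.conjTranspose_apply, Matrix.kroneckerMap_apply]
  rw [h]
  exact Matrix.posSemidef_conjTranspose_mul_self _

/-- If `B` is PSD and the block matrix is PSD, the blockwise Kronecker product is PSD. -/
private lemma fromBlocks_kron_psd {N n : ℕ} {B : Matrix (Fin N) (Fin N) ℝ}
    {a b c d : Matrix (Fin n) (Fin n) ℝ}
    (hB : B.PosSemidef) (h : (fromBlocks a b c d).PosSemidef) :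
    (fromBlocks (B ⊗ₖ a) (B ⊗ₖ b) (B ⊗ₖ c) (B ⊗ₖ d)).PosSemidef := by
  have key : fromBlocks (B ⊗ₖ a) (B ⊗ₖ b) (B ⊗ₖ c) (B ⊗ₖ d) =
      (B ⊗ₖ fromBlocks a b c d).submatrix
        (Sum.elim (fun p : Fin N × Fin n => (p.1, Sum.inl p.2))
          (fun p : Fin N × Fin n => (p.1, Sum.inr p.2)))
        (Sum.elim (fun p : Fin N × Fin n => (p.1, Sum.inl p.2))
          (fun p : Fin N × Fin n => (p.1, Sum.inr p.2))) := by
    ext x y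
    rcases x with ⟨i, j⟩ | ⟨i, j⟩ <;> rcases y with ⟨k, l⟩ | ⟨k, l⟩ <;>
      simp [Matrix.fromBlocks, Matrix.kroneckerMap_apply]
  rw [key]
  exact (kron_psd hB h).submatrix _

/-- Contraction certificate for graph firing-rate neural networks: if the adjacency
matrix `A` is symmetric with `0 ⪯ A ⪯ I`, and `W` satisfies the firing-rate MONE
certificate with data `(P, Q, c)` together with `PQ⁻¹P ⪯ 4(1−c)P`, then `Aᵀ ⊗ W`
satisfies the certificate with data `(I ⊗ P, I ⊗ Q, c)`. -/
theorem graph_frnn_contraction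
    {N n : ℕ}
    (A : Matrix (Fin N) (Fin N) ℝ) (hAs : A.IsSymm)
    (hA0 : A.PosSemidef) (hA1 : ((1 : Matrix (Fin N) (Fin N) ℝ) - A).PosSemidef)
    (W P Q : Matrix (Fin n) (Fin n) ℝ)
    (hPs : P.IsSymm) (hP : P.PosDef) (hQd : Q.IsDiag) (hQ : Q.PosDef)
    (c : ℝ) (hc0 : 0 < c) (hc1 : c < 1)
    (hLMI : (-(fromBlocks ((-(2 * (1 - c))) • P) (P + Wᵀ * Q) (P + Q * W)
        ((-2 : ℝ) • Q))).PosSemidef)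
    (hPQ : ((4 * (1 - c)) • P - P * Q⁻¹ * P).PosSemidef) :
    (-(fromBlocks
        ((-(2 * (1 - c))) • ((1 : Matrix (Fin N) (Fin N) ℝ) ⊗ₖ P))
        ((1 : Matrix (Fin N) (Fin N) ℝ) ⊗ₖ P +
          (Aᵀ ⊗ₖ W)ᵀ * ((1 : Matrix (Fin N) (Fin N) ℝ) ⊗ₖ Q))
        ((1 : Matrix (Fin N) (Fin N) ℝ) ⊗ₖ P +
          ((1 : Matrix (Fin N) (Fin N) ℝ) ⊗ₖ Q) * (Aᵀ ⊗ₖ W))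
        ((-2 : ℝ) • ((1 : Matrix (Fin N) (Fin N) ℝ) ⊗ₖ Q)))).PosSemidef := by
  -- M1 is PSD (it is the negation of the LMI matrix)
  have hM1 : (fromBlocks ((2 * (1 - c)) • P) (-(P + Wᵀ * Q)) (-(P + Q * W))
      ((2 : ℝ) • Q)).PosSemidef := by
    have h := hLMI
    rw [Matrix.fromBlocks_neg] at h
    simp only [neg_smul, neg_neg] at h
    exact h
  -- 2 • Q is positive definite and invertible
  have hQ2 : ((2 : ℝ) • Q).PosDef := pd_smul hQ (by norm_num)
  haveI : Invertible ((2 : ℝ) • Q) := hQ2.isUnit.invertible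
  have hQdet : IsUnit Q.det := hQ.det_pos.ne'.isUnit
  haveI : Invertible (2 : ℝ) := invertibleOfNonzero (by norm_num)
  -- M0 is PSD via the Schur complement and the hypothesis hPQ
  have hM0 : (fromBlocks ((2 * (1 - c)) • P) (-P) (-P) ((2 : ℝ) • Q)).PosSemidef := by
    have hPH : (-P)ᴴ = -P := by rw [Matrix.conjTranspose_neg, hP.1]
    have schur : (((2 * (1 - c)) • P) - (-P) * ((2 : ℝ) • Q)⁻¹ * (-P)ᴴ).PosSemidef := by
      have expand : (-P) * ((2 : ℝ) • Q)⁻¹ * (-P) = ⅟(2:ℝ) • (P * Q⁻¹ * P) := by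
        rw [Matrix.inv_smul (A := Q) (2 : ℝ) hQdet]
        simp only [Matrix.mul_smul, Matrix.smul_mul, neg_mul, mul_neg, neg_neg]
      rw [hPH, expand]
      have h2 : (⅟(2:ℝ)) = (2:ℝ)⁻¹ := invOf_eq_inv (2:ℝ)
      have heq : ((2 * (1 - c)) • P) - ⅟(2:ℝ) • (P * Q⁻¹ * P) =
          (⅟(2:ℝ)) • (((4 * (1 - c)) • P) - P * Q⁻¹ * P) := by
        rw [smul_sub, smul_smul, h2]
        norm_num
        ring_nf
      rw [heq]
      exact psd_smul'_s15 hPQ (by rw [h2]; norm_num)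
    have h := (Matrix.PosDef.fromBlocks₂₂ ((2 * (1 - c)) • P) (-P) hQ2).mpr schur
    rwa [hPH] at h
  -- rewrite the big matrix as a sum of two blockwise Kronecker products
  have key : (-(fromBlocks
        ((-(2 * (1 - c))) • ((1 : Matrix (Fin N) (Fin N) ℝ) ⊗ₖ P))
        ((1 : Matrix (Fin N) (Fin N) ℝ) ⊗ₖ P +
          (Aᵀ ⊗ₖ W)ᵀ * ((1 : Matrix (Fin N) (Fin N) ℝ) ⊗ₖ Q))
        ((1 : Matrix (Fin N) (Fin N) ℝ) ⊗ₖ P +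
          ((1 : Matrix (Fin N) (Fin N) ℝ) ⊗ₖ Q) * (Aᵀ ⊗ₖ W))
        ((-2 : ℝ) • ((1 : Matrix (Fin N) (Fin N) ℝ) ⊗ₖ Q)))) =
      fromBlocks (((1 : Matrix (Fin N) (Fin N) ℝ) - A) ⊗ₖ ((2 * (1 - c)) • P))
          (((1 : Matrix (Fin N) (Fin N) ℝ) - A) ⊗ₖ (-P))
          (((1 : Matrix (Fin N) (Fin N) ℝ) - A) ⊗ₖ (-P))
          (((1 : Matrix (Fin N) (Fin N) ℝ) - A) ⊗ₖ ((2 : ℝ) • Q)) +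
        fromBlocks (A ⊗ₖ ((2 * (1 - c)) • P)) (A ⊗ₖ (-(P + Wᵀ * Q)))
          (A ⊗ₖ (-(P + Q * W))) (A ⊗ₖ ((2 : ℝ) • Q)) := by
    rw [hAs.eq]
    have hT : (A ⊗ₖ W)ᵀ = A ⊗ₖ Wᵀ := by
      rw [← Matrix.kroneckerMap_transpose, hAs.eq]
    have hm1 : (A ⊗ₖ Wᵀ) * ((1 : Matrix (Fin N) (Fin N) ℝ) ⊗ₖ Q) = A ⊗ₖ (Wᵀ * Q) := by
      rw [← Matrix.mul_kronecker_mul, mul_one]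
    have hm2 : ((1 : Matrix (Fin N) (Fin N) ℝ) ⊗ₖ Q) * (A ⊗ₖ W) = A ⊗ₖ (Q * W) := by
      rw [← Matrix.mul_kronecker_mul, one_mul]
    rw [Matrix.fromBlocks_neg, hT, hm1, hm2, Matrix.fromBlocks_add]
    ext x y
    rcases x with ⟨i, j⟩ | ⟨i, j⟩ <;> rcases y with ⟨k, l⟩ | ⟨k, l⟩ <;>
      · simp only [Matrix.fromBlocks_apply₁₁, Matrix.fromBlocks_apply₁₂,
          Matrix.fromBlocks_apply₂₁, Matrix.fromBlocks_apply₂₂, Matrix.neg_apply,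
          Matrix.add_apply, Matrix.sub_apply, Matrix.smul_apply,
          Matrix.kroneckerMap_apply, smul_eq_mul]
        ring
  rw [key]
  exact psd_add' (fromBlocks_kron_psd hA1 hM0) (fromBlocks_kron_psd hA0 hM1)
end

section
/- LMI synthesis of contracting full-state feedback for firing-rate networks. Let W ∈ ℝ^{n×n}, B ∈ ℝ^{n×m}, and fix c ∈ (0,1]. Then the following are equivalent: (i) there exist K ∈ ℝ^{m×n}, a symmetric positive definite P ∈ ℝ^{n×n}, and a diagonal positive definite Q ∈ ℝ^{n×n} such that the closed-loop matrix W + BK satisfies [[−2(1−c)P, P + (W+BK)ᵀQ],[P + Q(W+BK), −2Q]] ⪯ 0; (ii) there exist a symmetric positive definite X ∈ ℝ^{n×n}, a diagonal positive definite D ∈ ℝ^{n×n}, and Y ∈ ℝ^{m×n} such that [[−2(1−c)X, D + XWᵀ + YᵀBᵀ],[D + WX + BY, −2D]] ⪯ 0. Moreover, if (X, D, Y) satisfies the inequality in (ii), then K = YX⁻¹, P = X⁻¹, Q = D⁻¹ satisfy the inequality in (i). -/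
open Matrix

lemma conj_neg_blocks {k : ℕ} {A₁ A₂ A₃ A₄ S T : Matrix (Fin k) (Fin k) ℝ}
    (h : (-(fromBlocks A₁ A₂ A₃ A₄)).PosSemidef) :
    (-(fromBlocks (Sᵀ * A₁ * S) (Sᵀ * A₂ * T) (Tᵀ * A₃ * S) (Tᵀ * A₄ * T))).PosSemidef := by
  have h2 := h.conjTranspose_mul_mul_same (fromBlocks S 0 0 T)
  have e : (fromBlocks S 0 0 T)ᴴ * (-(fromBlocks A₁ A₂ A₃ A₄)) * fromBlocks S 0 0 T
      = -(fromBlocks (Sᵀ * A₁ * S) (Sᵀ * A₂ * T) (Tᵀ * A₃ * S) (Tᵀ * A₄ * T)) := by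
    rw [conjTranspose_eq_transpose_of_trivial, fromBlocks_transpose]
    simp [fromBlocks_multiply, Matrix.mul_assoc, Matrix.neg_mul, Matrix.mul_neg,
      fromBlocks_neg]
  rwa [e] at h2

lemma synth_to_cert {n m : ℕ} (W : Matrix (Fin n) (Fin n) ℝ) (B : Matrix (Fin n) (Fin m) ℝ)
    (c : ℝ) (X D : Matrix (Fin n) (Fin n) ℝ) (Y : Matrix (Fin m) (Fin n) ℝ)
    (hX : X.IsSymm) (hXp : X.PosDef) (hD : D.IsDiag) (hDp : D.PosDef)
    (h : (-(fromBlocks ((-(2 * (1 - c))) • X) (D + X * Wᵀ + Yᵀ * Bᵀ)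
        (D + W * X + B * Y) ((-2 : ℝ) • D))).PosSemidef) :
    (-(fromBlocks ((-(2 * (1 - c))) • X⁻¹)
        (X⁻¹ + (W + B * (Y * X⁻¹))ᵀ * D⁻¹)
        (X⁻¹ + D⁻¹ * (W + B * (Y * X⁻¹)))
        ((-2 : ℝ) • D⁻¹))).PosSemidef := by
  have hdX : IsUnit X.det := hXp.det_pos.ne'.isUnit
  have hdD : IsUnit D.det := hDp.det_pos.ne'.isUnit
  have hXi : (X⁻¹)ᵀ = X⁻¹ := by rw [transpose_nonsing_inv, hX]
  have hDi : (D⁻¹)ᵀ = D⁻¹ := by rw [transpose_nonsing_inv, hD.isSymm]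
  have h2 := conj_neg_blocks (S := X⁻¹) (T := D⁻¹) h
  have e1 : (X⁻¹)ᵀ * ((-(2 * (1 - c))) • X) * X⁻¹ = (-(2 * (1 - c))) • X⁻¹ := by
    rw [hXi, Matrix.mul_smul, Matrix.smul_mul, Matrix.mul_assoc,
      Matrix.mul_nonsing_inv _ hdX, Matrix.mul_one]
  have e2 : (X⁻¹)ᵀ * (D + X * Wᵀ + Yᵀ * Bᵀ) * D⁻¹
      = X⁻¹ + (W + B * (Y * X⁻¹))ᵀ * D⁻¹ := by
    simp only [hXi, transpose_add, transpose_mul, Matrix.mul_add, Matrix.add_mul,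
      Matrix.mul_assoc, Matrix.mul_nonsing_inv _ hdD, Matrix.mul_one,
      Matrix.nonsing_inv_mul_cancel_left _ _ hdX]
    abel
  have e3 : (D⁻¹)ᵀ * (D + W * X + B * Y) * X⁻¹
      = X⁻¹ + D⁻¹ * (W + B * (Y * X⁻¹)) := by
    simp only [hDi, Matrix.mul_add, Matrix.add_mul, Matrix.mul_assoc,
      Matrix.nonsing_inv_mul _ hdD, Matrix.one_mul,
      Matrix.mul_nonsing_inv _ hdX, Matrix.mul_one]
    abel
  have e4 : (D⁻¹)ᵀ * ((-2 : ℝ) • D) * D⁻¹ = (-2 : ℝ) • D⁻¹ := by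
    rw [hDi, Matrix.mul_smul, Matrix.smul_mul, Matrix.mul_assoc,
      Matrix.mul_nonsing_inv _ hdD, Matrix.mul_one]
  rwa [e1, e2, e3, e4] at h2

lemma inv_isSymm {k : ℕ} {P : Matrix (Fin k) (Fin k) ℝ} (hP : P.IsSymm) : (P⁻¹).IsSymm := by
  unfold Matrix.IsSymm
  rw [transpose_nonsing_inv, hP]

lemma inv_isDiag {k : ℕ} {Q : Matrix (Fin k) (Fin k) ℝ} (hQ : Q.IsDiag) : (Q⁻¹).IsDiag := by
  rw [← hQ.diagonal_diag, Matrix.inv_diagonal]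
  exact isDiag_diagonal _

lemma cert_to_synth {n m : ℕ} (W : Matrix (Fin n) (Fin n) ℝ) (B : Matrix (Fin n) (Fin m) ℝ)
    (c : ℝ) (K : Matrix (Fin m) (Fin n) ℝ) (P Q : Matrix (Fin n) (Fin n) ℝ)
    (hP : P.IsSymm) (hPp : P.PosDef) (hQ : Q.IsDiag) (hQp : Q.PosDef)
    (h : (-(fromBlocks ((-(2 * (1 - c))) • P) (P + (W + B * K)ᵀ * Q)
        (P + Q * (W + B * K)) ((-2 : ℝ) • Q))).PosSemidef) :
    (-(fromBlocks ((-(2 * (1 - c))) • P⁻¹) (Q⁻¹ + P⁻¹ * Wᵀ + (K * P⁻¹)ᵀ * Bᵀ)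
        (Q⁻¹ + W * P⁻¹ + B * (K * P⁻¹)) ((-2 : ℝ) • Q⁻¹))).PosSemidef := by
  have hdP : IsUnit P.det := hPp.det_pos.ne'.isUnit
  have hdQ : IsUnit Q.det := hQp.det_pos.ne'.isUnit
  have hPi : (P⁻¹)ᵀ = P⁻¹ := inv_isSymm hP
  have hQi : (Q⁻¹)ᵀ = Q⁻¹ := inv_isSymm hQ.isSymm
  have h2 := conj_neg_blocks (S := P⁻¹) (T := Q⁻¹) h
  have e1 : (P⁻¹)ᵀ * ((-(2 * (1 - c))) • P) * P⁻¹ = (-(2 * (1 - c))) • P⁻¹ := by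
    rw [hPi, Matrix.mul_smul, Matrix.smul_mul, Matrix.mul_assoc,
      Matrix.mul_nonsing_inv _ hdP, Matrix.mul_one]
  have e2 : (P⁻¹)ᵀ * (P + (W + B * K)ᵀ * Q) * Q⁻¹
      = Q⁻¹ + P⁻¹ * Wᵀ + (K * P⁻¹)ᵀ * Bᵀ := by
    simp only [hPi, transpose_add, transpose_mul, Matrix.mul_add, Matrix.add_mul,
      Matrix.mul_assoc, Matrix.mul_nonsing_inv _ hdQ, Matrix.mul_one,
      Matrix.nonsing_inv_mul_cancel_left _ _ hdP]
    abel
  have e3 : (Q⁻¹)ᵀ * (P + Q * (W + B * K)) * P⁻¹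
      = Q⁻¹ + W * P⁻¹ + B * (K * P⁻¹) := by
    simp only [hQi, Matrix.mul_add, Matrix.add_mul, Matrix.mul_assoc,
      Matrix.nonsing_inv_mul_cancel_left _ _ hdQ,
      Matrix.mul_nonsing_inv _ hdP, Matrix.mul_one]
    abel
  have e4 : (Q⁻¹)ᵀ * ((-2 : ℝ) • Q) * Q⁻¹ = (-2 : ℝ) • Q⁻¹ := by
    rw [hQi, Matrix.mul_smul, Matrix.smul_mul, Matrix.mul_assoc,
      Matrix.mul_nonsing_inv _ hdQ, Matrix.mul_one]
  rwa [e1, e2, e3, e4] at h2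

/-- LMI synthesis of contracting full-state feedback for firing-rate networks:
the existence of a feedback gain `K` making `W + BK` satisfy the firing-rate MONE
certificate is equivalent to the feasibility of a synthesis LMI; moreover any
feasible `(X, D, Y)` yields `K = YX⁻¹`, `P = X⁻¹`, `Q = D⁻¹`. -/
theorem state_feedback_synthesis
    {n m : ℕ} (W : Matrix (Fin n) (Fin n) ℝ) (B : Matrix (Fin n) (Fin m) ℝ)
    (c : ℝ) (hc0 : 0 < c) (hc1 : c ≤ 1) :
    ((∃ (K : Matrix (Fin m) (Fin n) ℝ) (P Q : Matrix (Fin n) (Fin n) ℝ),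
        P.IsSymm ∧ P.PosDef ∧ Q.IsDiag ∧ Q.PosDef ∧
        (-(fromBlocks ((-(2 * (1 - c))) • P) (P + (W + B * K)ᵀ * Q)
          (P + Q * (W + B * K)) ((-2 : ℝ) • Q))).PosSemidef) ↔
      (∃ (X D : Matrix (Fin n) (Fin n) ℝ) (Y : Matrix (Fin m) (Fin n) ℝ),
        X.IsSymm ∧ X.PosDef ∧ D.IsDiag ∧ D.PosDef ∧
        (-(fromBlocks ((-(2 * (1 - c))) • X) (D + X * Wᵀ + Yᵀ * Bᵀ)
          (D + W * X + B * Y) ((-2 : ℝ) • D))).PosSemidef)) ∧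
    (∀ (X D : Matrix (Fin n) (Fin n) ℝ) (Y : Matrix (Fin m) (Fin n) ℝ),
      X.IsSymm → X.PosDef → D.IsDiag → D.PosDef →
      (-(fromBlocks ((-(2 * (1 - c))) • X) (D + X * Wᵀ + Yᵀ * Bᵀ)
        (D + W * X + B * Y) ((-2 : ℝ) • D))).PosSemidef →
      (-(fromBlocks ((-(2 * (1 - c))) • X⁻¹)
        (X⁻¹ + (W + B * (Y * X⁻¹))ᵀ * D⁻¹)
        (X⁻¹ + D⁻¹ * (W + B * (Y * X⁻¹)))
        ((-2 : ℝ) • D⁻¹))).PosSemidef) := by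
  constructor
  · constructor
    · rintro ⟨K, P, Q, hPs, hPp, hQd, hQp, h⟩
      refine ⟨P⁻¹, Q⁻¹, K * P⁻¹, inv_isSymm hPs, hPp.inv, inv_isDiag hQd, hQp.inv, ?_⟩
      exact cert_to_synth W B c K P Q hPs hPp hQd hQp h
    · rintro ⟨X, D, Y, hXs, hXp, hDd, hDp, h⟩
      refine ⟨Y * X⁻¹, X⁻¹, D⁻¹, inv_isSymm hXs, hXp.inv, inv_isDiag hDd, hDp.inv, ?_⟩
      exact synth_to_cert W B c X D Y hXs hXp hDd hDp h
  · intro X D Y hXs hXp hDd hDp h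
    exact synth_to_cert W B c X D Y hXs hXp hDd hDp h
end

section
/- Necessity of linear stabilizability for contraction by full-state feedback. Let W ∈ ℝ^{n×n} and B ∈ ℝ^{n×m}. If there exist K ∈ ℝ^{m×n}, a symmetric positive definite P ∈ ℝ^{n×n}, a diagonal positive definite Q ∈ ℝ^{n×n}, and c > 0 such that [[−2(1−c)P, P + (W+BK)ᵀQ],[P + Q(W+BK), −2Q]] ⪯ 0, then there exist K′ ∈ ℝ^{m×n} and a symmetric positive definite X ∈ ℝ^{n×n} such that (W − Iₙ + BK′)X + X(W − Iₙ + BK′)ᵀ is negative definite (i.e., the pair (W − Iₙ, B) is stabilizable). -/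
open Matrix

/-- Conjugation by an invertible matrix preserves positive definiteness (real case). -/
lemma posDef_conj_of_posDef {n : ℕ} {S : Matrix (Fin n) (Fin n) ℝ}
    (hS : S.PosDef) (N : Matrix (Fin n) (Fin n) ℝ) (hN : IsUnit N.det) :
    (N * S * Nᵀ).PosDef := by
  refine Matrix.PosDef.of_dotProduct_mulVec_pos ?_ ?_
  · have hSh : Sᵀ = S := by
      have := hS.isHermitian
      rwa [Matrix.IsHermitian, Matrix.conjTranspose_eq_transpose_of_trivial] at this
    show (N * S * Nᵀ)ᴴ = N * S * Nᵀ
    rw [Matrix.conjTranspose_eq_transpose_of_trivial]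
    rw [Matrix.transpose_mul, Matrix.transpose_mul, Matrix.transpose_transpose, hSh, mul_assoc]
  · intro x hx
    have hy : Nᵀ *ᵥ x ≠ 0 := by
      have hinj : Function.Injective (Nᵀ).mulVec :=
        Matrix.mulVec_injective_iff_isUnit.mpr (by simpa [Matrix.isUnit_iff_isUnit_det,
          Matrix.det_transpose] using hN)
      intro h
      exact hx (hinj (a₁ := x) (a₂ := 0) (by simpa using h))
    have h := hS.dotProduct_mulVec_pos hy
    have hrw : star x ⬝ᵥ ((N * S * Nᵀ) *ᵥ x) = star (Nᵀ *ᵥ x) ⬝ᵥ (S *ᵥ (Nᵀ *ᵥ x)) := by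
      simp only [star_trivial, mul_assoc, ← Matrix.mulVec_mulVec]
      rw [Matrix.dotProduct_mulVec, ← Matrix.mulVec_transpose]
    rw [hrw]
    exact h

/-- Necessity of linear stabilizability: if some gain `K` makes `W + BK` satisfy the
continuous-time firing-rate MONE certificate with rate `c > 0`, then the pair
`(W − Iₙ, B)` is stabilizable in the Lyapunov sense. -/
theorem stabilizability_necessary
    {n m : ℕ} (W : Matrix (Fin n) (Fin n) ℝ) (B : Matrix (Fin n) (Fin m) ℝ)
    (K : Matrix (Fin m) (Fin n) ℝ) (P Q : Matrix (Fin n) (Fin n) ℝ) (c : ℝ)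
    (hPs : P.IsSymm) (hP : P.PosDef) (hQd : Q.IsDiag) (hQ : Q.PosDef) (hc : 0 < c)
    (hLMI : (-(fromBlocks ((-(2 * (1 - c))) • P) (P + (W + B * K)ᵀ * Q)
      (P + Q * (W + B * K)) ((-2 : ℝ) • Q))).PosSemidef) :
    ∃ (K' : Matrix (Fin m) (Fin n) ℝ) (X : Matrix (Fin n) (Fin n) ℝ),
      X.IsSymm ∧ X.PosDef ∧
      (-((W - 1 + B * K') * X + X * (W - 1 + B * K')ᵀ)).PosDef := by
  set A : Matrix (Fin n) (Fin n) ℝ := W + B * K with hA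
  set J : Matrix (Fin n ⊕ Fin n) (Fin n) ℝ := fromRows 1 1 with hJ
  have hJc : Jᴴ = fromCols (1 : Matrix (Fin n) (Fin n) ℝ) 1 := by
    rw [Matrix.conjTranspose_eq_transpose_of_trivial, hJ, Matrix.transpose_fromRows]
    simp
  have h1 := hLMI.conjTranspose_mul_mul_same J
  -- compute the congruenced matrix
  have hcomp : Jᴴ * (-(fromBlocks ((-(2 * (1 - c))) • P) (P + Aᵀ * Q)
      (P + Q * A) ((-2 : ℝ) • Q))) * J =
      -(((-(2 * (1 - c))) • P + (P + Aᵀ * Q)) + ((P + Q * A) + (-2 : ℝ) • Q)) := by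
    rw [hJc, hJ, Matrix.mul_neg, Matrix.neg_mul, Matrix.mul_assoc,
      Matrix.fromBlocks_mul_fromRows, Matrix.fromCols_mul_fromRows]
    simp [Matrix.mul_one, Matrix.one_mul]
  rw [hcomp] at h1
  -- the Lyapunov certificate in observability form
  set S : Matrix (Fin n) (Fin n) ℝ := Q + Q - Aᵀ * Q - Q * A with hSdef
  have hP2 : ((2 * c) • P).PosDef := by
    refine Matrix.PosDef.of_dotProduct_mulVec_pos ?_ (fun x hx => ?_)
    · show ((2 * c) • P)ᴴ = (2 * c) • P
      rw [Matrix.conjTranspose_smul, star_trivial, hP.isHermitian.eq]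
    · have := hP.dotProduct_mulVec_pos hx
      have h2c : (0:ℝ) < 2 * c := by linarith
      simp only [Matrix.smul_mulVec, dotProduct_smul, smul_eq_mul]
      exact mul_pos h2c (by simpa using this)
  have hS : S.PosDef := by
    have heq : S = -(((-(2 * (1 - c))) • P + (P + Aᵀ * Q)) + ((P + Q * A) + (-2 : ℝ) • Q))
        + (2 * c) • P := by
      rw [hSdef]
      have h2 : ((-2 : ℝ)) • Q = -(Q + Q) := by
        rw [neg_smul]
        congr 1
        rw [two_smul]
      rw [h2]
      have h3 : (-(2 * (1 - c))) • P = -(P + P) + (2 * c) • P := by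
        have : (-(2 * (1 - c))) = (-2) + 2 * c := by ring
        rw [this, add_smul, neg_smul, two_smul]
      rw [h3]
      abel
    rw [heq]
    exact Matrix.PosDef.posSemidef_add h1 hP2
  -- invert Q
  have hdet : IsUnit Q.det := isUnit_iff_ne_zero.mpr (ne_of_gt hQ.det_pos)
  have hQinv : Invertible Q := Q.invertibleOfIsUnitDet hdet
  have hQsymm : Qᵀ = Q := by
    have := hQ.isHermitian
    rwa [Matrix.IsHermitian, Matrix.conjTranspose_eq_transpose_of_trivial] at this
  have hQiT : (Q⁻¹)ᵀ = Q⁻¹ := by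
    rw [Matrix.transpose_nonsing_inv, hQsymm]
  have hQQi : Q * Q⁻¹ = 1 := Matrix.mul_nonsing_inv Q hdet
  have hQiQ : Q⁻¹ * Q = 1 := Matrix.nonsing_inv_mul Q hdet
  refine ⟨K, Q⁻¹, ?_, hQ.inv, ?_⟩
  · exact hQiT
  · have hWK : W - 1 + B * K = A - 1 := by rw [hA]; abel
    have hEq : -((W - 1 + B * K) * Q⁻¹ + Q⁻¹ * (W - 1 + B * K)ᵀ) = Q⁻¹ * S * (Q⁻¹)ᵀ := by
      rw [hWK, hQiT, hSdef]
      rw [Matrix.transpose_sub, Matrix.transpose_one]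
      simp only [Matrix.sub_mul, Matrix.add_mul, Matrix.mul_sub, Matrix.mul_add,
        Matrix.mul_one, Matrix.one_mul, Matrix.mul_assoc, hQQi, hQiQ]
      simp only [← Matrix.mul_assoc, hQiQ, Matrix.one_mul, Matrix.mul_one]
      abel
    rw [hEq]
    exact posDef_conj_of_posDef hS Q⁻¹ (Matrix.isUnit_nonsing_inv_det Q hdet)
end

section
/- Exact unconstrained parameterization of the firing-rate MONE certificate. Fix c ∈ [0,1] and W ∈ ℝ^{n×n}. The following are equivalent: (i) there exist a symmetric positive definite P ∈ ℝ^{n×n} and a diagonal positive definite Q ∈ ℝ^{n×n} such that [[−2(1−c)P, P + WᵀQ],[P + QW, −2Q]] ⪯ 0; (ii) there exist a matrix S ∈ ℝ^{n×n} with SᵀS ⪯ Iₙ, an invertible matrix V ∈ ℝ^{n×n}, and a vector d ∈ ℝⁿ such that W = 2√(1−c) · diag(e^{d₁},…,e^{dₙ}) · S · (VᵀV) − diag(e^{2d₁},…,e^{2dₙ}) · (VᵀV)², where diag(a₁,…,aₙ) denotes the diagonal matrix with the given entries. -/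
open Matrix

namespace FrnnAux
variable {n : ℕ}

lemma psd_smul {A : Matrix (Fin n) (Fin n) ℝ} (hA : A.PosSemidef) {r : ℝ} (hr : 0 ≤ r) :
    (r • A).PosSemidef := by
  refine .of_dotProduct_mulVec_nonneg ?_ fun x => ?_
  · unfold Matrix.IsHermitian
    rw [conjTranspose_smul, hA.1.eq, star_trivial]
  · rw [smul_mulVec, dotProduct_smul, smul_eq_mul]
    exact mul_nonneg hr (hA.dotProduct_mulVec_nonneg x)

lemma pd_smul {A : Matrix (Fin n) (Fin n) ℝ} (hA : A.PosDef) {r : ℝ} (hr : 0 < r) :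
    (r • A).PosDef := by
  refine .of_dotProduct_mulVec_pos ?_ fun x hx => ?_
  · unfold Matrix.IsHermitian
    rw [conjTranspose_smul, hA.1.eq, star_trivial]
  · rw [smul_mulVec, dotProduct_smul, smul_eq_mul]
    exact mul_pos hr (hA.dotProduct_mulVec_pos hx)

lemma pd_transpose_mul_self {V : Matrix (Fin n) (Fin n) ℝ} (hV : IsUnit V.det) :
    (Vᵀ * V).PosDef := by
  refine .of_dotProduct_mulVec_pos (by simpa using isHermitian_conjTranspose_mul_self V) fun x hx => ?_
  have h1 : star x ⬝ᵥ (Vᵀ * V) *ᵥ x = (V *ᵥ x) ⬝ᵥ (V *ᵥ x) := by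
    rw [star_trivial, ← mulVec_mulVec, dotProduct_mulVec, vecMul_transpose]
  rw [h1]
  have hV0 : V *ᵥ x ≠ 0 := by
    intro h
    exact hx ((mulVec_injective_iff_isUnit.2 (isUnit_iff_isUnit_det _ |>.2 hV))
      (by simpa using h))
  have := dotProduct_star_self_nonneg (V *ᵥ x)
  rw [star_trivial] at this
  rcases this.lt_or_eq with h | h
  · exact h
  · exact absurd (dotProduct_self_eq_zero.1 h.symm) hV0

lemma pd_of_psd_isUnit {A : Matrix (Fin n) (Fin n) ℝ} (hA : A.PosSemidef)
    (h : IsUnit A.det) : A.PosDef := by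
  exact hA.posDef_iff_isUnit.2 ((isUnit_iff_isUnit_det _).2 h)

open scoped MatrixOrder in
lemma exists_pd_sqrt {A : Matrix (Fin n) (Fin n) ℝ} (hA : A.PosDef) :
    ∃ B : Matrix (Fin n) (Fin n) ℝ, B.PosDef ∧ Bᵀ = B ∧ B * B = A := by
  refine ⟨CFC.sqrt A, ?_, ?_, CFC.sqrt_mul_sqrt_self A hA.posSemidef.nonneg⟩
  · refine pd_of_psd_isUnit (nonneg_iff_posSemidef.1 (CFC.sqrt_nonneg A)) ?_
    have h : (CFC.sqrt A).det * (CFC.sqrt A).det = A.det := by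
      rw [← det_mul, CFC.sqrt_mul_sqrt_self A hA.posSemidef.nonneg]
    have hd : A.det ≠ 0 := ne_of_gt hA.det_pos
    have : (CFC.sqrt A).det ≠ 0 := by
      intro h0; rw [h0, mul_zero] at h; exact hd h.symm
    exact isUnit_iff_ne_zero.2 this
  · rw [← conjTranspose_eq_transpose_of_trivial]
    exact (nonneg_iff_posSemidef.1 (CFC.sqrt_nonneg A)).1.eq

lemma param_of_cert (c : ℝ) (hc0 : 0 ≤ c) (hc1 : c ≤ 1) (W P Q : Matrix (Fin n) (Fin n) ℝ)
    (hPs : P.IsSymm) (hPpd : P.PosDef) (hQd : Q.IsDiag) (hQpd : Q.PosDef)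
    (hKey : ((2 * (1 - c)) • P -
      (P + Wᵀ * Q) * ((2:ℝ) • Q)⁻¹ * (P + Q * W)).PosSemidef) :
    ∃ (S V : Matrix (Fin n) (Fin n) ℝ) (d : Fin n → ℝ),
      ((1 : Matrix (Fin n) (Fin n) ℝ) - Sᵀ * S).PosSemidef ∧ IsUnit V.det ∧
      W = (2 * Real.sqrt (1 - c)) •
            (diagonal (fun i => Real.exp (d i)) * S * (Vᵀ * V)) -
          diagonal (fun i => Real.exp (2 * d i)) * (Vᵀ * V) ^ 2 := by
  obtain ⟨q, hq⟩ : ∃ q : Fin n → ℝ, Q = diagonal q := ⟨Q.diag, (hQd.diagonal_diag).symm⟩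
  have hqpos : ∀ i, 0 < q i := posDef_diagonal_iff.1 (hq ▸ hQpd)
  obtain ⟨d, hd⟩ : ∃ d : Fin n → ℝ, d = fun i => (-(1:ℝ)/2) * Real.log (q i) := ⟨_, rfl⟩
  have he2 : ∀ i, Real.exp (2 * d i) = (q i)⁻¹ := by
    intro i
    have h1 : 2 * d i = -Real.log (q i) := by rw [hd]; ring
    rw [h1, Real.exp_neg, Real.exp_log (hqpos i)]
  obtain ⟨M, hMpd, hMsym, hMM⟩ := exists_pd_sqrt hPpd
  obtain ⟨V, hVpd, hVsym, hVV⟩ := exists_pd_sqrt hMpd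
  have hVtV : Vᵀ * V = M := by rw [hVsym, hVV]
  have hVdet : IsUnit V.det := (Matrix.isUnit_iff_isUnit_det V).1 hVpd.isUnit
  have hMdet : IsUnit M.det := (Matrix.isUnit_iff_isUnit_det M).1 hMpd.isUnit
  obtain ⟨D, hDdef⟩ : ∃ D : Matrix (Fin n) (Fin n) ℝ,
      D = diagonal (fun i => Real.exp (d i)) := ⟨_, rfl⟩
  have hDsym : Dᵀ = D := by rw [hDdef, diagonal_transpose]
  have hDD : D * D = diagonal (fun i => Real.exp (2 * d i)) := by
    rw [hDdef, diagonal_mul_diagonal]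
    have : (fun i => Real.exp (d i) * Real.exp (d i)) = fun i => Real.exp (2 * d i) := by
      funext i; rw [← Real.exp_add]; congr 1; ring
    rw [this]
  have hDDQ : D * D * Q = 1 := by
    rw [hDD, hq, diagonal_mul_diagonal, ← diagonal_one]
    have : (fun i => Real.exp (2 * d i) * q i) = fun _ => (1:ℝ) := by
      funext i; rw [he2, inv_mul_cancel₀ (hqpos i).ne']
    rw [this]
  obtain ⟨X, hXdef⟩ : ∃ X : Matrix (Fin n) (Fin n) ℝ, X = P + Q * W := ⟨_, rfl⟩
  have hQsym : Qᵀ = Q := by rw [hq, diagonal_transpose]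
  have hXT : P + Wᵀ * Q = Xᵀ := by
    rw [hXdef, transpose_add, hPs.eq, transpose_mul, hQsym]
  have hQW : Q * W = X - P := by rw [hXdef]; abel
  have hW' : W = D * D * X - D * D * P := by
    calc W = 1 * W := (Matrix.one_mul W).symm
      _ = D * D * Q * W := by rw [hDDQ]
      _ = D * D * (Q * W) := by rw [Matrix.mul_assoc]
      _ = D * D * (X - P) := by rw [hQW]
      _ = D * D * X - D * D * P := Matrix.mul_sub _ _ _
  obtain ⟨R, hRdef⟩ : ∃ R : Matrix (Fin n) (Fin n) ℝ,
      R = diagonal (fun i => 2⁻¹ * (q i)⁻¹) := ⟨_, rfl⟩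
  have hR : ((2:ℝ) • Q)⁻¹ = R := by
    apply Matrix.inv_eq_right_inv
    rw [hq, hRdef, Matrix.smul_mul, diagonal_mul_diagonal, ← diagonal_smul, ← diagonal_one]
    have : ((2:ℝ) • fun i => q i * (2⁻¹ * (q i)⁻¹)) = fun _ => (1:ℝ) := by
      funext i
      simp only [Pi.smul_apply, smul_eq_mul]
      field_simp [(hqpos i).ne']
    rw [this]
  have hRD : R = (2⁻¹ : ℝ) • (D * D) := by
    have hfun : (fun i => (2⁻¹:ℝ) * (q i)⁻¹)
        = (2⁻¹:ℝ) • (fun i => Real.exp (2 * d i)) := by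
      funext i
      simp only [Pi.smul_apply, smul_eq_mul, he2]
    rw [hRdef, hfun, diagonal_smul, ← hDD]
  rw [hXT, hR, ← hXdef] at hKey
  have hNM : M⁻¹ * M = 1 := nonsing_inv_mul M hMdet
  have hMN : M * M⁻¹ = 1 := mul_nonsing_inv M hMdet
  have hNsym : M⁻¹ᵀ = M⁻¹ := by rw [transpose_nonsing_inv, hMsym]
  have hNPN : M⁻¹ * P * M⁻¹ = 1 := by
    rw [← hMM, ← Matrix.mul_assoc M⁻¹ M M, hNM, Matrix.one_mul, hMN]
  rcases eq_or_lt_of_le hc1 with hc1' | hc1'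
  · -- c = 1
    subst hc1'
    have h0 : (2 * ((1:ℝ) - 1)) = 0 := by norm_num
    rw [h0, zero_smul, zero_sub] at hKey
    have hRpd : R.PosDef := by
      rw [hRdef]
      exact posDef_diagonal_iff.2 fun i => by have := hqpos i; positivity
    have hZ : (Xᵀ * R * X).PosSemidef := by
      have := hRpd.posSemidef.conjTranspose_mul_mul_same X
      rwa [conjTranspose_eq_transpose_of_trivial] at this
    have hX0 : ∀ v, X *ᵥ v = 0 := by
      intro v
      have h2 := hKey.dotProduct_mulVec_nonneg v
      rw [Matrix.neg_mulVec, dotProduct_neg] at h2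
      have h1 : star v ⬝ᵥ (Xᵀ * R * X) *ᵥ v = 0 := le_antisymm (by linarith) (hZ.dotProduct_mulVec_nonneg v)
      have h3 : star (X *ᵥ v) ⬝ᵥ R *ᵥ (X *ᵥ v) = 0 := by
        rw [star_trivial] at h1 ⊢
        rw [← mulVec_mulVec, ← mulVec_mulVec, dotProduct_mulVec, vecMul_transpose] at h1
        exact h1
      by_contra hne
      exact absurd h3 (ne_of_gt (hRpd.dotProduct_mulVec_pos hne))
    have hXzero : X = 0 := by
      ext i j
      have := congrFun (hX0 (Pi.single j 1)) i
      simpa using this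
    refine ⟨0, V, d, ?_, hVdet, ?_⟩
    · have h1 : ((1 : Matrix (Fin n) (Fin n) ℝ) - (0:Matrix (Fin n) (Fin n) ℝ)ᵀ * 0) = 1 := by
        simp
      rw [h1]
      exact Matrix.PosDef.one.posSemidef
    · have hsq : Real.sqrt (1 - 1) = 0 := by norm_num
      rw [hsq, mul_zero, zero_smul, zero_sub, hVtV, pow_two, hMM, ← hDD]
      rw [hW', hXzero, Matrix.mul_zero, zero_sub]
  · -- c < 1
    obtain ⟨s, hs⟩ : ∃ s : ℝ, s = Real.sqrt (1 - c) := ⟨_, rfl⟩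
    have hs2 : s ^ 2 = 1 - c := by rw [hs]; exact Real.sq_sqrt (by linarith)
    have hspos : 0 < s := by rw [hs]; exact Real.sqrt_pos.2 (by linarith)
    obtain ⟨S, hSdef⟩ : ∃ S : Matrix (Fin n) (Fin n) ℝ,
        S = (2*s)⁻¹ • (D * X * M⁻¹) := ⟨_, rfl⟩
    have hST : Sᵀ = (2*s)⁻¹ • (M⁻¹ * Xᵀ * D) := by
      rw [hSdef, transpose_smul]
      congr 1
      rw [transpose_mul, transpose_mul, hNsym, hDsym, ← Matrix.mul_assoc]
    have hSS : Sᵀ * S = ((2*s)⁻¹ * (2*s)⁻¹) • (M⁻¹ * Xᵀ * D * D * X * M⁻¹) := by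
      rw [hST, hSdef]
      simp only [Matrix.smul_mul, Matrix.mul_smul, smul_smul, ← Matrix.mul_assoc]
    have hexp : M⁻¹ * ((2 * (1 - c)) • P - Xᵀ * R * X) * M⁻¹
        = ((2:ℝ)*s^2) • (1 : Matrix (Fin n) (Fin n) ℝ)
          - ((2:ℝ)⁻¹) • (M⁻¹ * Xᵀ * D * D * X * M⁻¹) := by
      rw [hRD]
      simp only [Matrix.mul_sub, Matrix.sub_mul, Matrix.mul_smul, Matrix.smul_mul,
        smul_smul, ← Matrix.mul_assoc]
      rw [hNPN, hs2]
    have keyeq : (1 : Matrix (Fin n) (Fin n) ℝ) - Sᵀ * S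
        = ((2:ℝ)*s^2)⁻¹ • (M⁻¹ * ((2 * (1 - c)) • P - Xᵀ * R * X) * M⁻¹) := by
      rw [hexp, hSS, smul_sub, smul_smul, smul_smul]
      have e1 : ((2:ℝ)*s^2)⁻¹ * (2*s^2) = 1 := by
        field_simp
      have e2 : ((2:ℝ)*s^2)⁻¹ * 2⁻¹ = (2*s)⁻¹ * (2*s)⁻¹ := by
        field_simp
      rw [e1, one_smul, e2]
    have hcong := hKey.mul_mul_conjTranspose_same M⁻¹
    rw [conjTranspose_eq_transpose_of_trivial, hNsym] at hcong
    have final : ((1 : Matrix (Fin n) (Fin n) ℝ) - Sᵀ * S).PosSemidef := by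
      rw [keyeq]
      exact psd_smul hcong (by positivity)
    refine ⟨S, V, d, final, hVdet, ?_⟩
    rw [← hs, hVtV, hSdef]
    simp only [Matrix.mul_smul, Matrix.smul_mul, smul_smul, ← Matrix.mul_assoc]
    have hone : (2*s) * (2*s)⁻¹ = 1 := mul_inv_cancel₀ (by positivity)
    rw [hone, one_smul, ← hDdef, Matrix.mul_assoc (D*D*X) M⁻¹ M, hNM, Matrix.mul_one,
      pow_two, hMM, ← hDD]
    exact hW'


lemma cert_of_param (c : ℝ) (hc0 : 0 ≤ c) (hc1 : c ≤ 1) (W S V : Matrix (Fin n) (Fin n) ℝ)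
    (d : Fin n → ℝ) (hS : ((1 : Matrix (Fin n) (Fin n) ℝ) - Sᵀ * S).PosSemidef)
    (hV : IsUnit V.det)
    (hW : W = (2 * Real.sqrt (1 - c)) •
        (diagonal (fun i => Real.exp (d i)) * S * (Vᵀ * V)) -
        diagonal (fun i => Real.exp (2 * d i)) * (Vᵀ * V) ^ 2)
    (hblock : ∀ P Q : Matrix (Fin n) (Fin n) ℝ, Pᵀ = P → Qᵀ = Q → Q.PosDef →
      ((2 * (1 - c)) • P -
        (P + Wᵀ * Q) * ((2:ℝ) • Q)⁻¹ * (P + Q * W)).PosSemidef →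
      (-(fromBlocks ((-(2 * (1 - c))) • P) (P + Wᵀ * Q) (P + Q * W)
        ((-2 : ℝ) • Q))).PosSemidef) :
    ∃ P Q : Matrix (Fin n) (Fin n) ℝ,
      P.IsSymm ∧ P.PosDef ∧ Q.IsDiag ∧ Q.PosDef ∧
      (-(fromBlocks ((-(2 * (1 - c))) • P) (P + Wᵀ * Q) (P + Q * W)
        ((-2 : ℝ) • Q))).PosSemidef := by
  obtain ⟨s, hs⟩ : ∃ s : ℝ, s = Real.sqrt (1 - c) := ⟨_, rfl⟩
  have hs2 : s ^ 2 = 1 - c := by rw [hs]; exact Real.sq_sqrt (by linarith)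
  obtain ⟨M, hMdef⟩ : ∃ M : Matrix (Fin n) (Fin n) ℝ, M = Vᵀ * V := ⟨_, rfl⟩
  have hM : M.PosDef := hMdef ▸ pd_transpose_mul_self hV
  have hMsym : Mᵀ = M := by rw [hMdef, transpose_mul, transpose_transpose]
  obtain ⟨D, hD⟩ : ∃ D : Matrix (Fin n) (Fin n) ℝ,
      D = diagonal (fun i => Real.exp (d i)) := ⟨_, rfl⟩
  obtain ⟨D2, hD2⟩ : ∃ D2 : Matrix (Fin n) (Fin n) ℝ,
      D2 = diagonal (fun i => Real.exp (2 * d i)) := ⟨_, rfl⟩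
  obtain ⟨E, hE⟩ : ∃ E : Matrix (Fin n) (Fin n) ℝ,
      E = diagonal (fun i => Real.exp (-(d i))) := ⟨_, rfl⟩
  obtain ⟨P, hPdef⟩ : ∃ P : Matrix (Fin n) (Fin n) ℝ, P = M * M := ⟨_, rfl⟩
  obtain ⟨Q, hQdef⟩ : ∃ Q : Matrix (Fin n) (Fin n) ℝ,
      Q = diagonal (fun i => Real.exp (-(2 * d i))) := ⟨_, rfl⟩
  rw [← hs, ← hMdef, ← hD, ← hD2] at hW
  have hEsym : Eᵀ = E := by rw [hE, diagonal_transpose]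
  have hPsym : Pᵀ = P := by rw [hPdef, transpose_mul, hMsym]
  have hQsym : Qᵀ = Q := by rw [hQdef, diagonal_transpose]
  have hQpd : Q.PosDef := hQdef ▸ posDef_diagonal_iff.2 fun i => Real.exp_pos _
  have hPpd : P.PosDef := by
    have := pd_transpose_mul_self (isUnit_iff_isUnit_det _ |>.1 hM.isUnit)
    rwa [hMsym, ← hPdef] at this
  refine ⟨P, Q, hPsym, hPpd, hQdef ▸ isDiag_diagonal _, hQpd, ?_⟩
  apply hblock P Q hPsym hQsym hQpd
  have hQD : Q * D = E := by
    rw [hQdef, hD, hE, diagonal_mul_diagonal]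
    have : (fun i => Real.exp (-(2 * d i)) * Real.exp (d i))
        = fun i => Real.exp (-(d i)) := by
      funext i; rw [← Real.exp_add]; congr 1; ring
    rw [this]
  have hQD2 : Q * D2 = 1 := by
    rw [hQdef, hD2, diagonal_mul_diagonal, ← diagonal_one]
    have : (fun i => Real.exp (-(2 * d i)) * Real.exp (2 * d i))
        = fun _ => (1:ℝ) := by
      funext i; rw [← Real.exp_add]; simp
    rw [this]
  have hX : P + Q * W = (2 * s) • (E * S * M) := by
    rw [hW, Matrix.mul_sub, Matrix.mul_smul,
      ← Matrix.mul_assoc Q (D * S) M, ← Matrix.mul_assoc Q D S, hQD,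
      ← Matrix.mul_assoc Q D2 (M ^ 2), hQD2, Matrix.one_mul, pow_two, ← hPdef]
    abel
  have hXT : P + Wᵀ * Q = (2 * s) • (M * Sᵀ * E) := by
    have h1 : P + Wᵀ * Q = (P + Q * W)ᵀ := by
      rw [transpose_add, hPsym, transpose_mul, hQsym]
    rw [h1, hX, transpose_smul]
    congr 1
    rw [transpose_mul, transpose_mul, hMsym, hEsym, Matrix.mul_assoc]
  obtain ⟨R, hRdef⟩ : ∃ R : Matrix (Fin n) (Fin n) ℝ,
      R = diagonal (fun i => 2⁻¹ * Real.exp (2 * d i)) := ⟨_, rfl⟩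
  have hR : ((2:ℝ) • Q)⁻¹ = R := by
    apply Matrix.inv_eq_right_inv
    rw [hQdef, hRdef, Matrix.smul_mul, diagonal_mul_diagonal, ← diagonal_smul, ← diagonal_one]
    have : ((2:ℝ) • fun i => Real.exp (-(2 * d i)) * (2⁻¹ * Real.exp (2 * d i)))
        = fun _ => (1:ℝ) := by
      funext i
      simp only [Pi.smul_apply, smul_eq_mul, Real.exp_neg]
      field_simp
    rw [this]
  have hERE : ∀ A : Matrix (Fin n) (Fin n) ℝ,
      A * E * R * E = (2⁻¹ : ℝ) • A := by
    intro A
    have h2 : E * R * E = (2⁻¹ : ℝ) • 1 := by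
      rw [hE, hRdef, diagonal_mul_diagonal, diagonal_mul_diagonal, ← diagonal_one,
        ← diagonal_smul]
      have : (fun i => Real.exp (-(d i)) * (2⁻¹ * Real.exp (2 * d i)) * Real.exp (-(d i)))
          = (2⁻¹ : ℝ) • fun _ => (1:ℝ) := by
        funext i
        simp only [Pi.smul_apply, smul_eq_mul, mul_one, Real.exp_neg, two_mul, Real.exp_add]
        field_simp
      rw [this]
    rw [Matrix.mul_assoc A E R, Matrix.mul_assoc A (E * R) E, h2]
    rw [Matrix.mul_smul, Matrix.mul_one]
  -- main computation
  have hgoal : (2 * (1 - c)) • P - (P + Wᵀ * Q) * ((2:ℝ) • Q)⁻¹ * (P + Q * W)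
      = (2 * (1 - c)) • (M * (1 - Sᵀ * S) * M) := by
    rw [hR, hXT, hX]
    simp only [Matrix.smul_mul, Matrix.mul_smul, smul_smul, ← Matrix.mul_assoc]
    rw [hERE (M * Sᵀ)]
    simp only [Matrix.smul_mul, smul_smul]
    rw [Matrix.mul_sub, Matrix.mul_one, Matrix.sub_mul, ← hPdef, smul_sub]
    have hsc : (2 * s * (2 * s) * 2⁻¹) = 2 * (1 - c) := by rw [← hs2]; ring
    rw [hsc, Matrix.mul_assoc M Sᵀ S]
  rw [hgoal]
  apply psd_smul _ (by linarith)
  have := hS.mul_mul_conjTranspose_same M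
  rwa [conjTranspose_eq_transpose_of_trivial, hMsym] at this


lemma block_iff (c : ℝ) (W P Q : Matrix (Fin n) (Fin n) ℝ)
    (hP : Pᵀ = P) (hQs : Qᵀ = Q) (hQ : Q.PosDef) :
    (-(fromBlocks ((-(2 * (1 - c))) • P) (P + Wᵀ * Q) (P + Q * W)
        ((-2 : ℝ) • Q))).PosSemidef ↔
    ((2 * (1 - c)) • P -
      (P + Wᵀ * Q) * ((2:ℝ) • Q)⁻¹ * (P + Q * W)).PosSemidef := by
  have h2Q : ((2:ℝ) • Q).PosDef := pd_smul hQ two_pos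
  haveI := h2Q.isUnit.invertible
  have hBH : (-(P + Wᵀ * Q))ᴴ = -(P + Q * W) := by
    simp [conjTranspose_eq_transpose_of_trivial, transpose_add, transpose_mul, hP, hQs]
  have heq : -(fromBlocks ((-(2 * (1 - c))) • P) (P + Wᵀ * Q) (P + Q * W)
      ((-2 : ℝ) • Q)) =
      fromBlocks ((2 * (1 - c)) • P) (-(P + Wᵀ * Q)) (-(P + Wᵀ * Q))ᴴ ((2:ℝ) • Q) := by
    rw [fromBlocks_neg, hBH, neg_smul, neg_neg, neg_smul, neg_neg]
  rw [heq, PosDef.fromBlocks₂₂ _ _ h2Q, hBH]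
  rw [Matrix.neg_mul, Matrix.mul_neg, Matrix.neg_mul, neg_neg]


end FrnnAux

/-- Exact unconstrained parameterization of the continuous-time firing-rate MONE
certificate: `W` admits certificate data `(P, Q)` with rate `c` iff
`W = 2√(1−c)·diag(e^d)·S·(VᵀV) − diag(e^{2d})·(VᵀV)²` for some contraction `S`,
invertible `V` and `d ∈ ℝⁿ`. -/
theorem frnn_mone_parameterization
    {n : ℕ} (c : ℝ) (hc0 : 0 ≤ c) (hc1 : c ≤ 1) (W : Matrix (Fin n) (Fin n) ℝ) :
    (∃ P Q : Matrix (Fin n) (Fin n) ℝ,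
      P.IsSymm ∧ P.PosDef ∧ Q.IsDiag ∧ Q.PosDef ∧
      (-(fromBlocks ((-(2 * (1 - c))) • P) (P + Wᵀ * Q) (P + Q * W)
        ((-2 : ℝ) • Q))).PosSemidef) ↔
    (∃ (S V : Matrix (Fin n) (Fin n) ℝ) (d : Fin n → ℝ),
      ((1 : Matrix (Fin n) (Fin n) ℝ) - Sᵀ * S).PosSemidef ∧
      IsUnit V.det ∧
      W = (2 * Real.sqrt (1 - c)) •
            (Matrix.diagonal (fun i => Real.exp (d i)) * S * (Vᵀ * V)) -
          Matrix.diagonal (fun i => Real.exp (2 * d i)) * (Vᵀ * V)^2) := by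
  constructor
  · rintro ⟨P, Q, hPs, hPpd, hQd, hQpd, hblk⟩
    have hKey := (FrnnAux.block_iff c W P Q hPs.eq hQd.isSymm.eq hQpd).1 hblk
    obtain ⟨S, V, d, h1, h2, h3⟩ :=
      FrnnAux.param_of_cert c hc0 hc1 W P Q hPs hPpd hQd hQpd hKey
    exact ⟨S, V, d, h1, h2, h3⟩
  · rintro ⟨S, V, d, hS, hV, hW⟩
    exact FrnnAux.cert_of_param c hc0 hc1 W S V d hS hV hW
      (fun P Q hP hQ hQpd h => (FrnnAux.block_iff c W P Q hP hQ hQpd).2 h)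
end

section
/- Local Lipschitz continuity of the equilibrium map of input-dependent firing-rate networks. Let (U, ‖·‖) be a normed real vector space, let Ψ : ℝⁿ → ℝⁿ be a diagonal MONE map, and let W : U → ℝ^{n×n} and B : U → ℝⁿ be globally Lipschitz with constants ℓ_W (with respect to the operator norm on ℝ^{n×n} induced by the Euclidean norm) and ℓ_B (with respect to the Euclidean norm), respectively. Suppose there exist a diagonal positive definite matrix Q ∈ ℝ^{n×n} and δ > 0 such that QW(u) + W(u)ᵀQ ⪯ 2Q − 2δIₙ for every u ∈ U, and let x* : U → ℝⁿ satisfy x*(u) = Ψ(W(u)x*(u) + B(u)) for all u ∈ U. Then for all u, u′ ∈ U, ‖x*(u) − x*(u′)‖ ≤ (‖Q‖/δ)(ℓ_W‖x*(u′)‖ + ℓ_B)‖u − u′‖, where ‖·‖ on ℝⁿ is the Euclidean norm and ‖Q‖ is the operator (spectral) norm of Q. In particular, x* is locally Lipschitz on U. -/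
open Matrix

/-- Local Lipschitz continuity of the equilibrium map of input-dependent
firing-rate networks. Operator norms of matrices (induced by the Euclidean norm)
are expressed via `Matrix.toEuclideanCLM`. -/
theorem equilibrium_map_locally_lipschitz
    {n : ℕ} {U : Type*} [NormedAddCommGroup U] [NormedSpace ℝ U]
    (Ψ : EuclideanSpace ℝ (Fin n) → EuclideanSpace ℝ (Fin n)) (ψ : Fin n → ℝ → ℝ)
    -- Ψ is diagonal with components ψ i
    (hdiag : ∀ (x : EuclideanSpace ℝ (Fin n)) (i : Fin n), Ψ x i = ψ i (x i))
    -- MONE: each component is slope-restricted in [0,1]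
    (hslope : ∀ (i : Fin n) (s t : ℝ),
      0 * (s - t)^2 ≤ (ψ i s - ψ i t) * (s - t) ∧ (ψ i s - ψ i t) * (s - t) ≤ 1 * (s - t)^2)
    (W : U → Matrix (Fin n) (Fin n) ℝ) (B : U → EuclideanSpace ℝ (Fin n))
    (ℓW ℓB : ℝ)
    -- W is ℓW-Lipschitz in the operator norm induced by the Euclidean norm
    (hW : ∀ u u' : U,
      ‖Matrix.toEuclideanCLM (𝕜 := ℝ) (W u) - Matrix.toEuclideanCLM (𝕜 := ℝ) (W u')‖ ≤
        ℓW * ‖u - u'‖)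
    -- B is ℓB-Lipschitz in the Euclidean norm
    (hB : ∀ u u' : U, ‖B u - B u'‖ ≤ ℓB * ‖u - u'‖)
    (Q : Matrix (Fin n) (Fin n) ℝ) (hQd : Q.IsDiag) (hQ : Q.PosDef)
    (δ : ℝ) (hδ : 0 < δ)
    -- QW(u) + W(u)ᵀQ ⪯ 2Q − 2δIₙ uniformly in u
    (hLDS : ∀ u : U, ((2 : ℝ) • Q - (2 * δ) • (1 : Matrix (Fin n) (Fin n) ℝ) -
      (Q * W u + (W u)ᵀ * Q)).PosSemidef)
    -- x* is the equilibrium map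
    (xs : U → EuclideanSpace ℝ (Fin n))
    (hxs : ∀ u : U, xs u = Ψ (Matrix.toEuclideanCLM (𝕜 := ℝ) (W u) (xs u) + B u)) :
    (∀ u u' : U,
      ‖xs u - xs u'‖ ≤
        (‖Matrix.toEuclideanCLM (𝕜 := ℝ) Q‖ / δ) * (ℓW * ‖xs u'‖ + ℓB) * ‖u - u'‖) ∧
    LocallyLipschitz xs := by
  classical
  -- apply lemma for toEuclideanCLM
  have hMd : ∀ (A : Matrix (Fin n) (Fin n) ℝ) (x : EuclideanSpace ℝ (Fin n)),
      (Matrix.toEuclideanCLM (𝕜 := ℝ) A x) = (A *ᵥ fun j => x j) :=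
    fun A x => ofLp_toEuclideanCLM A x
  have hQmul : ∀ (v : Fin n → ℝ) (i : Fin n), (Q *ᵥ v) i = Q i i * v i := by
    intro v i
    simp only [mulVec, dotProduct]
    rw [Finset.sum_eq_single i]
    · intro b _ hb; rw [hQd (Ne.symm hb), zero_mul]
    · simp
  have main : ∀ u u' : U, ‖xs u - xs u'‖ ≤
      (‖Matrix.toEuclideanCLM (𝕜 := ℝ) Q‖ / δ) * (ℓW * ‖xs u'‖ + ℓB) * ‖u - u'‖ := by
    intro u u'
    set M := Matrix.toEuclideanCLM (𝕜 := ℝ) (W u) with hM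
    set M' := Matrix.toEuclideanCLM (𝕜 := ℝ) (W u') with hM'
    set QC := Matrix.toEuclideanCLM (𝕜 := ℝ) Q with hQC
    set d : EuclideanSpace ℝ (Fin n) := xs u - xs u' with hdDef
    set c : EuclideanSpace ℝ (Fin n) := (M - M') (xs u') + (B u - B u') with hcDef
    set y : EuclideanSpace ℝ (Fin n) := M (xs u) + B u with hyDef
    set y' : EuclideanSpace ℝ (Fin n) := M' (xs u') + B u' with hy'Def
    set w : Fin n → ℝ := W u *ᵥ fun j => d j with hwDef
    have hyd : y - y' = M d + c := by
      rw [hyDef, hy'Def, hcDef, hdDef, map_sub, ContinuousLinearMap.sub_apply]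
      abel
    have hxu : xs u = Ψ y := by rw [hyDef, hM]; exact hxs u
    have hxu' : xs u' = Ψ y' := by rw [hy'Def, hM']; exact hxs u'
    -- componentwise slope inequality
    have hcomp : ∀ i, d i * d i ≤ d i * (y i - y' i) := by
      intro i
      have hdi : d i = ψ i (y i) - ψ i (y' i) := by
        have h3 : d i = xs u i - xs u' i := by rw [hdDef]; simp
        rw [h3, hxu, hxu', hdiag y i, hdiag y' i]
      rcases eq_or_ne (y i) (y' i) with h | h
      · rw [hdi, h]; simp
      · obtain ⟨hs0, hs1⟩ := hslope i (y i) (y' i)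
        rw [hdi]
        nlinarith [hs0, hs1, mul_self_pos.mpr (sub_ne_zero.mpr h),
          sq_nonneg ((ψ i (y i) - ψ i (y' i)) - (y i - y' i))]
    -- components of y - y'
    have hyc : ∀ i : Fin n, y i - y' i = w i + c i := by
      intro i
      have h1 : (y - y') i = (M d + c) i := by rw [hyd]
      have h2 : (y - y') i = y i - y' i := by simp
      have h3 : (M d + c) i = (M d) i + c i := by simp
      have h4 : (M d) i = w i := by rw [hM, hMd (W u) d, hwDef]
      rw [h2, h3, h4] at h1
      exact h1
    -- summed slope inequality weighted by Q
    have S1 : ∑ i, Q i i * (d i * d i) ≤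
        ∑ i, Q i i * (d i * w i) + ∑ i, Q i i * (d i * c i) := by
      rw [← Finset.sum_add_distrib]
      apply Finset.sum_le_sum
      intro i _
      have hq : 0 < Q i i := by
        simpa using hQ.dotProduct_mulVec_pos (x := Pi.single i 1) (fun h => by simpa using congrFun h i)
      have := mul_le_mul_of_nonneg_left (hcomp i) hq.le
      calc Q i i * (d i * d i) ≤ Q i i * (d i * (y i - y' i)) := this
        _ = Q i i * (d i * w i) + Q i i * (d i * c i) := by rw [hyc i]; ring
    -- the LDS inequality
    have expand : ∀ z : Fin n → ℝ, (fun j => d j) ⬝ᵥ (Q *ᵥ z) = ∑ i, Q i i * (d i * z i) := by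
      intro z
      simp only [dotProduct, hQmul]
      exact Finset.sum_congr rfl fun i _ => by ring
    have e1 : (fun j => d j) ⬝ᵥ ((Q * W u) *ᵥ fun j => d j) = ∑ i, Q i i * (d i * w i) := by
      rw [← mulVec_mulVec]; exact expand w
    have e2 : (fun j => d j) ⬝ᵥ (((W u)ᵀ * Q) *ᵥ fun j => d j) = ∑ i, Q i i * (d i * w i) := by
      rw [← mulVec_mulVec, Matrix.dotProduct_mulVec, Matrix.vecMul_transpose]
      simp only [dotProduct, hQmul, hwDef]
      exact Finset.sum_congr rfl fun i _ => by ring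
    have e3 : (fun j => d j) ⬝ᵥ (Q *ᵥ fun j => d j) = ∑ i, Q i i * (d i * d i) := expand _
    have e4 : (fun j => d j) ⬝ᵥ ((1 : Matrix (Fin n) (Fin n) ℝ) *ᵥ fun j => d j)
        = ∑ i, d i * d i := by
      simp [one_mulVec, dotProduct]
    have S2 : ∑ i, Q i i * (d i * w i) ≤ ∑ i, Q i i * (d i * d i) - δ * ∑ i, d i * d i := by
      have hA := (hLDS u).dotProduct_mulVec_nonneg (x := fun j => d j)
      simp only [star_trivial, sub_mulVec, add_mulVec, smul_mulVec,
        dotProduct_sub, dotProduct_add, dotProduct_smul, smul_eq_mul,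
        e1, e2, e3, e4] at hA
      linarith
    -- key quadratic bound
    have hip : (inner ℝ (QC d) c : ℝ) = ∑ i, Q i i * (d i * c i) := by
      have h1 : (inner ℝ (QC d) c : ℝ) = ∑ i, (QC d) i * c i := by simp [PiLp.inner_apply, mul_comm]
      rw [h1]
      apply Finset.sum_congr rfl
      intro i _
      have h4 : (QC d) i = Q i i * d i := by
        rw [hQC, hMd Q d]; exact hQmul _ i
      rw [h4]; ring
    have hd2 : ∑ i, d i * d i = ‖d‖ ^ 2 := by
      rw [← real_inner_self_eq_norm_sq]
      simp only [PiLp.inner_apply, RCLike.inner_apply, conj_trivial]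
    have hnc : ‖c‖ ≤ ℓW * ‖u - u'‖ * ‖xs u'‖ + ℓB * ‖u - u'‖ := by
      calc ‖c‖ ≤ ‖(M - M') (xs u')‖ + ‖B u - B u'‖ := norm_add_le _ _
        _ ≤ ‖M - M'‖ * ‖xs u'‖ + ℓB * ‖u - u'‖ :=
            add_le_add ((M - M').le_opNorm _) (hB u u')
        _ ≤ ℓW * ‖u - u'‖ * ‖xs u'‖ + ℓB * ‖u - u'‖ := by
            have hMM : ‖M - M'‖ ≤ ℓW * ‖u - u'‖ := by rw [hM, hM']; exact hW u u'
            have := mul_le_mul_of_nonneg_right hMM (norm_nonneg (xs u'))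
            linarith
    have hKnn : 0 ≤ ℓW * ‖u - u'‖ * ‖xs u'‖ + ℓB * ‖u - u'‖ :=
      le_trans (norm_nonneg c) hnc
    have key : δ * ‖d‖ ^ 2 ≤ ‖QC‖ * ‖d‖ * (ℓW * ‖u - u'‖ * ‖xs u'‖ + ℓB * ‖u - u'‖) := by
      have h1 : δ * (∑ i, d i * d i) ≤ ∑ i, Q i i * (d i * c i) := by linarith
      have h2 : (inner ℝ (QC d) c : ℝ) ≤ ‖QC d‖ * ‖c‖ := real_inner_le_norm _ _
      have h3 : ‖QC d‖ * ‖c‖ ≤ (‖QC‖ * ‖d‖) * (ℓW * ‖u - u'‖ * ‖xs u'‖ + ℓB * ‖u - u'‖) :=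
        mul_le_mul (QC.le_opNorm d) hnc (norm_nonneg c)
          (mul_nonneg (norm_nonneg _) (norm_nonneg _))
      rw [← hd2]
      linarith [hip ▸ h2]
    rcases eq_or_lt_of_le (norm_nonneg d) with h0 | h0
    · rw [← h0]
      have heq : ‖QC‖ / δ * (ℓW * ‖xs u'‖ + ℓB) * ‖u - u'‖ =
          (‖QC‖ * (ℓW * ‖u - u'‖ * ‖xs u'‖ + ℓB * ‖u - u'‖)) / δ := by ring
      rw [heq]
      exact div_nonneg (mul_nonneg (norm_nonneg _) hKnn) hδ.le
    · have heq : ‖QC‖ / δ * (ℓW * ‖xs u'‖ + ℓB) * ‖u - u'‖ =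
          (‖QC‖ * (ℓW * ‖u - u'‖ * ‖xs u'‖ + ℓB * ‖u - u'‖)) / δ := by ring
      rw [heq, le_div_iff₀ hδ]
      have hring : ‖d‖ * (δ * ‖d‖) ≤
          ‖d‖ * (‖QC‖ * (ℓW * ‖u - u'‖ * ‖xs u'‖ + ℓB * ‖u - u'‖)) := by
        calc ‖d‖ * (δ * ‖d‖) = δ * ‖d‖ ^ 2 := by ring
          _ ≤ ‖QC‖ * ‖d‖ * (ℓW * ‖u - u'‖ * ‖xs u'‖ + ℓB * ‖u - u'‖) := key
          _ = ‖d‖ * (‖QC‖ * (ℓW * ‖u - u'‖ * ‖xs u'‖ + ℓB * ‖u - u'‖)) := by ring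
      have h2 := le_of_mul_le_mul_left hring h0
      linarith
  refine ⟨main, ?_⟩
  intro u₀
  by_cases htriv : ∀ v : U, v = 0
  · refine ⟨0, Set.univ, Filter.univ_mem, fun a _ b _ => ?_⟩
    rw [htriv a, htriv b]
    simp
  · push_neg at htriv
    obtain ⟨v, hv⟩ := htriv
    have hvpos : 0 < ‖v‖ := norm_pos_iff.mpr hv
    have hℓW : 0 ≤ ℓW := by
      have h := hW v 0
      rw [sub_zero] at h
      nlinarith [norm_nonneg (Matrix.toEuclideanCLM (𝕜 := ℝ) (W v) -
        Matrix.toEuclideanCLM (𝕜 := ℝ) (W 0))]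
    have hℓB : 0 ≤ ℓB := by
      have h := hB v 0
      rw [sub_zero] at h
      nlinarith [norm_nonneg (B v - B 0)]
    have hCnn : 0 ≤ ‖Matrix.toEuclideanCLM (𝕜 := ℝ) Q‖ / δ :=
      div_nonneg (norm_nonneg _) hδ.le
    have hq0 : 0 ≤ ℓW * ‖xs u₀‖ + ℓB := add_nonneg (mul_nonneg hℓW (norm_nonneg _)) hℓB
    set R : ℝ := ‖xs u₀‖ + ‖Matrix.toEuclideanCLM (𝕜 := ℝ) Q‖ / δ * (ℓW * ‖xs u₀‖ + ℓB)
      with hRdef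
    have hR0 : 0 ≤ R := by
      rw [hRdef]
      have := mul_nonneg hCnn hq0
      positivity
    set K : ℝ := ‖Matrix.toEuclideanCLM (𝕜 := ℝ) Q‖ / δ * (ℓW * R + ℓB) with hKdef
    have hKnn : 0 ≤ K := mul_nonneg hCnn (add_nonneg (mul_nonneg hℓW hR0) hℓB)
    refine ⟨K.toNNReal, Metric.ball u₀ 1, Metric.ball_mem_nhds u₀ one_pos, ?_⟩
    apply LipschitzOnWith.of_dist_le_mul
    intro a ha b hb
    have hbd : ‖b - u₀‖ ≤ 1 := by
      have := Metric.mem_ball.mp hb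
      rw [dist_eq_norm] at this
      linarith
    have hxb : ‖xs b‖ ≤ R := by
      have h1 := main b u₀
      have h2 : ‖xs b‖ - ‖xs u₀‖ ≤ ‖xs b - xs u₀‖ := norm_sub_norm_le _ _
      have h3 : ‖Matrix.toEuclideanCLM (𝕜 := ℝ) Q‖ / δ * (ℓW * ‖xs u₀‖ + ℓB) * ‖b - u₀‖ ≤
          ‖Matrix.toEuclideanCLM (𝕜 := ℝ) Q‖ / δ * (ℓW * ‖xs u₀‖ + ℓB) :=
        mul_le_of_le_one_right (mul_nonneg hCnn hq0) hbd
      rw [hRdef]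
      linarith
    rw [dist_eq_norm, dist_eq_norm, Real.coe_toNNReal K hKnn]
    calc ‖xs a - xs b‖ ≤
        ‖Matrix.toEuclideanCLM (𝕜 := ℝ) Q‖ / δ * (ℓW * ‖xs b‖ + ℓB) * ‖a - b‖ := main a b
      _ ≤ K * ‖a - b‖ := by
          apply mul_le_mul_of_nonneg_right _ (norm_nonneg _)
          rw [hKdef]
          exact mul_le_mul_of_nonneg_left
            (add_le_add_left (mul_le_mul_of_nonneg_left hxb hℓW) ℓB) hCnn
end
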